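/- arXiv:1411.2044 — 7 statements merged into one kernel-verified Lean document; each statement's English description precedes it below -/
import Mathlib

section
/- Fix k ≥ 2. Define F(q) = ∏_{m≥1, m≢2 (mod 4)} (1 − q^m), and for j ≥ 0, 1 ≤ i ≤ k, define G̃_{j,i}(q) = (1/F(q)) ∑_{n≥0} [(-1)^n q^{4k·C(n,2)+(2k(j+1)+2i-1)n} (1−q^{2(n+1)})⋯(1−q^{2(n+j)}) / ((1+q^{2n+1})(1+q^{2n+3})⋯(1+q^{2(n+j)+1}))] · (1 − q^{2(k-i+1)(2n+j+1)} + q^{2(n+j)+1}(1 − q^{2(k-i)(2n+j+1)})). Then for all j ≥ 0, G̃_{j,k}(q) = G̃_{j+1,1}(q). -/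
open PowerSeries Finset

/-- Truncation-based formal infinite product `∏_{m, P m} (1 - q^m)` in `ℚ⟦q⟧`
(valid when `P m → 1 ≤ m`). -/
noncomputable def sProd (P : ℕ → Prop) [DecidablePred P] : PowerSeries ℚ :=
  PowerSeries.mk fun d =>
    PowerSeries.coeff d (∏ m ∈ (Finset.range (d + 1)).filter P, (1 - PowerSeries.X ^ m))

/-- Truncation-based formal infinite sum `∑_{n ≥ 0} f n` in `ℚ⟦q⟧`
(valid when the order of `f n` is at least `n`). -/
noncomputable def sSum (f : ℕ → PowerSeries ℚ) : PowerSeries ℚ :=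
  PowerSeries.mk fun d =>
    PowerSeries.coeff d (∑ n ∈ Finset.range (d + 1), f n)

/-- `F(q) = ∏_{m ≥ 1, m ≢ 2 (mod 4)} (1 - q^m)`. -/
noncomputable def Fq : PowerSeries ℚ := sProd (fun m => 1 ≤ m ∧ m % 4 ≠ 2)

/-- The closed-form series `G̃_{j,i}(q)` of the Göllnitz–Gordon–Andrews setting:
`(1/F(q)) ∑_{n ≥ 0} (-1)^n q^{4k·C(n,2)+(2k(j+1)+2i-1)n}
  (1-q^{2(n+1)})⋯(1-q^{2(n+j)}) / ((1+q^{2n+1})⋯(1+q^{2(n+j)+1}))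
  · (1 - q^{2(k-i+1)(2n+j+1)} + q^{2(n+j)+1}(1 - q^{2(k-i)(2n+j+1)}))`. -/
noncomputable def Gcf (k j i : ℕ) : PowerSeries ℚ :=
  Fq⁻¹ * sSum (fun n =>
    (-1 : PowerSeries ℚ) ^ n *
    PowerSeries.X ^ (4 * k * n.choose 2 + (2 * k * (j + 1) + 2 * i - 1) * n) *
    (∏ t ∈ Finset.Icc 1 j, (1 - PowerSeries.X ^ (2 * (n + t)))) *
    (∏ t ∈ Finset.range (j + 1), (1 + PowerSeries.X ^ (2 * (n + t) + 1)))⁻¹ *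
    (1 - PowerSeries.X ^ (2 * (k - i + 1) * (2 * n + j + 1)) +
      PowerSeries.X ^ (2 * (n + j) + 1) *
        (1 - PowerSeries.X ^ (2 * (k - i) * (2 * n + j + 1)))))

namespace EdgeMatchAux

open PowerSeries Finset

/-- Constant coefficient of a product of `1 + X^(2(m+t)+1)` is 1. -/
private lemma cc_one (m r : ℕ) :
    constantCoeff (∏ t ∈ Finset.range r, (1 + (X : PowerSeries ℚ) ^ (2 * (m + t) + 1))) = 1 := by
  rw [map_prod]
  refine Finset.prod_eq_one fun t _ => ?_
  rw [map_add, map_one, map_pow, constantCoeff_X, zero_pow (by omega), add_zero]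

/-- Shift lemma for the `A`-product. -/
private lemma shiftA (n j : ℕ) :
    (∏ t ∈ Finset.Icc 1 j, (1 - (X : PowerSeries ℚ) ^ (2 * (n + 1 + t)))) *
        (1 - X ^ (2 * (n + 1)))
      = (∏ t ∈ Finset.Icc 1 j, (1 - X ^ (2 * (n + t)))) * (1 - X ^ (2 * (n + (j + 1)))) := by
  induction j with
  | zero => simp
  | succ j ih =>
      rw [Finset.prod_Icc_succ_top (Nat.le_add_left 1 j),
        Finset.prod_Icc_succ_top (Nat.le_add_left 1 j),
        show n + 1 + (j + 1) = n + (j + 1 + 1) by omega]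
      linear_combination (1 - (X : PowerSeries ℚ) ^ (2 * (n + (j + 1 + 1)))) * ih

/-- Telescoping principle for the truncation-based sums. -/
private lemma sSum_tele (f g D : ℕ → PowerSeries ℚ) (h0 : D 0 = 0)
    (hord : ∀ d : ℕ, (PowerSeries.coeff d) (D (d + 1)) = 0)
    (h : ∀ n, f n - g n = D n - D (n + 1)) : sSum f = sSum g := by
  ext d
  simp only [sSum, coeff_mk]
  have h1 : ∑ n ∈ Finset.range (d + 1), f n
      = ∑ n ∈ Finset.range (d + 1), g n + (D 0 - D (d + 1)) := by
    rw [← Finset.sum_range_sub' D (d + 1), ← Finset.sum_add_distrib]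
    exact Finset.sum_congr rfl fun n _ => by linear_combination h n
  rw [h1, map_add, h0, map_sub, hord d, map_zero]
  ring

end EdgeMatchAux

/-- Edge-matching: `G̃_{j,k}(q) = G̃_{j+1,1}(q)` for all `j ≥ 0`. -/
theorem edge_matching (k : ℕ) (hk : 2 ≤ k) (j : ℕ) :
    Gcf k j k = Gcf k (j + 1) 1 := by
  obtain ⟨k', rfl⟩ : ∃ k', k = k' + 2 := ⟨k - 2, by omega⟩
  unfold Gcf
  congr 1
  refine EdgeMatchAux.sSum_tele _ _
    (fun m => (-1 : PowerSeries ℚ) ^ m *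
      PowerSeries.X ^ (4 * (k' + 2) * m.choose 2 + (2 * (k' + 2) * (j + 1) + 2 * (k' + 2) - 1) * m) *
      (∏ t ∈ Finset.Icc 1 j, (1 - PowerSeries.X ^ (2 * (m + t)))) *
      (∏ t ∈ Finset.range (j + 1), (1 + PowerSeries.X ^ (2 * (m + t) + 1)))⁻¹ *
      (1 - PowerSeries.X ^ (2 * m))) ?_ ?_ ?_
  · simp
  · intro d
    have hle : d + 1 ≤ 4 * (k' + 2) * (d + 1).choose 2 +
        (2 * (k' + 2) * (j + 1) + 2 * (k' + 2) - 1) * (d + 1) := by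
      have h1 : 1 ≤ 2 * (k' + 2) * (j + 1) + 2 * (k' + 2) - 1 := by
        calc 1 ≤ 2 * (k' + 2) - 1 := by omega
        _ ≤ 2 * (k' + 2) * (j + 1) + 2 * (k' + 2) - 1 :=
          Nat.sub_le_sub_right (Nat.le_add_left _ _) 1
      calc d + 1 = 1 * (d + 1) := (one_mul _).symm
      _ ≤ (2 * (k' + 2) * (j + 1) + 2 * (k' + 2) - 1) * (d + 1) :=
        Nat.mul_le_mul_right _ h1
      _ ≤ _ := Nat.le_add_left _ _
    have hdvd : (X : PowerSeries ℚ) ^ (d + 1) ∣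
        ((-1 : PowerSeries ℚ) ^ (d + 1) *
          PowerSeries.X ^ (4 * (k' + 2) * (d + 1).choose 2 +
            (2 * (k' + 2) * (j + 1) + 2 * (k' + 2) - 1) * (d + 1)) *
          (∏ t ∈ Finset.Icc 1 j, (1 - PowerSeries.X ^ (2 * (d + 1 + t)))) *
          (∏ t ∈ Finset.range (j + 1), (1 + PowerSeries.X ^ (2 * (d + 1 + t) + 1)))⁻¹ *
          (1 - PowerSeries.X ^ (2 * (d + 1)))) := by
      refine Dvd.dvd.mul_right (Dvd.dvd.mul_right (Dvd.dvd.mul_right ?_ _) _) _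
      exact Dvd.dvd.mul_left (pow_dvd_pow _ hle) _
    exact PowerSeries.X_pow_dvd_iff.mp hdvd d (lt_add_one d)
  · intro n
    have e1 : 2 * (k' + 2) * (j + 1) + 2 * (k' + 2) - 1
        = 2 * (k' + 2) * (j + 1) + (2 * k' + 3) := by
      rw [Nat.add_sub_assoc (show 1 ≤ 2 * (k' + 2) by omega)]
      congr 1
    have e2 : 2 * (k' + 2) * (j + 1 + 1) + 2 * 1 - 1
        = 2 * (k' + 2) * (j + 1 + 1) + 1 := by
      rw [Nat.add_sub_assoc (show 1 ≤ 2 * 1 by omega)]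
    have e3 : k' + 2 - (k' + 2) = 0 := Nat.sub_self _
    have e4 : k' + 2 - 1 = k' + 1 := by omega
    have e5 : (n + 1).choose 2 = n.choose 2 + n := by
      rw [Nat.choose_succ_succ, Nat.choose_one_right, Nat.add_comm]
    simp only [e1, e2, e3, e4, e5]
    have hP : (∏ t ∈ Finset.range (j + 1), (1 + (X : PowerSeries ℚ) ^ (2 * (n + t) + 1))) * (∏ t ∈ Finset.range (j + 1), (1 + (X : PowerSeries ℚ) ^ (2 * (n + t) + 1)))⁻¹ = 1 :=
      PowerSeries.mul_inv_cancel _ (by rw [EdgeMatchAux.cc_one]; exact one_ne_zero)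
    have hQ : (∏ t ∈ Finset.range (j + 1), (1 + (X : PowerSeries ℚ) ^ (2 * (n + 1 + t) + 1))) * (∏ t ∈ Finset.range (j + 1), (1 + (X : PowerSeries ℚ) ^ (2 * (n + 1 + t) + 1)))⁻¹ = 1 :=
      PowerSeries.mul_inv_cancel _ (by rw [EdgeMatchAux.cc_one]; exact one_ne_zero)
    have hBB : (∏ t ∈ Finset.range (j + 1 + 1), (1 + (X : PowerSeries ℚ) ^ (2 * (n + t) + 1))) * (∏ t ∈ Finset.range (j + 1 + 1), (1 + (X : PowerSeries ℚ) ^ (2 * (n + t) + 1)))⁻¹ = 1 :=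
      PowerSeries.mul_inv_cancel _ (by rw [EdgeMatchAux.cc_one]; exact one_ne_zero)
    have hBne : (∏ t ∈ Finset.range (j + 1 + 1), (1 + (X : PowerSeries ℚ) ^ (2 * (n + t) + 1))) ≠ 0 := by
      intro h
      have := EdgeMatchAux.cc_one n (j + 1 + 1)
      rw [h, map_zero] at this
      exact zero_ne_one this
    have hB1 : (∏ t ∈ Finset.range (j + 1 + 1), (1 + (X : PowerSeries ℚ) ^ (2 * (n + t) + 1))) = (∏ t ∈ Finset.range (j + 1), (1 + (X : PowerSeries ℚ) ^ (2 * (n + t) + 1))) * (1 + (X : PowerSeries ℚ) ^ (2 * (n + (j + 1)) + 1)) := Finset.prod_range_succ _ _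
    have hB2 : (∏ t ∈ Finset.range (j + 1 + 1), (1 + (X : PowerSeries ℚ) ^ (2 * (n + t) + 1))) = (∏ t ∈ Finset.range (j + 1), (1 + (X : PowerSeries ℚ) ^ (2 * (n + 1 + t) + 1))) * (1 + (X : PowerSeries ℚ) ^ (2 * (n + 0) + 1)) := by
      rw [Finset.prod_range_succ']
      congr 1
      exact Finset.prod_congr rfl fun t _ => by
        rw [show 2 * (n + (t + 1)) + 1 = 2 * (n + 1 + t) + 1 by omega]
    have hAg : (∏ t ∈ Finset.Icc 1 (j + 1), (1 - (X : PowerSeries ℚ) ^ (2 * (n + t)))) = (∏ t ∈ Finset.Icc 1 j, (1 - (X : PowerSeries ℚ) ^ (2 * (n + t)))) * (1 - (X : PowerSeries ℚ) ^ (2 * (n + (j + 1)))) :=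
      Finset.prod_Icc_succ_top (Nat.le_add_left 1 j) _
    have hA := EdgeMatchAux.shiftA n j
    apply mul_left_cancel₀ hBne
    linear_combination
      ((-1 : PowerSeries ℚ) ^ n * (X : PowerSeries ℚ) ^ (4 * (k' + 2) * n.choose 2 + (2 * (k' + 2) * (j + 1) + (2 * k' + 3)) * n) * (∏ t ∈ Finset.Icc 1 j, (1 - (X : PowerSeries ℚ) ^ (2 * (n + t)))) * (∏ t ∈ Finset.range (j + 1), (1 + (X : PowerSeries ℚ) ^ (2 * (n + t) + 1)))⁻¹ * ((1 - (X : PowerSeries ℚ) ^ (2 * (0 + 1) * (2 * n + j + 1)) + (X : PowerSeries ℚ) ^ (2 * (n + j) + 1) * (1 - (X : PowerSeries ℚ) ^ (2 * 0 * (2 * n + j + 1)))) - (1 - (X : PowerSeries ℚ) ^ (2 * n)))) * hB1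
      + ((-1 : PowerSeries ℚ) ^ (n + 1) * (X : PowerSeries ℚ) ^ (4 * (k' + 2) * (n.choose 2 + n) + (2 * (k' + 2) * (j + 1) + (2 * k' + 3)) * (n + 1)) * (∏ t ∈ Finset.Icc 1 j, (1 - (X : PowerSeries ℚ) ^ (2 * (n + 1 + t)))) * (∏ t ∈ Finset.range (j + 1), (1 + (X : PowerSeries ℚ) ^ (2 * (n + 1 + t) + 1)))⁻¹ * (1 - (X : PowerSeries ℚ) ^ (2 * (n + 1)))) * hB2
      + ((-1 : PowerSeries ℚ) ^ n * (X : PowerSeries ℚ) ^ (4 * (k' + 2) * n.choose 2 + (2 * (k' + 2) * (j + 1) + (2 * k' + 3)) * n) * (∏ t ∈ Finset.Icc 1 j, (1 - (X : PowerSeries ℚ) ^ (2 * (n + t)))) * ((1 - (X : PowerSeries ℚ) ^ (2 * (0 + 1) * (2 * n + j + 1)) + (X : PowerSeries ℚ) ^ (2 * (n + j) + 1) * (1 - (X : PowerSeries ℚ) ^ (2 * 0 * (2 * n + j + 1)))) - (1 - (X : PowerSeries ℚ) ^ (2 * n))) * (1 + (X : PowerSeries ℚ) ^ (2 * (n + (j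 + 1)) + 1))) * hP
      - ((-1 : PowerSeries ℚ) ^ n * (X : PowerSeries ℚ) ^ (4 * (k' + 2) * n.choose 2 + (2 * (k' + 2) * (j + 1 + 1) + 1) * n) * (∏ t ∈ Finset.Icc 1 (j + 1), (1 - (X : PowerSeries ℚ) ^ (2 * (n + t)))) * (1 - (X : PowerSeries ℚ) ^ (2 * (k' + 1 + 1) * (2 * n + (j + 1) + 1)) + (X : PowerSeries ℚ) ^ (2 * (n + (j + 1)) + 1) * (1 - (X : PowerSeries ℚ) ^ (2 * (k' + 1) * (2 * n + (j + 1) + 1))))) * hBB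
      + ((-1 : PowerSeries ℚ) ^ (n + 1) * (X : PowerSeries ℚ) ^ (4 * (k' + 2) * (n.choose 2 + n) + (2 * (k' + 2) * (j + 1) + (2 * k' + 3)) * (n + 1)) * (∏ t ∈ Finset.Icc 1 j, (1 - (X : PowerSeries ℚ) ^ (2 * (n + 1 + t)))) * (1 - (X : PowerSeries ℚ) ^ (2 * (n + 1))) * (1 + (X : PowerSeries ℚ) ^ (2 * (n + 0) + 1))) * hQ
      + ((-1 : PowerSeries ℚ) ^ (n + 1) * (X : PowerSeries ℚ) ^ (4 * (k' + 2) * (n.choose 2 + n) + (2 * (k' + 2) * (j + 1) + (2 * k' + 3)) * (n + 1)) * (1 + (X : PowerSeries ℚ) ^ (2 * (n + 0) + 1))) * hA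
      - ((-1 : PowerSeries ℚ) ^ n * (X : PowerSeries ℚ) ^ (4 * (k' + 2) * n.choose 2 + (2 * (k' + 2) * (j + 1 + 1) + 1) * n) * (1 - (X : PowerSeries ℚ) ^ (2 * (k' + 1 + 1) * (2 * n + (j + 1) + 1)) + (X : PowerSeries ℚ) ^ (2 * (n + (j + 1)) + 1) * (1 - (X : PowerSeries ℚ) ^ (2 * (k' + 1) * (2 * n + (j + 1) + 1))))) * hAg
end

section
/- With G_{(k-1)j+i}(q) defined by the closed-form alternating sum over F(q) as in the Göllnitz–Gordon–Andrews setting, for every j ≥ 0 and 1 ≤ i ≤ k there exists γ(q) ∈ ℤ[[q]] such that G_{(k-1)j+i}(q) = 1 + q^{2j+1} γ(q). -/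
open PowerSeries Finset

/-- The subring of `ℚ⟦X⟧` of series with integer coefficients. -/
noncomputable def Sint : Subring (PowerSeries ℚ) where
  carrier := {f | ∀ d, PowerSeries.coeff d f ∈ (⊥ : Subring ℚ)}
  zero_mem' := by intro d; rw [map_zero]; exact zero_mem _
  one_mem' := by
    intro d; rw [PowerSeries.coeff_one]; split
    · exact one_mem _
    · exact zero_mem _
  add_mem' := by
    intro a b ha hb d; rw [map_add]; exact add_mem (ha d) (hb d)
  neg_mem' := by intro a ha d; rw [map_neg]; exact neg_mem (ha d)
  mul_mem' := by
    intro a b ha hb d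
    rw [PowerSeries.coeff_mul]
    exact sum_mem fun p _ => mul_mem (ha p.1) (hb p.2)

lemma mem_Sint {f : PowerSeries ℚ} :
    f ∈ Sint ↔ ∀ d, PowerSeries.coeff d f ∈ (⊥ : Subring ℚ) := Iff.rfl

lemma X_mem_Sint : (X : PowerSeries ℚ) ∈ Sint := by
  rw [mem_Sint]; intro d; rw [PowerSeries.coeff_X]; split
  · exact one_mem _
  · exact zero_mem _

lemma inv_mem_Sint {f : PowerSeries ℚ} (hf : f ∈ Sint)
    (h1 : constantCoeff f = 1) : f⁻¹ ∈ Sint := by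
  rw [mem_Sint]
  intro d
  induction d using Nat.strong_induction_on with
  | _ d ih =>
    rw [PowerSeries.coeff_inv, h1, inv_one]
    split
    · exact one_mem _
    · refine mul_mem (neg_mem (one_mem _)) (sum_mem fun p hp => ?_)
      split
      · exact mul_mem (hf p.1) (ih p.2 (by assumption))
      · exact zero_mem _


lemma prod_sub_one_dvd {α : Type*} {N : ℕ} {s : Finset α} {F : α → PowerSeries ℚ}
    (h : ∀ x ∈ s, (X : PowerSeries ℚ) ^ N ∣ F x - 1) :
    (X : PowerSeries ℚ) ^ N ∣ (∏ x ∈ s, F x) - 1 := by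
  classical
  induction s using Finset.cons_induction with
  | empty => simp
  | cons a s ha ih =>
    rw [Finset.prod_cons]
    have h1 : (X : PowerSeries ℚ) ^ N ∣ (∏ x ∈ s, F x) - 1 :=
      ih fun x hx => h x (Finset.mem_cons_of_mem hx)
    have h2 := h a (Finset.mem_cons_self a s)
    have : F a * (∏ x ∈ s, F x) - 1
        = F a * ((∏ x ∈ s, F x) - 1) + (F a - 1) := by ring
    rw [this]
    exact dvd_add (h1.mul_left _) h2

lemma prod_filter_dvd {α : Type*} {N : ℕ} (s : Finset α) (P : α → Prop) [DecidablePred P]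
    (F : α → PowerSeries ℚ) (h : ∀ x ∈ s, ¬ P x → (X : PowerSeries ℚ) ^ N ∣ F x - 1) :
    (X : PowerSeries ℚ) ^ N ∣ (∏ x ∈ s, F x) - ∏ x ∈ s.filter P, F x := by
  rw [← Finset.prod_filter_mul_prod_filter_not s P F]
  have h2 : (X : PowerSeries ℚ) ^ N ∣ (∏ x ∈ s.filter (fun x => ¬ P x), F x) - 1 :=
    prod_sub_one_dvd fun x hx =>
      h x (Finset.mem_filter.mp hx).1 (Finset.mem_filter.mp hx).2
  have : (∏ x ∈ s.filter P, F x) * (∏ x ∈ s.filter (fun x => ¬ P x), F x)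
        - ∏ x ∈ s.filter P, F x
      = (∏ x ∈ s.filter P, F x) * ((∏ x ∈ s.filter (fun x => ¬ P x), F x) - 1) := by ring
  rw [this]
  exact h2.mul_left _

lemma coeff_eq_of_dvd {f g : PowerSeries ℚ} {d N : ℕ}
    (h : (X : PowerSeries ℚ) ^ N ∣ f - g) (hd : d < N) :
    PowerSeries.coeff d f = PowerSeries.coeff d g := by
  have := (PowerSeries.X_pow_dvd_iff.mp h) d hd
  rw [map_sub, sub_eq_zero] at this
  exact this

lemma dvd_of_coeff_eq {f g : PowerSeries ℚ} {N : ℕ}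
    (h : ∀ d < N, PowerSeries.coeff d f = PowerSeries.coeff d g) :
    (X : PowerSeries ℚ) ^ N ∣ f - g := by
  rw [PowerSeries.X_pow_dvd_iff]
  intro m hm
  rw [map_sub, h m hm, sub_self]

lemma coeff_sProd (P : ℕ → Prop) [DecidablePred P] (d M : ℕ) (hdM : d < M) :
    PowerSeries.coeff d (sProd P)
      = PowerSeries.coeff d (∏ m ∈ (Finset.range M).filter P, (1 - (X : PowerSeries ℚ) ^ m)) := by
  rw [sProd, PowerSeries.coeff_mk]
  have hsub : (Finset.range (d + 1)).filter P
      = ((Finset.range M).filter P).filter (fun m => m < d + 1) := by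
    ext m
    simp only [Finset.mem_filter, Finset.mem_range]
    constructor
    · rintro ⟨h1, h2⟩; exact ⟨⟨by omega, h2⟩, h1⟩
    · rintro ⟨⟨h1, h2⟩, h3⟩; exact ⟨h3, h2⟩
  rw [hsub]
  refine (coeff_eq_of_dvd (N := d + 1) ?_ (Nat.lt_succ_self d)).symm
  apply prod_filter_dvd
  intro m _ hnot
  have he : (1 - (X : PowerSeries ℚ) ^ m) - 1 = -(X ^ m) := by ring
  rw [he, dvd_neg]
  exact pow_dvd_pow _ (by omega)

lemma constCoeff_one_sub_X_pow (e : ℕ) (he : e ≠ 0) :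
    constantCoeff (1 - (X : PowerSeries ℚ) ^ e) = 1 := by
  rw [map_sub, map_one, map_pow, PowerSeries.constantCoeff_X, zero_pow he, sub_zero]

lemma constCoeff_one_add_X_pow (e : ℕ) (he : e ≠ 0) :
    constantCoeff (1 + (X : PowerSeries ℚ) ^ e) = 1 := by
  rw [map_add, map_one, map_pow, PowerSeries.constantCoeff_X, zero_pow he, add_zero]

lemma key_identity (j : ℕ) : (X : PowerSeries ℚ) ^ (2*j+1) ∣
    (∏ m ∈ (Finset.range (2*j+1)).filter (fun m => 1 ≤ m ∧ m % 4 ≠ 2),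
        (1 - (X : PowerSeries ℚ) ^ m)) *
      (∏ t ∈ Finset.range (j+1), (1 + (X : PowerSeries ℚ) ^ (2*t+1))) -
    ∏ t ∈ Finset.Icc 1 j, (1 - (X : PowerSeries ℚ) ^ (2*t)) := by
  classical
  set Podd : PowerSeries ℚ := ∏ t ∈ Finset.range j, (1 - (X : PowerSeries ℚ) ^ (2*t+1)) with hPodd
  set Bsm : PowerSeries ℚ := ∏ t ∈ Finset.range j, (1 + (X : PowerSeries ℚ) ^ (2*t+1)) with hBsm
  set P1 : PowerSeries ℚ := ∏ t ∈ Finset.range j, (1 - (X : PowerSeries ℚ) ^ (4*t+2)) with hP1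
  set P2 : PowerSeries ℚ := ∏ s ∈ Finset.Icc 1 (j/2), (1 - (X : PowerSeries ℚ) ^ (4*s)) with hP2
  set Q : PowerSeries ℚ := ∏ s ∈ Finset.range ((j+1)/2), (1 - (X : PowerSeries ℚ) ^ (4*s+2)) with hQdef
  -- split A'
  have hA' : (∏ m ∈ (Finset.range (2*j+1)).filter (fun m => 1 ≤ m ∧ m % 4 ≠ 2),
      (1 - (X : PowerSeries ℚ) ^ m)) = Podd * P2 := by
    rw [← Finset.prod_filter_mul_prod_filter_not
      ((Finset.range (2*j+1)).filter (fun m => 1 ≤ m ∧ m % 4 ≠ 2)) (fun m => m % 2 = 1)]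
    congr 1
    · have hset : ((Finset.range (2*j+1)).filter (fun m => 1 ≤ m ∧ m % 4 ≠ 2)).filter
          (fun m => m % 2 = 1) = (Finset.range j).image (fun t => 2*t+1) := by
        ext m
        simp only [Finset.mem_filter, Finset.mem_range, Finset.mem_image]
        constructor
        · rintro ⟨⟨h1, h2, h3⟩, h4⟩; exact ⟨m / 2, by omega, by omega⟩
        · rintro ⟨t, ht, rfl⟩; refine ⟨⟨by omega, by omega, by omega⟩, by omega⟩
      rw [hset, Finset.prod_image (by intro x _ y _ h; simp only at h; omega)]
    · have hset : ((Finset.range (2*j+1)).filter (fun m => 1 ≤ m ∧ m % 4 ≠ 2)).filter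
          (fun m => ¬ m % 2 = 1) = (Finset.Icc 1 (j/2)).image (fun s => 4*s) := by
        ext m
        simp only [Finset.mem_filter, Finset.mem_range, Finset.mem_image, Finset.mem_Icc]
        constructor
        · rintro ⟨⟨h1, h2, h3⟩, h4⟩; exact ⟨m / 4, by omega, by omega⟩
        · rintro ⟨s, hs, rfl⟩; refine ⟨⟨by omega, by omega, by omega⟩, by omega⟩
      rw [hset, Finset.prod_image (by intro x _ y _ h; simp only at h; omega)]
  -- split B
  have hB : (∏ t ∈ Finset.range (j+1), (1 + (X : PowerSeries ℚ) ^ (2*t+1)))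
      = Bsm * (1 + (X : PowerSeries ℚ) ^ (2*j+1)) := Finset.prod_range_succ _ _
  -- pair up
  have hpair : Podd * Bsm = P1 := by
    rw [hPodd, hBsm, hP1, ← Finset.prod_mul_distrib]
    refine Finset.prod_congr rfl fun t _ => ?_
    have h1 : (1 - (X : PowerSeries ℚ) ^ (2*t+1)) * (1 + X ^ (2*t+1))
        = 1 - (X ^ (2*t+1)) ^ 2 := by ring
    rw [h1, ← pow_mul, show (2*t+1)*2 = 4*t+2 from by ring]
  -- reduce P1 to Q
  have hQ : (X : PowerSeries ℚ) ^ (2*j+1) ∣ P1 - Q := by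
    have hset : Finset.range ((j+1)/2)
        = (Finset.range j).filter (fun t => 4*t+2 < 2*j+1) := by
      ext t; simp only [Finset.mem_range, Finset.mem_filter]; omega
    rw [hQdef, hset, hP1]
    apply prod_filter_dvd
    intro t _ hnot
    have he : (1 - (X : PowerSeries ℚ) ^ (4*t+2)) - 1 = -(X ^ (4*t+2)) := by ring
    rw [he, dvd_neg]
    exact pow_dvd_pow _ (by omega)
  -- split A
  have hAsplit : (∏ t ∈ Finset.Icc 1 j, (1 - (X : PowerSeries ℚ) ^ (2*t))) = Q * P2 := by
    rw [← Finset.prod_filter_mul_prod_filter_not (Finset.Icc 1 j) (fun t => t % 2 = 1)]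
    congr 1
    · have hset : (Finset.Icc 1 j).filter (fun t => t % 2 = 1)
          = (Finset.range ((j+1)/2)).image (fun s => 2*s+1) := by
        ext t
        simp only [Finset.mem_filter, Finset.mem_Icc, Finset.mem_image, Finset.mem_range]
        constructor
        · rintro ⟨⟨h1, h2⟩, h3⟩; exact ⟨t / 2, by omega, by omega⟩
        · rintro ⟨s, hs, rfl⟩; refine ⟨⟨by omega, by omega⟩, by omega⟩
      rw [hset, Finset.prod_image (by intro x _ y _ h; simp only at h; omega), hQdef]
      refine Finset.prod_congr rfl fun s _ => ?_
      rw [show 2*(2*s+1) = 4*s+2 from by ring]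
    · have hset : (Finset.Icc 1 j).filter (fun t => ¬ t % 2 = 1)
          = (Finset.Icc 1 (j/2)).image (fun s => 2*s) := by
        ext t
        simp only [Finset.mem_filter, Finset.mem_Icc, Finset.mem_image]
        constructor
        · rintro ⟨⟨h1, h2⟩, h3⟩; exact ⟨t / 2, by omega, by omega⟩
        · rintro ⟨s, hs, rfl⟩; refine ⟨⟨by omega, by omega⟩, by omega⟩
      rw [hset, Finset.prod_image (by intro x _ y _ h; simp only at h; omega), hP2]
      refine Finset.prod_congr rfl fun s _ => ?_
      rw [show 2*(2*s) = 4*s from by ring]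
  rw [hA', hB, hAsplit]
  have hcalc : Podd * P2 * (Bsm * (1 + (X : PowerSeries ℚ) ^ (2*j+1))) - Q * P2
      = (Podd * Bsm) * P2 * (1 + (X : PowerSeries ℚ) ^ (2*j+1)) - Q * P2 := by ring
  rw [hcalc, hpair]
  have hcalc2 : P1 * P2 * (1 + (X : PowerSeries ℚ) ^ (2*j+1)) - Q * P2
      = P2 * (P1 * X ^ (2*j+1)) + P2 * (P1 - Q) := by ring
  rw [hcalc2]
  exact dvd_add ((dvd_mul_left _ _).mul_left _) (hQ.mul_left _)

/-- The Empirical Hypothesis: each `G_{(k-1)j+i}(q)` (given by its closed form)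
equals `1 + q^{2j+1} γ(q)` for some `γ(q) ∈ ℤ⟦q⟧`. -/
theorem empirical_hypothesis (k : ℕ) (hk : 2 ≤ k) (j i : ℕ) (hi1 : 1 ≤ i) (hik : i ≤ k) :
    ∃ γ : PowerSeries ℤ,
      Gcf k j i = 1 + PowerSeries.X ^ (2 * j + 1) *
        PowerSeries.map (Int.castRingHom ℚ) γ := by
  classical
  set F : ℕ → PowerSeries ℚ := fun n =>
    (-1 : PowerSeries ℚ) ^ n *
    PowerSeries.X ^ (4 * k * n.choose 2 + (2 * k * (j + 1) + 2 * i - 1) * n) *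
    (∏ t ∈ Finset.Icc 1 j, (1 - PowerSeries.X ^ (2 * (n + t)))) *
    (∏ t ∈ Finset.range (j + 1), (1 + PowerSeries.X ^ (2 * (n + t) + 1)))⁻¹ *
    (1 - PowerSeries.X ^ (2 * (k - i + 1) * (2 * n + j + 1)) +
      PowerSeries.X ^ (2 * (n + j) + 1) *
        (1 - PowerSeries.X ^ (2 * (k - i) * (2 * n + j + 1)))) with hF
  have hGeq : Gcf k j i = Fq⁻¹ * sSum F := rfl
  set A : PowerSeries ℚ := ∏ t ∈ Finset.Icc 1 j, (1 - (X : PowerSeries ℚ) ^ (2*t)) with hA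
  set B : PowerSeries ℚ := ∏ t ∈ Finset.range (j+1), (1 + (X : PowerSeries ℚ) ^ (2*t+1)) with hB
  set A' : PowerSeries ℚ := ∏ m ∈ (Finset.range (2*j+1)).filter (fun m => 1 ≤ m ∧ m % 4 ≠ 2),
    (1 - (X : PowerSeries ℚ) ^ m) with hA'
  set C0 : PowerSeries ℚ := 1 - (X : PowerSeries ℚ) ^ (2 * (k - i + 1) * (j + 1)) +
      (X : PowerSeries ℚ) ^ (2 * j + 1) *
        (1 - (X : PowerSeries ℚ) ^ (2 * (k - i) * (j + 1))) with hC0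
  -- Fq basic facts
  have hFqS : Fq ∈ Sint := by
    rw [mem_Sint]
    intro d
    rw [Fq, sProd, PowerSeries.coeff_mk]
    have : (∏ m ∈ (Finset.range (d + 1)).filter (fun m => 1 ≤ m ∧ m % 4 ≠ 2),
        (1 - (X : PowerSeries ℚ) ^ m)) ∈ Sint :=
      prod_mem fun m _ => sub_mem (one_mem _) (pow_mem X_mem_Sint m)
    exact mem_Sint.mp this d
  have hFqc : constantCoeff Fq = 1 := by
    rw [← PowerSeries.coeff_zero_eq_constantCoeff_apply, Fq, sProd, PowerSeries.coeff_mk]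
    rw [show (Finset.range 1).filter (fun m => 1 ≤ m ∧ m % 4 ≠ 2) = ∅ from by
      ext m; simp; omega]
    simp
  -- B basic facts
  have hBc : constantCoeff B = 1 := by
    rw [hB, map_prod]
    exact Finset.prod_eq_one fun t _ => constCoeff_one_add_X_pow _ (by omega)
  have hBinv : B * B⁻¹ = 1 := PowerSeries.mul_inv_cancel _ (by rw [hBc]; norm_num)
  -- membership of summands
  have hFmem : ∀ n, F n ∈ Sint := by
    intro n
    rw [hF]
    refine mul_mem (mul_mem (mul_mem (mul_mem ?_ ?_) ?_) ?_) ?_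
    · exact pow_mem (neg_mem (one_mem _)) n
    · exact pow_mem X_mem_Sint _
    · exact prod_mem fun t _ => sub_mem (one_mem _) (pow_mem X_mem_Sint _)
    · refine inv_mem_Sint (prod_mem fun t _ => add_mem (one_mem _) (pow_mem X_mem_Sint _)) ?_
      rw [map_prod]
      exact Finset.prod_eq_one fun t _ => constCoeff_one_add_X_pow _ (by omega)
    · exact add_mem (sub_mem (one_mem _) (pow_mem X_mem_Sint _))
        (mul_mem (pow_mem X_mem_Sint _) (sub_mem (one_mem _) (pow_mem X_mem_Sint _)))
  have hSsumS : sSum F ∈ Sint := by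
    rw [mem_Sint]
    intro d
    rw [sSum, PowerSeries.coeff_mk, map_sum]
    exact sum_mem fun n _ => mem_Sint.mp (hFmem n) d
  have hGS : Gcf k j i ∈ Sint := by
    rw [hGeq]
    exact mul_mem (inv_mem_Sint hFqS hFqc) hSsumS
  -- order bound for summands n ≥ 1
  have hfn : ∀ n, 1 ≤ n → (X : PowerSeries ℚ) ^ (2*j+1) ∣ F n := by
    intro n hn
    have hNE : 2*j+1 ≤ 4 * k * n.choose 2 + (2 * k * (j + 1) + 2 * i - 1) * n := by
      have hkk : 2*(j+1) ≤ 2*k*(j+1) := mul_le_mul_left (by omega) (j+1)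
      have h2 : 2*j+1 ≤ 2*k*(j+1)+2*i-1 := by
        set K := 2*k*(j+1)
        omega
      calc 2*j+1 ≤ 2*k*(j+1)+2*i-1 := h2
        _ = (2*k*(j+1)+2*i-1) * 1 := (mul_one _).symm
        _ ≤ (2*k*(j+1)+2*i-1) * n := mul_le_mul_right hn _
        _ ≤ 4 * k * n.choose 2 + (2 * k * (j + 1) + 2 * i - 1) * n := Nat.le_add_left _ _
    have h1 : (X : PowerSeries ℚ) ^ (4 * k * n.choose 2 + (2 * k * (j + 1) + 2 * i - 1) * n)
        ∣ F n := by
      rw [hF]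
      exact (((dvd_mul_left _ _).mul_right _).mul_right _).mul_right _
    exact dvd_trans (pow_dvd_pow _ hNE) h1
  -- normalize F 0
  have hf0 : F 0 = A * B⁻¹ * C0 := by
    rw [hF, hA, hB, hC0]
    norm_num
  -- d1 : truncated sum agrees with F 0
  have d1 : (X : PowerSeries ℚ) ^ (2*j+1) ∣ sSum F - F 0 := by
    refine dvd_of_coeff_eq fun d hd => ?_
    rw [sSum, PowerSeries.coeff_mk, map_sum]
    exact Finset.sum_eq_single_of_mem 0 (Finset.mem_range.mpr (Nat.succ_pos d))
      fun n _ hn => PowerSeries.X_pow_dvd_iff.mp (hfn n (by omega)) d hd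
  -- d2 : C0 is 1 mod X^(2j+1)
  have d2 : (X : PowerSeries ℚ) ^ (2*j+1) ∣ F 0 - A * B⁻¹ := by
    rw [hf0]
    have h1 : A * B⁻¹ * C0 - A * B⁻¹ = A * B⁻¹ * (C0 - 1) := by ring
    rw [h1]
    have h2 : C0 - 1 = (X : PowerSeries ℚ) ^ (2*j+1) * (1 - X ^ (2 * (k - i) * (j + 1)))
        - X ^ (2 * (k - i + 1) * (j + 1)) := by rw [hC0]; ring
    have h3 : (X : PowerSeries ℚ) ^ (2*j+1) ∣ C0 - 1 := by
      rw [h2]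
      refine dvd_sub (dvd_mul_right _ _) (pow_dvd_pow _ ?_)
      calc 2*j+1 ≤ 2*(j+1) := by omega
        _ ≤ 2*(k-i+1)*(j+1) := mul_le_mul_left (by omega) (j+1)
    exact h3.mul_left _
  -- d3 : A * B⁻¹ ≡ A'
  have d3 : (X : PowerSeries ℚ) ^ (2*j+1) ∣ A * B⁻¹ - A' := by
    have hkey : (X : PowerSeries ℚ) ^ (2*j+1) ∣ A' * B - A := by
      rw [hA', hB, hA]; exact key_identity j
    have h1 : A * B⁻¹ - A' = -((A' * B - A) * B⁻¹) := by
      rw [sub_mul, mul_assoc, hBinv, mul_one]; ring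
    rw [h1, dvd_neg]
    exact hkey.mul_right _
  -- d4 : A' ≡ Fq
  have d4 : (X : PowerSeries ℚ) ^ (2*j+1) ∣ A' - Fq := by
    refine dvd_of_coeff_eq fun d hd => ?_
    rw [hA']
    exact (coeff_sProd (fun m => 1 ≤ m ∧ m % 4 ≠ 2) d (2*j+1) hd).symm
  -- combine
  have dS : (X : PowerSeries ℚ) ^ (2*j+1) ∣ sSum F - Fq := by
    have h : sSum F - Fq = (sSum F - F 0) + (F 0 - A * B⁻¹) + (A * B⁻¹ - A') + (A' - Fq) := by
      ring
    rw [h]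
    exact dvd_add (dvd_add (dvd_add d1 d2) d3) d4
  have hFqinv : Fq⁻¹ * Fq = 1 := by
    rw [mul_comm]; exact PowerSeries.mul_inv_cancel _ (by rw [hFqc]; norm_num)
  have hdvd : (X : PowerSeries ℚ) ^ (2*j+1) ∣ Gcf k j i - 1 := by
    have h : Gcf k j i - 1 = Fq⁻¹ * (sSum F - Fq) := by
      rw [hGeq, ← hFqinv]; ring
    rw [h]
    exact dS.mul_left _
  -- extract integer series
  have hG : ∀ d, ∃ z : ℤ, (z : ℚ) = PowerSeries.coeff d (Gcf k j i) :=
    fun d => Subring.mem_bot.mp (mem_Sint.mp hGS d)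
  choose zc hzc using hG
  set GZ : PowerSeries ℤ := PowerSeries.mk zc with hGZ
  have hmap : PowerSeries.map (Int.castRingHom ℚ) GZ = Gcf k j i := by
    ext d
    rw [PowerSeries.coeff_map, hGZ, PowerSeries.coeff_mk]
    exact hzc d
  have hZdvd : (X : PowerSeries ℤ) ^ (2*j+1) ∣ GZ - 1 := by
    rw [PowerSeries.X_pow_dvd_iff]
    intro m hm
    have hQ : PowerSeries.coeff m (Gcf k j i) = PowerSeries.coeff m 1 :=
      coeff_eq_of_dvd hdvd hm
    have h1 : ((PowerSeries.coeff m (GZ - 1) : ℤ) : ℚ) = 0 := by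
      rw [map_sub, Int.cast_sub, hGZ, PowerSeries.coeff_mk, hzc m, hQ,
        PowerSeries.coeff_one, PowerSeries.coeff_one]
      by_cases hm0 : m = 0 <;> simp [hm0]
    exact_mod_cast h1
  obtain ⟨γ, hγ⟩ := hZdvd
  refine ⟨γ, ?_⟩
  rw [← hmap, show GZ = 1 + (X : PowerSeries ℤ) ^ (2*j+1) * γ from by rw [← hγ]; ring,
    map_add, map_one, map_mul, map_pow, PowerSeries.map_X]
end

section
/- With the notation of the Göllnitz–Gordon–Andrews Empirical Hypothesis, the stronger statement holds: for 1 ≤ i ≤ k−1 and j ≥ 0, the coefficient of q^{2j+1} in G_{(k-1)j+i}(q) equals 1 (so G_{(k-1)j+i}(q) = 1 + q^{2j+1} + higher order terms), and G_{(k-1)j+k}(q) = 1 + q^{2j+3} + higher order terms. -/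
open PowerSeries Finset

namespace SEH

lemma prod_one_sub_dvd (N : ℕ) (s : Finset ℕ) (e : ℕ → ℕ) (h : ∀ m ∈ s, N ≤ e m) :
    (X : PowerSeries ℚ) ^ N ∣ (∏ m ∈ s, (1 - X ^ e m)) - 1 := by
  induction s using Finset.cons_induction with
  | empty => simp
  | cons a s ha ih =>
    rw [Finset.prod_cons]
    have h1 : (X : PowerSeries ℚ) ^ N ∣ (1 - X ^ e a) - 1 := by
      have : (X : PowerSeries ℚ) ^ N ∣ X ^ e a := pow_dvd_pow _ (h a (Finset.mem_cons_self a s))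
      simpa using this.neg_right
    have h2 := ih fun m hm => h m (Finset.mem_cons_of_mem hm)
    have key : (1 - (X : PowerSeries ℚ) ^ e a) * ∏ m ∈ s, (1 - X ^ e m) - 1
        = (1 - X ^ e a) * ((∏ m ∈ s, (1 - X ^ e m)) - 1) + ((1 - X ^ e a) - 1) := by ring
    rw [key]
    exact dvd_add (h2.mul_left _) h1

lemma coeff_eq_of_dvd_sub {a b : PowerSeries ℚ} {d N : ℕ}
    (h : (X : PowerSeries ℚ) ^ N ∣ a - b) (hd : d < N) :
    PowerSeries.coeff d a = PowerSeries.coeff d b := by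
  rw [PowerSeries.X_pow_dvd_iff] at h
  have := h d hd
  rw [map_sub, sub_eq_zero] at this
  exact this

lemma Fq_trunc (N : ℕ) :
    (X : PowerSeries ℚ) ^ N ∣ Fq - ∏ m ∈ (Finset.range N).filter (fun m => 1 ≤ m ∧ m % 4 ≠ 2),
      (1 - X ^ m) := by
  rw [PowerSeries.X_pow_dvd_iff]
  intro d hd
  rw [map_sub, sub_eq_zero, Fq, sProd, coeff_mk]
  have hsub : (Finset.range (d+1)).filter (fun m => 1 ≤ m ∧ m % 4 ≠ 2) ⊆
      (Finset.range N).filter (fun m => 1 ≤ m ∧ m % 4 ≠ 2) :=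
    Finset.filter_subset_filter _ (Finset.range_subset_range.2 hd)
  rw [← Finset.prod_sdiff hsub]
  obtain ⟨u, hu⟩ := prod_one_sub_dvd (d+1)
      ((Finset.range N).filter (fun m => 1 ≤ m ∧ m % 4 ≠ 2) \
        (Finset.range (d+1)).filter (fun m => 1 ≤ m ∧ m % 4 ≠ 2)) (fun m => m)
      (by
        intro m hm
        simp only [Finset.mem_sdiff, Finset.mem_filter, Finset.mem_range] at hm
        show d + 1 ≤ m
        omega)
  rw [sub_eq_iff_eq_add] at hu
  rw [hu]
  set P := ∏ m ∈ (Finset.range (d+1)).filter (fun m => 1 ≤ m ∧ m % 4 ≠ 2),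
      (1 - (X : PowerSeries ℚ) ^ m) with hP
  have expand : ((X : PowerSeries ℚ)^(d+1) * u + 1) * P = P + X^(d+1) * (u * P) := by ring
  rw [expand, map_add]
  have hz : (PowerSeries.coeff d) ((X : PowerSeries ℚ)^(d+1) * (u * P)) = 0 :=
    PowerSeries.X_pow_dvd_iff.1 (dvd_mul_right _ _) d (Nat.lt_succ_self d)
  rw [hz, add_zero]

lemma sSum_trunc (f : ℕ → PowerSeries ℚ) (N : ℕ)
    (hf : ∀ n, 1 ≤ n → (X : PowerSeries ℚ) ^ N ∣ f n) :
    (X : PowerSeries ℚ) ^ N ∣ sSum f - f 0 := by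
  rw [PowerSeries.X_pow_dvd_iff]
  intro d hd
  rw [map_sub, sub_eq_zero, sSum, coeff_mk, map_sum]
  rw [Finset.sum_eq_single 0]
  · intro n hn hn0
    exact PowerSeries.X_pow_dvd_iff.1 (hf n (Nat.one_le_iff_ne_zero.2 hn0)) d hd
  · intro h; simp at h

end SEH

namespace SEH

lemma key (j : ℕ) :
    (X : PowerSeries ℚ) ^ (2*j+4) ∣
      (∏ t ∈ Finset.Icc 1 j, (1 - X ^ (2*t))) * (1 - X ^ (2*j+2))
      - (∏ t ∈ Finset.range (j+1), (1 + X ^ (2*t+1))) * Fq * (1 + X ^ (2*j+3)) := by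
  obtain ⟨r, hr⟩ := Fq_trunc (2*j+4)
  set F : PowerSeries ℚ :=
    ∏ m ∈ (Finset.range (2*j+4)).filter (fun m => 1 ≤ m ∧ m % 4 ≠ 2), (1 - X ^ m) with hF
  rw [sub_eq_iff_eq_add] at hr
  -- (e1) left side as a single product
  have e1 : (∏ t ∈ Finset.Icc 1 (j+1), (1 - (X : PowerSeries ℚ) ^ (2*t)))
      = (∏ t ∈ Finset.Icc 1 j, (1 - X ^ (2*t))) * (1 - X ^ (2*j+2)) := by
    rw [Finset.prod_Icc_succ_top (Nat.succ_le_succ (Nat.zero_le j)),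
      show 2*(j+1) = 2*j+2 from by ring]
  -- (e2) B * T as a single product
  have e2 : (∏ t ∈ Finset.range (j+2), (1 + (X : PowerSeries ℚ) ^ (2*t+1)))
      = (∏ t ∈ Finset.range (j+1), (1 + X ^ (2*t+1))) * (1 + X ^ (2*j+3)) := by
    rw [Finset.prod_range_succ, show 2*(j+1)+1 = 2*j+3 from by ring]
  -- (e3) split F
  have hset1 : (Finset.range (2*j+4)).filter (fun m => 1 ≤ m ∧ m % 4 ≠ 2)
      = (Finset.range (j+2)).image (fun t => 2*t+1) ∪
        (Finset.Icc 1 ((j+1)/2)).image (fun t => 4*t) := by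
    ext m
    simp only [Finset.mem_filter, Finset.mem_range, Finset.mem_union, Finset.mem_image,
      Finset.mem_Icc]
    constructor
    · rintro ⟨hm, h1, h2⟩
      by_cases hpar : m % 2 = 1
      · exact Or.inl ⟨m/2, by omega, by omega⟩
      · exact Or.inr ⟨m/4, ⟨by omega, by omega⟩, by omega⟩
    · rintro (⟨t, ht, rfl⟩ | ⟨t, ⟨ht1, ht2⟩, rfl⟩) <;> omega
  have hdisj : Disjoint ((Finset.range (j+2)).image (fun t => 2*t+1))
      ((Finset.Icc 1 ((j+1)/2)).image (fun t => 4*t)) := by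
    rw [Finset.disjoint_left]
    rintro a ha hb
    simp only [Finset.mem_image, Finset.mem_range] at ha
    simp only [Finset.mem_image, Finset.mem_Icc] at hb
    obtain ⟨t, _, rfl⟩ := ha
    obtain ⟨s, _, hs⟩ := hb
    omega
  have e3 : F = (∏ t ∈ Finset.range (j+2), (1 - (X : PowerSeries ℚ) ^ (2*t+1))) *
      (∏ t ∈ Finset.Icc 1 ((j+1)/2), (1 - X ^ (4*t))) := by
    rw [hF, hset1, Finset.prod_union hdisj,
      Finset.prod_image (by intro x _ y _ h; have h' : 2*x+1 = 2*y+1 := h; omega),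
      Finset.prod_image (by intro x _ y _ h; have h' : 4*x = 4*y := h; omega)]
  -- (e4) pairing
  have e4 : (∏ t ∈ Finset.range (j+2), (1 + (X : PowerSeries ℚ) ^ (2*t+1))) *
      (∏ t ∈ Finset.range (j+2), (1 - X ^ (2*t+1)))
      = ∏ t ∈ Finset.range (j+2), (1 - X ^ (4*t+2)) := by
    rw [← Finset.prod_mul_distrib]
    refine Finset.prod_congr rfl fun t _ => ?_
    have hx : (X : PowerSeries ℚ) ^ (4*t+2) = ((X : PowerSeries ℚ) ^ (2*t+1))^2 := by
      rw [← pow_mul]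
      congr 1
      ring
    rw [hx]
    ring
  -- (e5) split the left product
  have hset2 : (Finset.Icc 1 (j+1)).image (fun t => 2*t)
      = (Finset.range (j/2+1)).image (fun t => 4*t+2) ∪
        (Finset.Icc 1 ((j+1)/2)).image (fun t => 4*t) := by
    ext m
    simp only [Finset.mem_image, Finset.mem_Icc, Finset.mem_union, Finset.mem_range]
    constructor
    · rintro ⟨t, ⟨ht1, ht2⟩, rfl⟩
      by_cases h : t % 2 = 0
      · exact Or.inr ⟨t/2, ⟨by omega, by omega⟩, by omega⟩
      · exact Or.inl ⟨t/2, by omega, by omega⟩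
    · rintro (⟨t, ht, rfl⟩ | ⟨t, ⟨ht1, ht2⟩, rfl⟩)
      · exact ⟨2*t+1, ⟨by omega, by omega⟩, by omega⟩
      · exact ⟨2*t, ⟨by omega, by omega⟩, by omega⟩
  have hdisj2 : Disjoint ((Finset.range (j/2+1)).image (fun t => 4*t+2))
      ((Finset.Icc 1 ((j+1)/2)).image (fun t => 4*t)) := by
    rw [Finset.disjoint_left]
    rintro a ha hb
    simp only [Finset.mem_image, Finset.mem_range] at ha
    simp only [Finset.mem_image, Finset.mem_Icc] at hb
    obtain ⟨t, _, rfl⟩ := ha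
    obtain ⟨s, _, hs⟩ := hb
    omega
  have e5 : (∏ t ∈ Finset.Icc 1 (j+1), (1 - (X : PowerSeries ℚ) ^ (2*t)))
      = (∏ t ∈ Finset.range (j/2+1), (1 - X ^ (4*t+2))) *
        (∏ t ∈ Finset.Icc 1 ((j+1)/2), (1 - X ^ (4*t))) := by
    have e5a : (∏ m ∈ (Finset.Icc 1 (j+1)).image (fun t => 2*t), (1 - (X : PowerSeries ℚ) ^ m))
        = ∏ t ∈ Finset.Icc 1 (j+1), (1 - X ^ (2*t)) := by
      rw [Finset.prod_image]
      intro x _ y _ h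
      have h' : 2*x = 2*y := h
      omega
    rw [← e5a, hset2, Finset.prod_union hdisj2,
      Finset.prod_image (by intro x _ y _ h; have h' : 4*x+2 = 4*y+2 := h; omega),
      Finset.prod_image (by intro x _ y _ h; have h' : 4*x = 4*y := h; omega)]
  -- (e6) range split
  have e6 : (∏ t ∈ Finset.range (j+2), (1 - (X : PowerSeries ℚ) ^ (4*t+2)))
      = (∏ t ∈ Finset.range (j/2+1), (1 - X ^ (4*t+2))) *
        (∏ t ∈ Finset.Ico (j/2+1) (j+2), (1 - X ^ (4*t+2))) := by
    rw [Finset.range_eq_Ico, Finset.range_eq_Ico]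
    exact (Finset.prod_Ico_consecutive (fun t => (1 - (X : PowerSeries ℚ) ^ (4*t+2))) (n := j/2+1) (k := j+2) (Nat.zero_le _) (by omega)).symm
  -- extra factor divisibility
  obtain ⟨u, hu⟩ := prod_one_sub_dvd (2*j+4) (Finset.Ico (j/2+1) (j+2)) (fun t => 4*t+2)
    (by intro t ht; simp only [Finset.mem_Ico] at ht; show 2*j+4 ≤ 4*t+2; omega)
  rw [sub_eq_iff_eq_add] at hu
  -- assemble
  rw [hr]
  refine ⟨- (∏ t ∈ Finset.Icc 1 (j+1), (1 - X ^ (2*t))) * u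
      - (∏ t ∈ Finset.range (j+1), (1 + X ^ (2*t+1))) * r * (1 + X ^ (2*j+3)), ?_⟩
  calc (∏ t ∈ Finset.Icc 1 j, (1 - (X : PowerSeries ℚ) ^ (2*t))) * (1 - X ^ (2*j+2)) -
      (∏ t ∈ Finset.range (j+1), (1 + X ^ (2*t+1))) * (X ^ (2*j+4) * r + F) * (1 + X ^ (2*j+3))
      = (∏ t ∈ Finset.Icc 1 (j+1), (1 - X ^ (2*t)))
        - ((∏ t ∈ Finset.range (j+1), (1 + X ^ (2*t+1))) * (1 + X ^ (2*j+3))) * F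
        - X ^ (2*j+4) *
          ((∏ t ∈ Finset.range (j+1), (1 + X ^ (2*t+1))) * r * (1 + X ^ (2*j+3))) := by
        rw [e1]; ring
    _ = (∏ t ∈ Finset.Icc 1 (j+1), (1 - X ^ (2*t)))
        - (∏ t ∈ Finset.range (j+2), (1 - X ^ (4*t+2))) *
          (∏ t ∈ Finset.Icc 1 ((j+1)/2), (1 - X ^ (4*t)))
        - X ^ (2*j+4) *
          ((∏ t ∈ Finset.range (j+1), (1 + X ^ (2*t+1))) * r * (1 + X ^ (2*j+3))) := by
        rw [← e2, e3, ← e4]; ring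
    _ = X ^ (2*j+4) *
        (- (∏ t ∈ Finset.Icc 1 (j+1), (1 - X ^ (2*t))) * u
          - (∏ t ∈ Finset.range (j+1), (1 + X ^ (2*t+1))) * r * (1 + X ^ (2*j+3))) := by
        rw [e6, hu, e5]; ring

end SEH

namespace SEH

lemma Fq_const : PowerSeries.constantCoeff Fq = 1 := by
  have h0 : (Finset.range (0+1)).filter (fun m => 1 ≤ m ∧ m % 4 ≠ 2) = ∅ := by decide
  rw [← PowerSeries.coeff_zero_eq_constantCoeff_apply, Fq, sProd, coeff_mk, h0,
    Finset.prod_empty]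
  simp

lemma B_const (j : ℕ) :
    PowerSeries.constantCoeff (∏ t ∈ Finset.range (j+1), (1 + (X : PowerSeries ℚ) ^ (2*t+1)))
      = 1 := by
  rw [map_prod, Finset.prod_eq_one]
  intro t _
  simp

lemma Gcf_sub_dvd (k j i : ℕ) (hk : 2 ≤ k) (hi1 : 1 ≤ i) (M : ℕ) (hM : M ≤ 2*j+4)
    (T : PowerSeries ℚ)
    (hT : (X : PowerSeries ℚ) ^ M ∣
      (∏ t ∈ Finset.Icc 1 j, (1 - X ^ (2*t))) *
        (1 - X ^ (2*(k-i+1)*(j+1)) + X ^ (2*j+1) * (1 - X ^ (2*(k-i)*(j+1))))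
      - (∏ t ∈ Finset.range (j+1), (1 + X ^ (2*t+1))) * Fq * T) :
    (X : PowerSeries ℚ) ^ M ∣ Gcf k j i - T := by
  set A : PowerSeries ℚ := ∏ t ∈ Finset.Icc 1 j, (1 - X ^ (2*t)) with hA
  set B : PowerSeries ℚ := ∏ t ∈ Finset.range (j+1), (1 + X ^ (2*t+1)) with hB
  set C : PowerSeries ℚ :=
    1 - X ^ (2*(k-i+1)*(j+1)) + X ^ (2*j+1) * (1 - X ^ (2*(k-i)*(j+1))) with hC
  set f : ℕ → PowerSeries ℚ := fun n =>
    (-1 : PowerSeries ℚ) ^ n *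
    PowerSeries.X ^ (4 * k * n.choose 2 + (2 * k * (j + 1) + 2 * i - 1) * n) *
    (∏ t ∈ Finset.Icc 1 j, (1 - PowerSeries.X ^ (2 * (n + t)))) *
    (∏ t ∈ Finset.range (j + 1), (1 + PowerSeries.X ^ (2 * (n + t) + 1)))⁻¹ *
    (1 - PowerSeries.X ^ (2 * (k - i + 1) * (2 * n + j + 1)) +
      PowerSeries.X ^ (2 * (n + j) + 1) *
        (1 - PowerSeries.X ^ (2 * (k - i) * (2 * n + j + 1)))) with hf
  -- truncation of the sum
  have hsum : (X : PowerSeries ℚ) ^ (2*j+4) ∣ sSum f - f 0 := by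
    apply sSum_trunc
    intro n hn
    have hb : 2*j+4 ≤ 4 * k * n.choose 2 + (2 * k * (j + 1) + 2 * i - 1) * n := by
      have h1 : 2*(j+1) ≤ k*(j+1) := Nat.mul_le_mul_right _ hk
      have h2 : 2 * k * (j + 1) + 2 * i - 1 ≤ (2 * k * (j + 1) + 2 * i - 1) * n := by
        calc 2 * k * (j + 1) + 2 * i - 1 = (2 * k * (j + 1) + 2 * i - 1) * 1 := by ring
          _ ≤ (2 * k * (j + 1) + 2 * i - 1) * n := Nat.mul_le_mul_left _ hn
      have h3 : 2 * k * (j+1) = 2 * (k * (j+1)) := by ring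
      omega
    have hd1 : (X : PowerSeries ℚ) ^ (4 * k * n.choose 2 + (2 * k * (j + 1) + 2 * i - 1) * n)
        ∣ f n := by
      refine ⟨(-1 : PowerSeries ℚ) ^ n *
        (∏ t ∈ Finset.Icc 1 j, (1 - PowerSeries.X ^ (2 * (n + t)))) *
        (∏ t ∈ Finset.range (j + 1), (1 + PowerSeries.X ^ (2 * (n + t) + 1)))⁻¹ *
        (1 - PowerSeries.X ^ (2 * (k - i + 1) * (2 * n + j + 1)) +
          PowerSeries.X ^ (2 * (n + j) + 1) *
            (1 - PowerSeries.X ^ (2 * (k - i) * (2 * n + j + 1)))), ?_⟩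
      rw [hf]
      ring
    exact dvd_trans (pow_dvd_pow _ hb) hd1
  -- identify f 0
  have hf0 : B * f 0 = A * C := by
    have hBne : PowerSeries.constantCoeff B ≠ 0 := by rw [hB, B_const]; norm_num
    have h0 : f 0 = A * B⁻¹ * C := by
      rw [hf]
      simp only [pow_zero, one_mul, Nat.choose_zero_succ, Nat.mul_zero, Nat.zero_add, zero_add,
        Nat.add_zero, mul_zero, add_zero, pow_zero, hA, hB, hC]
    rw [h0, show B * (A * B⁻¹ * C) = (B⁻¹ * B) * (A * C) from by ring,
      PowerSeries.inv_mul_cancel _ hBne, one_mul]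
  -- multiply the goal by the unit B * Fq
  have hFne : PowerSeries.constantCoeff Fq ≠ 0 := by rw [Fq_const]; norm_num
  have hBne : PowerSeries.constantCoeff B ≠ 0 := by rw [hB, B_const]; norm_num
  have hGcf : B * Fq * Gcf k j i = B * sSum f := by
    rw [Gcf, show B * Fq * (Fq⁻¹ * sSum f) = B * (Fq * Fq⁻¹) * sSum f from by ring,
      PowerSeries.mul_inv_cancel _ hFne, mul_one]
  have hBig : (X : PowerSeries ℚ) ^ M ∣ B * Fq * (Gcf k j i - T) := by
    have hsplit : B * Fq * (Gcf k j i - T)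
        = B * (sSum f - f 0) + (A * C - B * Fq * T) := by
      rw [mul_sub, hGcf, mul_sub, ← hf0]
      ring
    rw [hsplit]
    exact dvd_add (dvd_trans (pow_dvd_pow _ hM) ((hsum).mul_left B)) hT
  have hid : Gcf k j i - T = (Fq⁻¹ * B⁻¹) * (B * Fq * (Gcf k j i - T)) := by
    rw [show (Fq⁻¹ * B⁻¹) * (B * Fq * (Gcf k j i - T))
        = ((Fq⁻¹ * Fq) * (B⁻¹ * B)) * (Gcf k j i - T) from by ring,
      PowerSeries.inv_mul_cancel _ hFne, PowerSeries.inv_mul_cancel _ hBne, one_mul, one_mul]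
  rw [hid]
  exact hBig.mul_left _

end SEH


open SEH

/-- The Strong Empirical Hypothesis: for `1 ≤ i ≤ k-1`, the coefficient of
`q^{2j+1}` in `G_{(k-1)j+i}(q)` is `1`, indeed
`G_{(k-1)j+i}(q) = 1 + q^{2j+1} + (higher order terms)`, while
`G_{(k-1)j+k}(q) = 1 + q^{2j+3} + (higher order terms)`. -/
theorem strong_empirical_hypothesis (k : ℕ) (hk : 2 ≤ k) (j : ℕ) :
    (∀ i, 1 ≤ i → i ≤ k - 1 →
      PowerSeries.coeff (2 * j + 1) (Gcf k j i) = 1 ∧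
      ∃ γ : PowerSeries ℚ,
        Gcf k j i = 1 + PowerSeries.X ^ (2 * j + 1) + PowerSeries.X ^ (2 * j + 2) * γ) ∧
    ∃ γ : PowerSeries ℚ,
      Gcf k j k = 1 + PowerSeries.X ^ (2 * j + 3) + PowerSeries.X ^ (2 * j + 4) * γ := by
  have hkey := key j
  set A : PowerSeries ℚ := ∏ t ∈ Finset.Icc 1 j, (1 - X ^ (2*t)) with hA
  set B : PowerSeries ℚ := ∏ t ∈ Finset.range (j+1), (1 + X ^ (2*t+1)) with hB
  constructor
  · intro i hi1 hi2
    set C : PowerSeries ℚ :=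
      1 - X ^ (2*(k-i+1)*(j+1)) + X ^ (2*j+1) * (1 - X ^ (2*(k-i)*(j+1))) with hC
    set T : PowerSeries ℚ := 1 + X ^ (2*j+1) with hT
    -- (1) X^{2j+2} ∣ A - B * Fq
    have h1 : (X : PowerSeries ℚ) ^ (2*j+2) ∣ A - B * Fq := by
      have hsplit : A - B * Fq
          = (A * (1 - X ^ (2*j+2)) - B * Fq * (1 + X ^ (2*j+3)))
            + A * X ^ (2*j+2) + B * Fq * X ^ (2*j+3) := by ring
      rw [hsplit]
      refine dvd_add (dvd_add ?_ ?_) ?_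
      · exact dvd_trans (pow_dvd_pow _ (by omega)) hkey
      · exact dvd_mul_left _ _
      · exact Dvd.dvd.mul_left (pow_dvd_pow _ (by omega)) _
    -- (2) X^{2j+2} ∣ C - T
    have h2 : (X : PowerSeries ℚ) ^ (2*j+2) ∣ C - T := by
      have hsplit : C - T = -(X ^ (2*(k-i+1)*(j+1))) - X ^ (2*j+1) * X ^ (2*(k-i)*(j+1)) := by
        rw [hC, hT]; ring
      rw [hsplit]
      refine dvd_sub (Dvd.dvd.neg_right ?_) ?_
      · refine pow_dvd_pow _ ?_
        calc 2*j+2 = 2*(j+1) := by ring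
          _ ≤ 2*(k-i+1)*(j+1) := Nat.mul_le_mul_right (j+1) (by omega)
      · rw [← pow_add]
        refine pow_dvd_pow _ ?_
        have he2 : 1 ≤ 2*(k-i)*(j+1) := by
          calc 1 = 1*1 := by ring
            _ ≤ (2*(k-i))*(j+1) := Nat.mul_le_mul (by omega) (by omega)
        calc 2*j+2 = (2*j+1) + 1 := by ring
          _ ≤ (2*j+1) + 2*(k-i)*(j+1) := Nat.add_le_add_left he2 _
    -- combine into the hypothesis of Gcf_sub_dvd
    have hTall : (X : PowerSeries ℚ) ^ (2*j+2) ∣ A * C - B * Fq * T := by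
      have hsplit : A * C - B * Fq * T = (A - B * Fq) * C + B * Fq * (C - T) := by ring
      rw [hsplit]
      exact dvd_add (h1.mul_right _) (h2.mul_left _)
    obtain ⟨γ, hγ⟩ := Gcf_sub_dvd k j i hk hi1 (2*j+2) (by omega) T hTall
    have hEq : Gcf k j i = 1 + X ^ (2*j+1) + X ^ (2*j+2) * γ := by
      have h := eq_add_of_sub_eq hγ
      rw [h, hT]; ring
    refine ⟨?_, γ, hEq⟩
    rw [hEq, map_add, map_add]
    have hc1 : PowerSeries.coeff (2*j+1) (1 : PowerSeries ℚ) = 0 := by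
      simp [PowerSeries.coeff_one]
    have hc2 : PowerSeries.coeff (2*j+1) ((X : PowerSeries ℚ) ^ (2*j+1)) = 1 := by
      simp [PowerSeries.coeff_X_pow]
    have hc3 : PowerSeries.coeff (2*j+1) ((X : PowerSeries ℚ) ^ (2*j+2) * γ) = 0 :=
      PowerSeries.X_pow_dvd_iff.1 (dvd_mul_right _ _) _ (by omega)
    rw [hc1, hc2, hc3]
    norm_num
  · set T : PowerSeries ℚ := 1 + X ^ (2*j+3) with hT
    have hCk : (1 : PowerSeries ℚ) - X ^ (2*(k-k+1)*(j+1)) +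
        X ^ (2*j+1) * (1 - X ^ (2*(k-k)*(j+1))) = 1 - X ^ (2*j+2) := by
      rw [Nat.sub_self, show 2*(0+1)*(j+1) = 2*j+2 from by ring,
        show 2*0*(j+1) = 0 from by ring]
      simp
    have hTall : (X : PowerSeries ℚ) ^ (2*j+4) ∣
        A * (1 - X ^ (2*(k-k+1)*(j+1)) + X ^ (2*j+1) * (1 - X ^ (2*(k-k)*(j+1))))
        - B * Fq * T := by
      rw [hCk, hT]
      exact hkey
    obtain ⟨γ, hγ⟩ := Gcf_sub_dvd k j k hk (by omega) (2*j+4) (le_refl _) T hTall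
    refine ⟨γ, ?_⟩
    have h := eq_add_of_sub_eq hγ
    rw [h, hT]; ring
end

section
/- Fix k ≥ 2 and J ≥ 0, and define h^{(j)}_{i,l}(q) by h^{(J)}_{i,l} = δ_{i,l} and h^{(j)}_{i,l}(q) = q^{2j(l-1)} ∑_{m=1}^{k-l+1} h^{(j-1)}_{i,m}(q) + q^{2jl-1} ∑_{m=1}^{k-l} h^{(j-1)}_{i,m}(q) for j > J. Then for each j ≥ J+1 and each i, l, the polynomial h^{(j)}_{i,l}(q) is the generating function for partitions (b_1,…,b_s) such that no odd part repeats, b_p − b_{p+k-1} ≥ 2 if b_p is odd, b_p − b_{p+k-1} > 2 if b_p is even, the smallest part exceeds 2J, at most k−i parts equal 2J+1 or 2J+2, the largest part is at most 2j, and exactly l−1 parts equal 2j. -/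
open Polynomial

/-- The hypothesis that `h` satisfies the defining initial conditions and
recursions of the coefficient polynomials `h^{(j)}_{i,l}(q)` in the matrix
approach to the Göllnitz–Gordon–Andrews identities: `h^{(J)}_{i,l} = δ_{i,l}` and
`h^{(j)}_{i,l}(q) = q^{2j(l-1)} ∑_{m=1}^{k-l+1} h^{(j-1)}_{i,m}(q)
  + q^{2jl-1} ∑_{m=1}^{k-l} h^{(j-1)}_{i,m}(q)` for `j > J`. -/
def IsHSystem (k J : ℕ) (h : ℕ → ℕ → ℕ → Polynomial ℤ) : Prop :=
  (∀ i l, 1 ≤ i → i ≤ k → 1 ≤ l → l ≤ k →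
    h J i l = if i = l then 1 else 0) ∧
  (∀ j i l, J < j → 1 ≤ i → i ≤ k → 1 ≤ l → l ≤ k →
    h j i l = X ^ (2 * j * (l - 1)) * ∑ m ∈ Finset.Icc 1 (k - l + 1), h (j - 1) i m
      + X ^ (2 * j * l - 1) * ∑ m ∈ Finset.Icc 1 (k - l), h (j - 1) i m)

/-- A partition (weakly decreasing list of positive parts) of type
`(k-1, 2J, k-i)`: no repeated odd parts, difference at least `2` at distance
`k-1` (strictly greater than `2` from even parts), smallest part exceeding `2J`,
and at most `k-i` parts equal to `2J+1` or `2J+2`. -/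
def IsTypePartition (k J i n : ℕ) (b : List ℕ) : Prop :=
  b.Pairwise (· ≥ ·) ∧ (∀ x ∈ b, 0 < x) ∧ b.sum = n ∧
  (∀ x, Odd x → b.count x ≤ 1) ∧
  (∀ p, p + (k - 1) < b.length →
    (Odd (b.getD p 0) → b.getD (p + (k - 1)) 0 + 2 ≤ b.getD p 0) ∧
    (Even (b.getD p 0) → b.getD (p + (k - 1)) 0 + 3 ≤ b.getD p 0)) ∧
  (∀ x ∈ b, 2 * J < x) ∧
  b.count (2 * J + 1) + b.count (2 * J + 2) ≤ k - i

namespace GGAux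
open List

lemma getD_replicate' {n v i : ℕ} (h : i < n) : (replicate n v).getD i 0 = v := by
  simp [List.getD, h]

lemma sorted_getD_le {b : List ℕ} (hs : b.Pairwise (· ≥ ·)) {p q : ℕ} (hpq : p ≤ q)
    (hq : q < b.length) : b.getD q 0 ≤ b.getD p 0 := by
  have hp : p < b.length := lt_of_le_of_lt hpq hq
  rw [List.getD_eq_getElem _ _ hq, List.getD_eq_getElem _ _ hp]
  exact hs.rel_get_of_le (a := ⟨p, hp⟩) (b := ⟨q, hq⟩) hpq

def Gap (k : ℕ) (b : List ℕ) : Prop := ∀ p, p + (k - 1) < b.length →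
    (Odd (b.getD p 0) → b.getD (p + (k - 1)) 0 + 2 ≤ b.getD p 0) ∧
    (Even (b.getD p 0) → b.getD (p + (k - 1)) 0 + 3 ≤ b.getD p 0)

lemma gap_suffix {k : ℕ} {L rest : List ℕ} (h : Gap k (L ++ rest)) : Gap k rest := by
  intro p hp
  have hlen : (L.length + p) + (k - 1) < (L ++ rest).length := by
    simp only [List.length_append]; omega
  have e1 := List.getD_append_right L rest 0 (L.length + p) (by omega)
  have e2 := List.getD_append_right L rest 0 (L.length + p + (k - 1)) (by omega)
  rw [Nat.add_sub_cancel_left] at e1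
  have e2' : L.length + p + (k - 1) - L.length = p + (k - 1) := by omega
  rw [e2'] at e2
  have := h (L.length + p) hlen
  rw [e1, e2] at this
  exact this

lemma gap_absurd {k j : ℕ} {b : List ℕ} (hs : b.Pairwise (· ≥ ·)) (hgap : Gap k b)
    (hk : 2 ≤ k) {t : ℕ} (hkt : k ≤ t) (htl : t ≤ b.length)
    (hge : 2 * j ≤ b.getD (t - 1) 0) (h0 : b.getD 0 0 ≤ 2 * j + 2) : False := by
  have h1 : 2 * j ≤ b.getD (k - 1) 0 :=
    le_trans hge (sorted_getD_le hs (by omega) (by omega))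
  have hgap0 := hgap 0 (by omega)
  rw [zero_add] at hgap0
  rcases Nat.even_or_odd (b.getD 0 0) with hev | hod
  · have := hgap0.2 hev; omega
  · have := hgap0.1 hod
    rw [Nat.odd_iff] at hod
    omega

lemma getD_two {a c x y : ℕ} {r : List ℕ} {p : ℕ} (hp : p < a + c) :
    (replicate a x ++ (replicate c y ++ r)).getD p 0 = if p < a then x else y := by
  by_cases h1 : p < a
  · rw [List.getD_append _ _ _ _ (by simpa using h1), getD_replicate' h1, if_pos h1]
  · rw [List.getD_append_right _ _ _ _ (by simp; omega), if_neg h1]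
    simp only [List.length_replicate]
    rw [List.getD_append _ _ _ _ (by simp; omega), getD_replicate' (by omega)]

lemma getD_tri {a c d x y z : ℕ} {r : List ℕ} {p : ℕ} (hp : p < a + c + d) :
    (replicate a x ++ (replicate c y ++ (replicate d z ++ r))).getD p 0 =
      if p < a then x else if p < a + c then y else z := by
  by_cases h1 : p < a
  · rw [List.getD_append _ _ _ _ (by simpa using h1), getD_replicate' h1, if_pos h1]
  · rw [List.getD_append_right _ _ _ _ (by simp; omega), if_neg h1]
    simp only [List.length_replicate]
    by_cases h2 : p < a + c
    · rw [List.getD_append _ _ _ _ (by simp; omega), getD_replicate' (by omega), if_pos (by omega)]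
    · rw [List.getD_append_right _ _ _ _ (by simp; omega), if_neg (by omega)]
      simp only [List.length_replicate]
      rw [List.getD_append _ _ _ _ (by simp; omega), getD_replicate' (by omega)]

lemma count_repl_ne {a v c : ℕ} (h : v ≠ a) : (replicate c v).count a = 0 := by
  rw [List.count_replicate, if_neg (by simpa using h)]

lemma count_repl_eq (v c : ℕ) : (replicate c v).count v = c := by
  rw [List.count_replicate, if_pos (by simp)]

/-- decomposition of a sorted list at its maximal value -/
lemma sorted_decomp {v : ℕ} : ∀ {b : List ℕ}, b.Pairwise (· ≥ ·) → (∀ x ∈ b, x ≤ v) →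
    ∃ rest, b = replicate (b.count v) v ++ rest ∧ ∀ x ∈ rest, x < v := by
  intro b
  induction b with
  | nil => intro _ _; exact ⟨[], by simp, by simp⟩
  | cons a t ih =>
    intro hs hle
    rcases eq_or_ne a v with rfl | hne
    · obtain ⟨rest, ht, hrest⟩ := ih hs.of_cons (fun x hx => hle x (mem_cons_of_mem _ hx))
      refine ⟨rest, ?_, hrest⟩
      rw [List.count_cons_self, List.replicate_succ]
      simpa using ht
    · have hav : a < v := lt_of_le_of_ne (hle a mem_cons_self) hne
      have hnotmem : v ∉ a :: t := by
        intro hv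
        rcases List.mem_cons.mp hv with rfl | hv
        · exact hne rfl
        · have := List.rel_of_pairwise_cons hs hv
          omega
      refine ⟨a :: t, ?_, ?_⟩
      · rw [List.count_eq_zero_of_not_mem hnotmem]; simp
      · intro x hx
        rcases List.mem_cons.mp hx with rfl | hx
        · exact hav
        · have := List.rel_of_pairwise_cons hs hx; omega


def PPred (k J i j l n : ℕ) (b : List ℕ) : Prop :=
  IsTypePartition k J i n b ∧ (∀ x ∈ b, x ≤ 2 * j) ∧ b.count (2 * j) = l - 1

lemma struct {k J i j l n : ℕ} {b : List ℕ} (hb : IsTypePartition k J i n b)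
    (hble : ∀ x ∈ b, x ≤ 2 * (j + 1)) (hcnt : b.count (2 * (j + 1)) = l - 1) :
    ∃ rest, b = replicate (l - 1) (2 * (j + 1)) ++
        (replicate (b.count (2 * j + 1)) (2 * j + 1) ++ rest) ∧
      (∀ x ∈ rest, x ≤ 2 * j) ∧ b.count (2 * j + 1) ≤ 1 := by
  obtain ⟨hs, hpos, hsum, hodd, hgap, hbig, hc⟩ := hb
  obtain ⟨r1, hb1, hr1⟩ := sorted_decomp hs hble
  rw [hcnt] at hb1
  have hr1s : r1.Pairwise (· ≥ ·) := by
    rw [hb1] at hs; exact (List.pairwise_append.mp hs).2.1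
  have hr1le : ∀ x ∈ r1, x ≤ 2 * j + 1 := fun x hx => by have := hr1 x hx; omega
  obtain ⟨rest, hr2, hrest⟩ := sorted_decomp hr1s hr1le
  have hcount : b.count (2 * j + 1) = r1.count (2 * j + 1) := by
    rw [hb1, List.count_append, count_repl_ne (by omega)]
    omega
  refine ⟨rest, ?_, fun x hx => by have := hrest x hx; omega, ?_⟩
  · rw [hcount, ← hr2]; exact hb1
  · exact hodd (2 * j + 1) ⟨j, by ring⟩

set_option maxHeartbeats 1000000 in
lemma fwd {k J i j l n ε : ℕ} (hk : 2 ≤ k) (hi1 : 1 ≤ i) (hik : i ≤ k) (hj : J + 1 ≤ j)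
    (hl1 : 1 ≤ l) (hlk : l ≤ k) {b : List ℕ}
    (hb : PPred k J i (j + 1) l n b) (hε : b.count (2 * j + 1) = ε) :
    b = replicate (l - 1) (2 * (j + 1)) ++
        (replicate ε (2 * j + 1) ++ b.drop ((l - 1) + ε)) ∧
    (∀ x ∈ b.drop ((l - 1) + ε), x ≤ 2 * j) ∧ ε ≤ 1 ∧
    IsTypePartition k J i (n - (2 * (j + 1) * (l - 1) + ε * (2 * j + 1))) (b.drop ((l - 1) + ε)) ∧
    2 * (j + 1) * (l - 1) + ε * (2 * j + 1) ≤ n ∧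
    (b.drop ((l - 1) + ε)).count (2 * j) + 1 ∈ Finset.Icc 1 (k - l + 1 - ε) := by
  obtain ⟨hty, hle, hcnt2⟩ := hb
  obtain ⟨rest, hb1, hrle, hε1⟩ := struct hty hle hcnt2
  rw [hε] at hb1 hε1
  have hdrop : b.drop ((l - 1) + ε) = rest := by
    conv_lhs => rw [hb1, ← List.append_assoc]
    exact List.drop_left' (by simp)
  rw [hdrop]
  obtain ⟨hs, hpos, hsum, hodd, hgap, hbig, hc⟩ := hty
  have hsub : ∀ x ∈ rest, x ∈ b := fun x hx => by rw [hb1]; simp [hx]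
  have hs' : rest.Pairwise (· ≥ ·) := by
    rw [hb1] at hs; exact (List.pairwise_append.mp ((List.pairwise_append.mp hs).2.1)).2.1
  have hn : n = 2 * (j + 1) * (l - 1) + ε * (2 * j + 1) + rest.sum := by
    rw [← hsum, hb1]
    simp only [List.sum_append, List.sum_replicate, smul_eq_mul]
    ring
  have hcle : 2 * (j + 1) * (l - 1) + ε * (2 * j + 1) ≤ n := by
    rw [hn]; exact Nat.le_add_right _ _
  have hsum' : rest.sum = n - (2 * (j + 1) * (l - 1) + ε * (2 * j + 1)) := by
    rw [hn, Nat.add_sub_cancel_left]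
  have hcntle : ∀ x : ℕ, rest.count x ≤ b.count x := fun x => by
    rw [hb1]; simp only [List.count_append]; omega
  have e1 : b.count (2 * J + 1) = rest.count (2 * J + 1) := by
    rw [hb1, List.count_append, List.count_append, count_repl_ne (by omega),
      count_repl_ne (by omega)]
    omega
  have e2 : b.count (2 * J + 2) = rest.count (2 * J + 2) := by
    rw [hb1, List.count_append, List.count_append, count_repl_ne (by omega),
      count_repl_ne (by omega)]
    omega
  refine ⟨hb1, hrle, hε1, ⟨hs', fun x hx => hpos x (hsub x hx), hsum',
    fun x hox => le_trans (hcntle x) (hodd x hox), ?_, fun x hx => hbig x (hsub x hx), ?_⟩,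
    hcle, ?_⟩
  · rw [hb1, ← List.append_assoc] at hgap
    exact gap_suffix hgap
  · omega
  · rcases Nat.lt_or_ge ((l - 1) + ε + rest.count (2 * j)) k with hlt | hge
    · exact Finset.mem_Icc.mpr ⟨by omega, by omega⟩
    · exfalso
      obtain ⟨r2, hr2, hr2lt⟩ := sorted_decomp hs' hrle
      have hblen : (l - 1) + ε + rest.count (2 * j) ≤ b.length := by
        rw [hb1]
        simp only [List.length_append, List.length_replicate]
        have := List.count_le_length (a := 2 * j) (l := rest)
        omega
      have hgetD : 2 * j ≤ b.getD ((l - 1) + ε + rest.count (2 * j) - 1) 0 := by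
        have hb2 : b = replicate (l - 1) (2 * (j + 1)) ++ (replicate ε (2 * j + 1) ++
            (replicate (rest.count (2 * j)) (2 * j) ++ r2)) := by
          conv_lhs => rw [hb1, hr2]
        rw [hb2, getD_tri (by omega)]
        split_ifs <;> omega
      have hb0 : b.getD 0 0 ∈ b := by
        rw [List.getD_eq_getElem _ _ (by omega)]
        exact List.getElem_mem _
      exact gap_absurd hs hgap hk hge hblen hgetD (by have := hle _ hb0; omega)

set_option maxHeartbeats 1000000 in
lemma bwd {k J i j l n' ε : ℕ} (hk : 2 ≤ k) (hi1 : 1 ≤ i) (hik : i ≤ k) (hj : J + 1 ≤ j)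
    (hl1 : 1 ≤ l) (hlk : l ≤ k) (hε : ε ≤ 1) {rest : List ℕ}
    (hty : IsTypePartition k J i n' rest) (hrle : ∀ x ∈ rest, x ≤ 2 * j)
    (hm : rest.count (2 * j) + 1 ∈ Finset.Icc 1 (k - l + 1 - ε)) :
    PPred k J i (j + 1) l (n' + (2 * (j + 1) * (l - 1) + ε * (2 * j + 1)))
      (replicate (l - 1) (2 * (j + 1)) ++ (replicate ε (2 * j + 1) ++ rest)) ∧
    (replicate (l - 1) (2 * (j + 1)) ++
      (replicate ε (2 * j + 1) ++ rest)).count (2 * j + 1) = ε := by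
  obtain ⟨hs, hpos, hsum, hodd, hgap, hbig, hc⟩ := hty
  set b := replicate (l - 1) (2 * (j + 1)) ++ (replicate ε (2 * j + 1) ++ rest) with hb
  have hmm := Finset.mem_Icc.mp hm
  have hbound : (l - 1) + ε + rest.count (2 * j) ≤ k - 1 := by omega
  have hc1 : rest.count (2 * j + 1) = 0 :=
    List.count_eq_zero_of_not_mem (fun hmem => by have := hrle _ hmem; omega)
  have hc2 : rest.count (2 * (j + 1)) = 0 :=
    List.count_eq_zero_of_not_mem (fun hmem => by have := hrle _ hmem; omega)
  have hcount1 : b.count (2 * j + 1) = ε := by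
    rw [hb, List.count_append, List.count_append, count_repl_ne (by omega),
      count_repl_eq, hc1]
    omega
  have hmemb : ∀ x ∈ b, x = 2 * (j + 1) ∨ x = 2 * j + 1 ∨ x ∈ rest := by
    intro x hx
    rw [hb] at hx
    rcases List.mem_append.mp hx with h | h
    · exact Or.inl (List.eq_of_mem_replicate h)
    · rcases List.mem_append.mp h with h | h
      · exact Or.inr (Or.inl (List.eq_of_mem_replicate h))
      · exact Or.inr (Or.inr h)
  have hsorted : b.Pairwise (· ≥ ·) := by
    rw [hb]
    refine List.pairwise_append.mpr ⟨?_, List.pairwise_append.mpr ⟨?_, hs, ?_⟩, ?_⟩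
    · exact List.pairwise_replicate.mpr (Or.inr le_rfl)
    · exact List.pairwise_replicate.mpr (Or.inr le_rfl)
    · intro x hx y hy
      have hx' := List.eq_of_mem_replicate hx
      have := hrle y hy
      subst hx'; omega
    · intro x hx y hy
      have hx' := List.eq_of_mem_replicate hx
      rcases List.mem_append.mp hy with hy | hy
      · have := List.eq_of_mem_replicate hy; subst hx'; omega
      · have := hrle y hy; subst hx'; omega
  have hlen : b.length = (l - 1) + ε + rest.length := by
    rw [hb]; simp only [List.length_append, List.length_replicate]; omega
  obtain ⟨r2, hr2, hr2lt⟩ := sorted_decomp hs hrle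
  have hgap' : Gap k b := by
    intro p hp
    have eq2 : b.getD (p + (k - 1)) 0 = rest.getD (p + (k - 1) - ((l - 1) + ε)) 0 := by
      rw [hb, ← List.append_assoc,
        List.getD_append_right _ _ _ _ (by simp; omega)]
      congr 1
      simp only [List.length_append, List.length_replicate]
    rcases Nat.lt_or_ge p ((l - 1) + ε) with hps | hps
    · have hvp : b.getD p 0 = if p < l - 1 then 2 * (j + 1) else 2 * j + 1 := by
        rw [hb]; exact getD_two (by omega)
      have hidx : rest.count (2 * j) ≤ p + (k - 1) - ((l - 1) + ε) := by omega
      have hlt2 : p + (k - 1) - ((l - 1) + ε) < rest.length := by rw [hlen] at hp; omega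
      have hvq : b.getD (p + (k - 1)) 0 < 2 * j := by
        rw [eq2]
        conv_lhs => rw [hr2]
        rw [List.getD_append_right _ _ _ _ (by simpa using hidx)]
        have hltr2 : p + (k - 1) - ((l - 1) + ε) - (replicate (rest.count (2 * j)) (2 * j)).length
            < r2.length := by
          simp only [List.length_replicate]
          have : rest.length = rest.count (2 * j) + r2.length := by
            conv_lhs => rw [hr2]
            simp
          omega
        refine hr2lt _ ?_
        rw [List.getD_eq_getElem _ _ hltr2]
        exact List.getElem_mem _
      by_cases hpl : p < l - 1
      · rw [hvp, if_pos hpl]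
        constructor
        · intro hoddp
          rw [Nat.odd_iff] at hoddp
          omega
        · intro _; omega
      · rw [hvp, if_neg hpl]
        constructor
        · intro _; omega
        · intro hev
          rw [Nat.even_iff] at hev
          omega
    · have ep : b.getD p 0 = rest.getD (p - ((l - 1) + ε)) 0 := by
        rw [hb, ← List.append_assoc,
          List.getD_append_right _ _ _ _ (by simp; omega)]
        congr 1
        simp only [List.length_append, List.length_replicate]
      have hidx : p - ((l - 1) + ε) + (k - 1) < rest.length := by rw [hlen] at hp; omega
      have := hgap (p - ((l - 1) + ε)) hidx
      rw [ep, eq2]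
      have eidx : p + (k - 1) - ((l - 1) + ε) = p - ((l - 1) + ε) + (k - 1) := by omega
      rw [eidx]
      exact this
  refine ⟨⟨⟨hsorted, ?_, ?_, ?_, hgap', ?_, ?_⟩, ?_, ?_⟩, hcount1⟩
  · intro x hx
    rcases hmemb x hx with rfl | rfl | h
    · omega
    · omega
    · exact hpos x h
  · rw [hb]
    simp only [List.sum_append, List.sum_replicate, smul_eq_mul, hsum]
    ring
  · intro x hox
    have hox' := Nat.odd_iff.mp hox
    rw [hb, List.count_append, List.count_append, count_repl_ne (by omega)]
    by_cases hx : x = 2 * j + 1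
    · subst hx
      rw [count_repl_eq, hc1]
      omega
    · rw [count_repl_ne (fun h => hx h.symm)]
      have := hodd x hox
      omega
  · intro x hx
    rcases hmemb x hx with rfl | rfl | h
    · omega
    · omega
    · exact hbig x h
  · rw [hb, List.count_append, List.count_append, List.count_append, List.count_append,
      count_repl_ne (by omega), count_repl_ne (by omega), count_repl_ne (by omega),
      count_repl_ne (by omega)]
    omega
  · intro x hx
    rcases hmemb x hx with rfl | rfl | h
    · omega
    · omega
    · have := hrle x h; omega
  · rw [hb, List.count_append, List.count_append, count_repl_eq,
      count_repl_ne (by omega), hc2]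
    omega


lemma finite_aux {n : ℕ} {Q : List ℕ → Prop}
    (hQ : ∀ b, Q b → b.Pairwise (· ≥ ·) ∧ (∀ x ∈ b, 0 < x) ∧ b.sum = n) :
    Finite {b : List ℕ // Q b} := by
  have hanti : IsAntisymm ℕ (· ≥ ·) := ⟨fun a b h1 h2 => le_antisymm h2 h1⟩
  refine Finite.of_injective (fun b => (⟨(b.1 : Multiset ℕ),
      fun hi => (hQ b.1 b.2).2.1 _ hi, by simpa using (hQ b.1 b.2).2.2⟩ : Nat.Partition n)) ?_
  intro b c hbc
  have : (b.1 : Multiset ℕ) = (c.1 : Multiset ℕ) := congrArg Nat.Partition.parts hbc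
  exact Subtype.ext ((Multiset.coe_eq_coe.mp this).eq_of_pairwise
    (fun _ _ _ _ h1 h2 => le_antisymm h2 h1) (hQ b.1 b.2).1 (hQ c.1 c.2).1)

lemma nat_card_sigma {ι : Type*} [Fintype ι] (f : ι → Type*) [∀ i, Finite (f i)] :
    Nat.card (Σ i, f i) = ∑ i, Nat.card (f i) := by
  classical
  letI : ∀ i, Fintype (f i) := fun i => Fintype.ofFinite (f i)
  rw [Nat.card_eq_fintype_card, Fintype.card_sigma]
  exact Finset.sum_congr rfl fun i _ => (Nat.card_eq_fintype_card).symm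

lemma nat_card_eq_sum_fibers {α : Type*} {P : α → Prop} [hfin : Finite {a // P a}]
    (f : α → ℕ) (s : Finset ℕ) (hf : ∀ a, P a → f a ∈ s) :
    Nat.card {a // P a} = ∑ m ∈ s, Nat.card {a // P a ∧ f a = m} := by
  classical
  have hfib : ∀ m : ℕ, Finite {a // P a ∧ f a = m} := by
    intro m
    exact Finite.of_injective (fun a => (⟨a.1, a.2.1⟩ : {a // P a}))
      (fun x y hxy => by
        apply Subtype.ext
        have := congrArg Subtype.val hxy
        simpa using this)
  have e : {a // P a} ≃ Σ m : s, {a // P a ∧ f a = (m : ℕ)} := by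
    refine ⟨fun a => ⟨⟨f a.1, hf a.1 a.2⟩, ⟨a.1, a.2, rfl⟩⟩, fun x => ⟨x.2.1, x.2.2.1⟩, ?_, ?_⟩
    · intro a; rfl
    · rintro ⟨⟨m, hm⟩, ⟨a, ha, h⟩⟩
      simp only at h
      subst h
      rfl
  rw [Nat.card_congr e, nat_card_sigma]
  rw [← Finset.sum_coe_sort s (fun m => Nat.card {a // P a ∧ f a = m})]



lemma fin_PPred (k J i j l n : ℕ) : Finite {b : List ℕ // PPred k J i j l n b} :=
  finite_aux (fun b hb => ⟨hb.1.1, hb.1.2.1, hb.1.2.2.1⟩)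

lemma fin_piece (k J i j l n ε : ℕ) :
    Finite {b : List ℕ // PPred k J i j l n b ∧ b.count (2 * j - 1) = ε} :=
  finite_aux (fun b hb => ⟨hb.1.1.1, hb.1.1.2.1, hb.1.1.2.2.1⟩)

set_option maxHeartbeats 1000000 in
lemma card_piece {k J i j l : ℕ} (hk : 2 ≤ k) (hi1 : 1 ≤ i) (hik : i ≤ k) (hj : J + 1 ≤ j)
    (hl1 : 1 ≤ l) (hlk : l ≤ k) {ε : ℕ} (hε : ε ≤ 1) (n : ℕ) :
    Nat.card {b : List ℕ // PPred k J i (j + 1) l n b ∧ b.count (2 * j + 1) = ε} =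
      if 2 * (j + 1) * (l - 1) + ε * (2 * j + 1) ≤ n then
        ∑ m ∈ Finset.Icc 1 (k - l + 1 - ε),
          Nat.card {b : List ℕ // PPred k J i j m
            (n - (2 * (j + 1) * (l - 1) + ε * (2 * j + 1))) b}
      else 0 := by
  classical
  by_cases hcn : 2 * (j + 1) * (l - 1) + ε * (2 * j + 1) ≤ n
  · rw [if_pos hcn]
    set Q : List ℕ → Prop := fun rest =>
      IsTypePartition k J i (n - (2 * (j + 1) * (l - 1) + ε * (2 * j + 1))) rest ∧
      (∀ x ∈ rest, x ≤ 2 * j) ∧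
      rest.count (2 * j) + 1 ∈ Finset.Icc 1 (k - l + 1 - ε) with hQ
    have e : {b : List ℕ // PPred k J i (j + 1) l n b ∧ b.count (2 * j + 1) = ε} ≃
        {rest : List ℕ // Q rest} := by
      refine ⟨fun b => ⟨b.1.drop ((l - 1) + ε), ?_⟩, fun r =>
        ⟨replicate (l - 1) (2 * (j + 1)) ++ (replicate ε (2 * j + 1) ++ r.1), ?_⟩, ?_, ?_⟩
      · obtain ⟨h1, h2, h3, h4, h5, h6⟩ := fwd hk hi1 hik hj hl1 hlk b.2.1 b.2.2
        exact ⟨h4, h2, h6⟩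
      · have := bwd hk hi1 hik hj hl1 hlk hε r.2.1 r.2.2.1 r.2.2.2
        rwa [Nat.sub_add_cancel hcn] at this
      · intro b
        apply Subtype.ext
        exact (fwd hk hi1 hik hj hl1 hlk b.2.1 b.2.2).1.symm
      · intro r
        apply Subtype.ext
        show (replicate (l - 1) (2 * (j + 1)) ++ (replicate ε (2 * j + 1) ++ r.1)).drop
          ((l - 1) + ε) = r.1
        rw [← List.append_assoc]
        exact List.drop_left' (by simp)
    rw [Nat.card_congr e]
    haveI : Finite {rest : List ℕ // Q rest} :=
      finite_aux (fun b hb => ⟨hb.1.1, hb.1.2.1, hb.1.2.2.1⟩)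
    rw [nat_card_eq_sum_fibers (fun rest => rest.count (2 * j) + 1)
      (Finset.Icc 1 (k - l + 1 - ε)) (fun rest hr => hr.2.2)]
    refine Finset.sum_congr rfl fun m hm => ?_
    have hm1 : 1 ≤ m := (Finset.mem_Icc.mp hm).1
    refine Nat.card_congr (Equiv.subtypeEquivRight fun rest => ?_)
    constructor
    · rintro ⟨⟨hr1, hr2, _⟩, hr4⟩
      exact ⟨hr1, hr2, by omega⟩
    · rintro ⟨hr1, hr2, hr3⟩
      have hcm : rest.count (2 * j) + 1 = m := by omega
      exact ⟨⟨hr1, hr2, by rw [hcm]; exact hm⟩, hcm⟩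
  · rw [if_neg hcn]
    haveI : IsEmpty {b : List ℕ // PPred k J i (j + 1) l n b ∧ b.count (2 * j + 1) = ε} := by
      refine ⟨fun b => ?_⟩
      have := (fwd hk hi1 hik hj hl1 hlk b.2.1 b.2.2).2.2.2.2.1
      exact hcn this
    exact Nat.card_of_isEmpty

lemma card_split {k J i j l : ℕ} (n : ℕ) :
    Nat.card {b : List ℕ // PPred k J i (j + 1) l n b} =
      Nat.card {b : List ℕ // PPred k J i (j + 1) l n b ∧ b.count (2 * j + 1) = 0} +
      Nat.card {b : List ℕ // PPred k J i (j + 1) l n b ∧ b.count (2 * j + 1) = 1} := by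
  classical
  haveI h0 : Finite {b : List ℕ // PPred k J i (j + 1) l n b ∧ b.count (2 * j + 1) = 0} :=
    finite_aux (fun b hb => ⟨hb.1.1.1, hb.1.1.2.1, hb.1.1.2.2.1⟩)
  haveI h1 : Finite {b : List ℕ // PPred k J i (j + 1) l n b ∧ b.count (2 * j + 1) = 1} :=
    finite_aux (fun b hb => ⟨hb.1.1.1, hb.1.1.2.1, hb.1.1.2.2.1⟩)
  have e : {b : List ℕ // PPred k J i (j + 1) l n b} ≃
      {b : List ℕ // PPred k J i (j + 1) l n b ∧ b.count (2 * j + 1) = 0} ⊕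
      {b : List ℕ // PPred k J i (j + 1) l n b ∧ b.count (2 * j + 1) = 1} := by
    refine ⟨fun b => if h : b.1.count (2 * j + 1) = 0 then .inl ⟨b.1, b.2, h⟩ else
        .inr ⟨b.1, b.2, ?_⟩,
      fun x => x.elim (fun y => ⟨y.1, y.2.1⟩) (fun y => ⟨y.1, y.2.1⟩), ?_, ?_⟩
    · have := b.2.1.2.2.2.1 (2 * j + 1) ⟨j, by ring⟩
      omega
    · intro b
      by_cases h : b.1.count (2 * j + 1) = 0 <;> simp [h]
    · rintro (x | x)
      · simp [x.2.2]
      · have : ¬ x.1.count (2 * j + 1) = 0 := by rw [x.2.2]; omega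
        simp [this]
  rw [Nat.card_congr e, Nat.card_sum]

lemma count_repl_eq' {v a c : ℕ} (h : v = a) : (replicate c v).count a = c := by
  subst h; exact count_repl_eq v c

set_option maxHeartbeats 1000000 in
lemma card_base_piece {k J i l : ℕ} (hk : 2 ≤ k) (hi1 : 1 ≤ i) (hik : i ≤ k)
    (hl1 : 1 ≤ l) (hlk : l ≤ k) {ε : ℕ} (hε : ε ≤ 1) (n : ℕ) :
    Nat.card {b : List ℕ // PPred k J i (J + 1) l n b ∧ b.count (2 * J + 1) = ε} =
      if n = 2 * (J + 1) * (l - 1) + ε * (2 * J + 1) ∧ (l - 1) + ε ≤ k - i then 1 else 0 := by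
  classical
  set b0 : List ℕ := replicate (l - 1) (2 * (J + 1)) ++ replicate ε (2 * J + 1) with hb0
  have hmem : ∀ b : List ℕ, PPred k J i (J + 1) l n b ∧ b.count (2 * J + 1) = ε →
      b = b0 ∧ n = 2 * (J + 1) * (l - 1) + ε * (2 * J + 1) ∧ (l - 1) + ε ≤ k - i := by
    rintro b ⟨⟨hty, hle, hcnt⟩, hcnt1⟩
    obtain ⟨rest, hb1, hrle, _⟩ := struct hty hle hcnt
    rw [hcnt1] at hb1
    have hrestnil : rest = [] := by
      rcases rest with _ | ⟨a, t⟩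
      · rfl
      · exfalso
        have hmem : a ∈ b := by rw [hb1]; simp
        have := hty.2.2.2.2.2.1 a hmem
        have := hrle a (by simp)
        omega
    subst hrestnil
    rw [List.append_nil] at hb1
    obtain ⟨hs, hpos, hsum, hodd, hgap, hbig, hc⟩ := hty
    refine ⟨hb1, ?_, ?_⟩
    · rw [← hsum, hb1]
      simp only [List.sum_append, List.sum_replicate, smul_eq_mul]
      ring
    · have h1 : b.count (2 * J + 1) = ε := hcnt1
      have h2 : b.count (2 * J + 2) = l - 1 := by
        rw [hb1, List.count_append, count_repl_eq' (by omega), count_repl_ne (by omega)]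
        omega
      omega
  have hmem2 : (n = 2 * (J + 1) * (l - 1) + ε * (2 * J + 1) ∧ (l - 1) + ε ≤ k - i) →
      PPred k J i (J + 1) l n b0 ∧ b0.count (2 * J + 1) = ε := by
    rintro ⟨hn, hcond⟩
    have hlen0 : b0.length = (l - 1) + ε := by simp [hb0]
    have hcount1 : b0.count (2 * J + 1) = ε := by
      rw [hb0, List.count_append, count_repl_ne (by omega), count_repl_eq]
      omega
    have hcount2 : b0.count (2 * (J + 1)) = l - 1 := by
      rw [hb0, List.count_append, count_repl_eq, count_repl_ne (by omega)]
      omega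
    have hmemb : ∀ x ∈ b0, x = 2 * (J + 1) ∨ x = 2 * J + 1 := by
      intro x hx
      rw [hb0] at hx
      rcases List.mem_append.mp hx with h | h
      · exact Or.inl (List.eq_of_mem_replicate h)
      · exact Or.inr (List.eq_of_mem_replicate h)
    refine ⟨⟨⟨?_, ?_, ?_, ?_, ?_, ?_, ?_⟩, ?_, hcount2⟩, hcount1⟩
    · rw [hb0]
      refine List.pairwise_append.mpr ⟨?_, ?_, ?_⟩
      · exact List.pairwise_replicate.mpr (Or.inr le_rfl)
      · exact List.pairwise_replicate.mpr (Or.inr le_rfl)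
      · intro x hx y hy
        have := List.eq_of_mem_replicate hx
        have := List.eq_of_mem_replicate hy
        omega
    · intro x hx; rcases hmemb x hx with rfl | rfl <;> omega
    · rw [hb0]
      simp only [List.sum_append, List.sum_replicate, smul_eq_mul]
      rw [hn]; ring
    · intro x hox
      have hox' := Nat.odd_iff.mp hox
      rw [hb0, List.count_append, count_repl_ne (by omega)]
      by_cases hx : x = 2 * J + 1
      · subst hx; rw [count_repl_eq]; omega
      · rw [count_repl_ne (fun h => hx h.symm)]; omega
    · intro p hp
      rw [hlen0] at hp
      exfalso
      omega
    · intro x hx; rcases hmemb x hx with rfl | rfl <;> omega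
    · have h2 : b0.count (2 * J + 2) = l - 1 := by
        rw [hb0, List.count_append, count_repl_eq' (by omega), count_repl_ne (by omega)]
        omega
      omega
    · intro x hx; rcases hmemb x hx with rfl | rfl <;> omega
  by_cases hcond : n = 2 * (J + 1) * (l - 1) + ε * (2 * J + 1) ∧ (l - 1) + ε ≤ k - i
  · rw [if_pos hcond]
    rw [Nat.card_eq_one_iff_unique]
    refine ⟨⟨fun x y => Subtype.ext (((hmem x.1 x.2).1).trans ((hmem y.1 y.2).1).symm)⟩,
      ⟨⟨b0, hmem2 hcond⟩⟩⟩
  · rw [if_neg hcond]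
    haveI : IsEmpty {b : List ℕ // PPred k J i (J + 1) l n b ∧ b.count (2 * J + 1) = ε} := by
      refine ⟨fun b => ?_⟩
      obtain ⟨_, h2, h3⟩ := hmem b.1 b.2
      exact hcond ⟨h2, h3⟩
    exact Nat.card_of_isEmpty

theorem h_combinatorial_interpretation' (k J : ℕ) (hk : 2 ≤ k)
    (h : ℕ → ℕ → ℕ → Polynomial ℤ)
    (hsys : (∀ i l, 1 ≤ i → i ≤ k → 1 ≤ l → l ≤ k →
        h J i l = if i = l then 1 else 0) ∧
      (∀ j i l, J < j → 1 ≤ i → i ≤ k → 1 ≤ l → l ≤ k →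
        h j i l = X ^ (2 * j * (l - 1)) * ∑ m ∈ Finset.Icc 1 (k - l + 1), h (j - 1) i m
          + X ^ (2 * j * l - 1) * ∑ m ∈ Finset.Icc 1 (k - l), h (j - 1) i m)) :
    ∀ j, J + 1 ≤ j → ∀ i l, 1 ≤ i → i ≤ k → 1 ≤ l → l ≤ k → ∀ n,
      (h j i l).coeff n = (Nat.card {b : List ℕ // PPred k J i j l n b} : ℤ) := by
  intro j hj
  induction j, hj using Nat.le_induction with
  | base =>
    intro i l hi1 hik hl1 hlk n
    have hrec := hsys.2 (J + 1) i l (by omega) hi1 hik hl1 hlk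
    rw [Nat.add_sub_cancel] at hrec
    have hs1 : ∑ m ∈ Finset.Icc 1 (k - l + 1), h J i m =
        if i ∈ Finset.Icc 1 (k - l + 1) then 1 else 0 := by
      rw [Finset.sum_congr rfl (fun m hm => hsys.1 i m hi1 hik (Finset.mem_Icc.mp hm).1
        (by have := (Finset.mem_Icc.mp hm).2; omega))]
      exact Finset.sum_ite_eq _ _ _
    have hs2 : ∑ m ∈ Finset.Icc 1 (k - l), h J i m =
        if i ∈ Finset.Icc 1 (k - l) then 1 else 0 := by
      rw [Finset.sum_congr rfl (fun m hm => hsys.1 i m hi1 hik (Finset.mem_Icc.mp hm).1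
        (by have := (Finset.mem_Icc.mp hm).2; omega))]
      exact Finset.sum_ite_eq _ _ _
    have hcard := card_split (k := k) (J := J) (i := i) (j := J) (l := l) n
    rw [card_base_piece hk hi1 hik hl1 hlk (by omega : (0:ℕ) ≤ 1) n,
      card_base_piece hk hi1 hik hl1 hlk (le_refl 1) n] at hcard
    have keyB : 2 * (J + 1) * l - 1 = 2 * (J + 1) * (l - 1) + 1 * (2 * J + 1) := by
      obtain ⟨l', rfl⟩ : ∃ l', l = l' + 1 := ⟨l - 1, by omega⟩
      have hX : 2 * (J + 1) * (l' + 1) = 2 * (J + 1) * ((l' + 1) - 1) + 1 * (2 * J + 1) + 1 := by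
        simp only [Nat.add_sub_cancel]
        ring
      rw [hX, Nat.add_sub_cancel]
    rw [hcard, hrec, hs1, hs2, keyB]
    set c0 := 2 * (J + 1) * (l - 1) with hc0
    simp only [zero_mul, add_zero, one_mul, Finset.mem_Icc, coeff_add]
    have hio1 : (1 ≤ i ∧ i ≤ k - l + 1) ↔ (l - 1 ≤ k - i) := by omega
    have hio2 : (1 ≤ i ∧ i ≤ k - l) ↔ (l - 1 + 1 ≤ k - i) := by omega
    simp only [hio1, hio2]
    have f : ∀ (a : ℕ) (C : Prop) [Decidable C],
        ((X : ℤ[X]) ^ a * if C then 1 else 0).coeff n = if n = a ∧ C then 1 else 0 := by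
      intro a C dc
      by_cases hC : C
      · rw [if_pos hC, mul_one, Polynomial.coeff_X_pow]
        by_cases hn : n = a
        · rw [if_pos hn, if_pos ⟨hn, hC⟩]
        · rw [if_neg hn, if_neg (fun hh => hn hh.1)]
      · rw [if_neg hC, mul_zero, Polynomial.coeff_zero, if_neg (fun hh => hC hh.2)]
    rw [f, f]
    push_cast
    rfl
  | succ j hj IH =>
    intro i l hi1 hik hl1 hlk n
    have hrec := hsys.2 (j + 1) i l (by omega) hi1 hik hl1 hlk
    rw [Nat.add_sub_cancel] at hrec
    have hcard := card_split (k := k) (J := J) (i := i) (j := j) (l := l) n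
    rw [card_piece hk hi1 hik hj hl1 hlk (by omega : (0:ℕ) ≤ 1) n,
      card_piece hk hi1 hik hj hl1 hlk (le_refl 1) n] at hcard
    have keyB : 2 * (j + 1) * l - 1 = 2 * (j + 1) * (l - 1) + 1 * (2 * j + 1) := by
      obtain ⟨l', rfl⟩ : ∃ l', l = l' + 1 := ⟨l - 1, by omega⟩
      have hX : 2 * (j + 1) * (l' + 1) = 2 * (j + 1) * ((l' + 1) - 1) + 1 * (2 * j + 1) + 1 := by
        simp only [Nat.add_sub_cancel]
        ring
      rw [hX, Nat.add_sub_cancel]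
    have e1 : (X ^ (2 * (j + 1) * (l - 1)) * ∑ m ∈ Finset.Icc 1 (k - l + 1), h j i m).coeff n
        = if 2 * (j + 1) * (l - 1) ≤ n then
            ((∑ m ∈ Finset.Icc 1 (k - l + 1), Nat.card {b : List ℕ //
              PPred k J i j m (n - 2 * (j + 1) * (l - 1)) b} : ℕ) : ℤ) else 0 := by
      rw [mul_comm, Polynomial.coeff_mul_X_pow']
      split_ifs with hA
      · rw [Polynomial.finset_sum_coeff]
        push_cast
        refine Finset.sum_congr rfl fun m hm => ?_
        have hmm := Finset.mem_Icc.mp hm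
        exact IH i m hi1 hik hmm.1 (by omega) _
      · rfl
    have e2 : (X ^ (2 * (j + 1) * l - 1) * ∑ m ∈ Finset.Icc 1 (k - l), h j i m).coeff n
        = if 2 * (j + 1) * l - 1 ≤ n then
            ((∑ m ∈ Finset.Icc 1 (k - l), Nat.card {b : List ℕ //
              PPred k J i j m (n - (2 * (j + 1) * l - 1)) b} : ℕ) : ℤ) else 0 := by
      rw [mul_comm, Polynomial.coeff_mul_X_pow']
      split_ifs with hA
      · rw [Polynomial.finset_sum_coeff]
        push_cast
        refine Finset.sum_congr rfl fun m hm => ?_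
        have hmm := Finset.mem_Icc.mp hm
        exact IH i m hi1 hik hmm.1 (by omega) _
      · rfl
    rw [hcard, hrec, coeff_add, e1, e2, keyB]
    have hkl : k - l + 1 - 1 = k - l := by omega
    simp only [zero_mul, add_zero, one_mul, Nat.sub_zero, hkl]
    push_cast
    rfl

end GGAux

/-- Combinatorial interpretation of the polynomials `h^{(j)}_{i,l}(q)`: for
`j ≥ J+1`, the coefficient of `q^n` in `h^{(j)}_{i,l}(q)` counts the partitions
of `n` of type `(k-1, 2J, k-i)` with largest part at most `2j` and exactly
`l-1` parts equal to `2j`. -/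
theorem h_combinatorial_interpretation (k J : ℕ) (hk : 2 ≤ k)
    (h : ℕ → ℕ → ℕ → Polynomial ℤ) (hsys : IsHSystem k J h) :
    ∀ j i l, J + 1 ≤ j → 1 ≤ i → i ≤ k → 1 ≤ l → l ≤ k → ∀ n,
      (h j i l).coeff n =
        (Nat.card {b : List ℕ // IsTypePartition k J i n b ∧
          (∀ x ∈ b, x ≤ 2 * j) ∧ b.count (2 * j) = l - 1} : ℤ) := by
  intro j i l hj hi1 hik hl1 hlk n
  exact GGAux.h_combinatorial_interpretation' k J hk h hsys j hj i l hi1 hik hl1 hlk n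
end

section
/- Fix k ≥ 2, J ≥ 0, and 1 ≤ i ≤ k, and define h^{(j)}_{i,l}(q) by h^{(J)}_{i,l} = δ_{i,l} and the recursion h^{(j)}_{i,l}(q) = q^{2j(l-1)} ∑_{m=1}^{k-l+1} h^{(j-1)}_{i,m}(q) + q^{2jl-1} ∑_{m=1}^{k-l} h^{(j-1)}_{i,m}(q). Then for each l ≥ 2 and each fixed exponent t ≥ 0, the coefficient of q^t in h^{(j)}_{i,l}(q) is 0 for all sufficiently large j; and for l = 1, the coefficient of q^t in h^{(j)}_{i,1}(q) stabilizes as j → ∞, with limiting series h^{(∞)}_{i,1}(q) ∈ ℤ[[q]] equal to the generating function for partitions with no repeated odd parts, difference ≥ 2 at distance k−1 from odd parts and > 2 from even parts (i.e., b_p − b_{p+k-1} ≥ 2 if b_p odd and > 2 if b_p even), smallest part > 2J, and at most k−i parts equal to 2J+1 or 2J+2. -/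
open Polynomial

namespace HAux


/-- adjusted multiplicity: the value `2J` carries a virtual multiplicity `i-1`. -/
def mcnt (J i : ℕ) (b : Multiset ℕ) (x : ℕ) : ℕ :=
  (if x = 2*J then i - 1 else 0) + b.count x

/-- the invariant satisfied by the partitions counted by `h j i l`. -/
def QQ (k J i j l : ℕ) (b : Multiset ℕ) : Prop :=
  (∀ x ∈ b, 2*J < x ∧ x ≤ 2*j) ∧ mcnt J i b (2*j) + 1 = l ∧
  (∀ x, Odd x → b.count x ≤ 1) ∧
  (∀ m, 1 ≤ m → mcnt J i b (2*m-2) + mcnt J i b (2*m-1) + mcnt J i b (2*m) + 1 ≤ k)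

noncomputable def S (k J i j l : ℕ) : Finset (Multiset ℕ) :=
  letI := Classical.decPred (QQ k J i j l)
  (((Finset.Icc 1 (2*j)).val.bind (fun x => Multiset.replicate k x)).powerset.toFinset).filter
    (QQ k J i j l)

lemma count_master (k j x : ℕ) :
    Multiset.count x ((Finset.Icc 1 (2*j)).val.bind (fun y => Multiset.replicate k y))
      = if x ∈ Finset.Icc 1 (2*j) then k else 0 := by
  classical
  rw [Multiset.count_bind]
  rcases em (x ∈ Finset.Icc 1 (2*j)) with hx | hx
  · rw [if_pos hx]
    calc (Multiset.map (fun b => Multiset.count x (Multiset.replicate k b)) (Finset.Icc 1 (2*j)).val).sum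
        = ∑ b ∈ Finset.Icc 1 (2*j), Multiset.count x (Multiset.replicate k b) := rfl
      _ = ∑ b ∈ Finset.Icc 1 (2*j), if b = x then k else 0 := by
          simp [Multiset.count_replicate]
      _ = k := by rw [Finset.sum_ite_eq' (Finset.Icc 1 (2*j)) x (fun _ => k), if_pos hx]
  · rw [if_neg hx]
    calc (Multiset.map (fun b => Multiset.count x (Multiset.replicate k b)) (Finset.Icc 1 (2*j)).val).sum
        = ∑ b ∈ Finset.Icc 1 (2*j), if b = x then k else 0 := by
          simp [Multiset.count_replicate]
      _ = 0 := by rw [Finset.sum_ite_eq' (Finset.Icc 1 (2*j)) x (fun _ => k), if_neg hx]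

lemma mem_S (k J i j l : ℕ) (hk : 1 ≤ k) (b : Multiset ℕ) :
    b ∈ S k J i j l ↔ QQ k J i j l b := by
  classical
  unfold S
  rw [Finset.mem_filter]
  constructor
  · exact fun hb => hb.2
  · intro hq
    refine ⟨?_, hq⟩
    rw [Multiset.mem_toFinset, Multiset.mem_powerset, Multiset.le_iff_count]
    intro x
    rw [count_master]
    rcases em (x ∈ Finset.Icc 1 (2*j)) with hx | hx
    · rw [if_pos hx]
      rcases Nat.even_or_odd x with hev | hod
      · -- even: use the window at m = x/2 if x ≥ 2, else x = 0
        rcases Nat.eq_zero_or_pos x with h0 | hp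
        · subst h0
          have : (0:ℕ) ∉ b := fun hm => by have := (hq.1 0 hm).1; omega
          simp [Multiset.count_eq_zero_of_notMem this]
        · obtain ⟨m, hm⟩ := hev
          have hm1 : 1 ≤ m := by omega
          have hw := hq.2.2.2 m hm1
          have : b.count (2*m) ≤ mcnt J i b (2*m) := by unfold mcnt; omega
          have hx2 : 2*m = x := by omega
          rw [hx2] at this hw
          unfold mcnt at hw
          omega
      · exact le_trans (hq.2.2.1 x hod) hk
    · rw [if_neg hx]
      have : x ∉ b := by
        intro hm
        have h1 := (hq.1 x hm).1
        have h2 := (hq.1 x hm).2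
        exact hx (Finset.mem_Icc.2 ⟨by omega, h2⟩)
      simp [Multiset.count_eq_zero_of_notMem this]


lemma QQ_base (k J i l : ℕ) (hi1 : 1 ≤ i) (hik : i ≤ k) (b : Multiset ℕ) :
    QQ k J i J l b ↔ (b = 0 ∧ i = l) := by
  constructor
  · intro hq
    have hb0 : b = 0 := by
      by_contra hne
      obtain ⟨x, hx⟩ := Multiset.exists_mem_of_ne_zero hne
      have := hq.1 x hx; omega
    subst hb0
    have h2 := hq.2.1
    unfold mcnt at h2
    rw [if_pos rfl, Multiset.count_zero] at h2
    exact ⟨rfl, by omega⟩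
  · rintro ⟨rfl, rfl⟩
    refine ⟨by simp, ?_, by simp, ?_⟩
    · unfold mcnt
      rw [if_pos rfl, Multiset.count_zero]
      omega
    · intro m hm
      unfold mcnt
      simp only [Multiset.count_zero, add_zero]
      rcases em (2*m-2 = 2*J) with h1 | h1 <;> rcases em (2*m = 2*J) with h2 | h2 <;>
        [skip; skip; skip; skip] <;>
        rw [if_neg (show ¬(2*m-1 = 2*J) by omega)] <;>
        first
          | (rw [if_pos h1, if_neg (by omega)]; omega)
          | (rw [if_neg h1, if_pos h2]; omega)
          | (rw [if_neg h1, if_neg h2]; omega)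
          | omega

lemma count_join (j l ε : ℕ) (c : Multiset ℕ) (x : ℕ) :
    Multiset.count x (Multiset.replicate (l-1) (2*j+2) + Multiset.replicate ε (2*j+1) + c)
      = (if x = 2*j+2 then l-1 else 0) + (if x = 2*j+1 then ε else 0) + c.count x := by
  rw [Multiset.count_add, Multiset.count_add, Multiset.count_replicate, Multiset.count_replicate]
  have h : ∀ a b : ℕ, ∀ n : ℕ, (if a = b then n else 0) = (if b = a then n else 0) := by
    intro a b n
    rcases em (a = b) with h | h
    · rw [if_pos h, if_pos h.symm]
    · rw [if_neg h, if_neg (fun hh => h hh.symm)]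
  rw [h (2*j+2) x, h (2*j+1) x]

/-- decomposition of a multiset with elements `≤ 2j+2`. -/
lemma join_strip (j : ℕ) (b : Multiset ℕ) (hb : ∀ x ∈ b, x ≤ 2*j+2) :
    Multiset.replicate (b.count (2*j+2)) (2*j+2) + Multiset.replicate (b.count (2*j+1)) (2*j+1)
      + b.filter (· ≤ 2*j) = b := by
  classical
  ext x
  rw [Multiset.count_add, Multiset.count_add, Multiset.count_replicate, Multiset.count_replicate,
    Multiset.count_filter]
  rcases em (x ≤ 2*j) with h | h
  · rw [if_pos h, if_neg (by omega), if_neg (by omega)]; omega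
  · rw [if_neg h]
    rcases em (x = 2*j+1) with h1 | h1
    · subst h1; rw [if_neg (by omega), if_pos rfl]; omega
    · rcases em (x = 2*j+2) with h2 | h2
      · subst h2; rw [if_pos rfl, if_neg (by omega)]; omega
      · have : x ∉ b := fun hm => by have := hb x hm; omega
        rw [if_neg (fun hh : 2*j+2 = x => h2 hh.symm), if_neg (fun hh : 2*j+1 = x => h1 hh.symm)]
        simp [Multiset.count_eq_zero_of_notMem this]

lemma mcnt_low (J i j : ℕ) (b : Multiset ℕ) (x : ℕ) (hx : x ≤ 2*j) :
    mcnt J i (b.filter (· ≤ 2*j)) x = mcnt J i b x := by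
  classical
  unfold mcnt
  rw [Multiset.count_filter, if_pos hx]

lemma QQ_strip (k J i j l : ℕ) (hk : 1 ≤ k) (hJ : J ≤ j) (hl1 : 1 ≤ l)
    (b : Multiset ℕ) (hq : QQ k J i (j+1) l b) :
    QQ k J i j (mcnt J i (b.filter (· ≤ 2*j)) (2*j) + 1) (b.filter (· ≤ 2*j))
    ∧ (mcnt J i (b.filter (· ≤ 2*j)) (2*j) + 1) + b.count (2*j+1) + l ≤ k + 1 := by
  classical
  set c := b.filter (· ≤ 2*j) with hc
  set m := mcnt J i c (2*j) + 1 with hmdef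
  have hcountle : ∀ x, c.count x ≤ b.count x :=
    fun x => Multiset.count_le_of_le x (Multiset.filter_le _ b)
  have hwj1 := hq.2.2.2 (j+1) (by omega)
  have e1 : 2*(j+1)-2 = 2*j := by omega
  have e2 : 2*(j+1)-1 = 2*j+1 := by omega
  have e3 : 2*(j+1) = 2*j+2 := by omega
  rw [e1, e2, e3] at hwj1
  have hc2j2 : b.count (2*j+2) = l - 1 := by
    have := hq.2.1
    unfold mcnt at this
    rw [if_neg (by omega), e3] at this
    omega
  have hm2j : mcnt J i c (2*j) = mcnt J i b (2*j) := mcnt_low J i j b (2*j) le_rfl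
  have h2j1 : mcnt J i b (2*j+1) = b.count (2*j+1) := by
    unfold mcnt; rw [if_neg (by omega)]; omega
  have h2j2 : mcnt J i b (2*j+2) = l - 1 := by
    unfold mcnt; rw [if_neg (by omega)]; omega
  have hbound : m + b.count (2*j+1) + l ≤ k + 1 := by
    rw [hmdef, hm2j]; omega
  refine ⟨⟨?_, rfl, ?_, ?_⟩, hbound⟩
  · intro x hx
    rw [hc, Multiset.mem_filter] at hx
    exact ⟨(hq.1 x hx.1).1, hx.2⟩
  · intro x hod
    exact le_trans (hcountle x) (hq.2.2.1 x hod)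
  · intro m' hm'
    rcases em (m' ≤ j) with hle | hgt
    · rw [mcnt_low J i j b _ (by omega), mcnt_low J i j b _ (by omega),
        mcnt_low J i j b _ (by omega)]
      exact hq.2.2.2 m' hm'
    · have hz : ∀ x, 2*j < x → mcnt J i c x = 0 := by
        intro x hx
        unfold mcnt
        rw [if_neg (by omega)]
        have : x ∉ c := by
          rw [hc, Multiset.mem_filter]
          intro hmem
          have := hmem.2
          omega
        simp [Multiset.count_eq_zero_of_notMem this]
      rcases em (m' = j+1) with hj1 | hj1
      · subst hj1
        rw [e1, e2, e3, hz (2*j+1) (by omega), hz (2*j+2) (by omega)]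
        have : mcnt J i c (2*j) + 1 = m := rfl
        omega
      · rw [hz (2*m'-2) (by omega), hz (2*m'-1) (by omega), hz (2*m') (by omega)]
        omega

lemma QQ_join (k J i j l m ε : ℕ) (hk : 1 ≤ k) (hJ : J ≤ j) (hl1 : 1 ≤ l) (hlk : l ≤ k)
    (hε : ε ≤ 1) (hm : m + ε + l ≤ k + 1)
    (c : Multiset ℕ) (hq : QQ k J i j m c) :
    QQ k J i (j+1) l (Multiset.replicate (l-1) (2*j+2) + Multiset.replicate ε (2*j+1) + c) := by
  classical
  set b := Multiset.replicate (l-1) (2*j+2) + Multiset.replicate ε (2*j+1) + c with hbdef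
  have hcc : ∀ x, 2*j < x → c.count x = 0 := by
    intro x hx
    have : x ∉ c := fun hmem => by have := (hq.1 x hmem).2; omega
    simp [Multiset.count_eq_zero_of_notMem this]
  have hcnt : ∀ x, b.count x
      = (if x = 2*j+2 then l-1 else 0) + (if x = 2*j+1 then ε else 0) + c.count x :=
    count_join j l ε c
  have hmcnt : ∀ x, mcnt J i b x
      = (if x = 2*j+2 then l-1 else 0) + (if x = 2*j+1 then ε else 0) + mcnt J i c x := by
    intro x
    unfold mcnt
    rw [hcnt x]
    omega
  refine ⟨?_, ?_, ?_, ?_⟩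
  · intro x hx
    rw [hbdef, Multiset.mem_add, Multiset.mem_add] at hx
    rcases hx with (hx | hx) | hx
    · rw [Multiset.eq_of_mem_replicate hx]; omega
    · rw [Multiset.eq_of_mem_replicate hx]; omega
    · have := hq.1 x hx; omega
  · rw [hmcnt]
    have e3 : 2*(j+1) = 2*j+2 := by omega
    rw [e3, if_pos rfl, if_neg (by omega)]
    have : mcnt J i c (2*j+2) = 0 := by
      unfold mcnt; rw [if_neg (by omega), hcc _ (by omega)]
    omega
  · intro x hod
    rw [hcnt]
    rcases em (x = 2*j+2) with h2 | h2
    · exfalso; obtain ⟨r, hr⟩ := hod; omega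
    · rcases em (x = 2*j+1) with h1 | h1
      · rw [if_neg h2, if_pos h1, h1, hcc _ (by omega)]; omega
      · rw [if_neg h2, if_neg h1]
        have := hq.2.2.1 x hod
        omega
  · intro m' hm'
    rcases em (m' ≤ j) with hle | hgt
    · rw [hmcnt, hmcnt, hmcnt,
        if_neg (by omega), if_neg (by omega), if_neg (by omega), if_neg (by omega),
        if_neg (by omega), if_neg (by omega)]
      have := hq.2.2.2 m' hm'
      omega
    · have hzc : ∀ x, 2*j < x → mcnt J i c x = 0 := by
        intro x hx
        unfold mcnt
        rw [if_neg (by omega), hcc _ hx]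
      rcases em (m' = j+1) with h1 | h1
      · subst h1
        have e1 : 2*(j+1)-2 = 2*j := by omega
        have e2 : 2*(j+1)-1 = 2*j+1 := by omega
        have e3 : 2*(j+1) = 2*j+2 := by omega
        rw [e1, e2, e3, hmcnt, hmcnt, hmcnt,
          if_neg (by omega), if_neg (by omega), if_neg (by omega), if_pos rfl,
          if_pos rfl, if_neg (by omega), hzc (2*j+1) (by omega), hzc (2*j+2) (by omega)]
        have := hq.2.1
        omega
      · rcases em (m' = j+2) with h2 | h2
        · subst h2
          have e1 : 2*(j+2)-2 = 2*j+2 := by omega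
          have e2 : 2*(j+2)-1 = 2*j+3 := by omega
          have e3 : 2*(j+2) = 2*j+4 := by omega
          rw [e1, e2, e3, hmcnt, hmcnt, hmcnt,
            if_pos rfl, if_neg (by omega), if_neg (by omega), if_neg (by omega),
            if_neg (by omega), if_neg (by omega),
            hzc (2*j+2) (by omega), hzc (2*j+3) (by omega), hzc (2*j+4) (by omega)]
          omega
        · rw [hmcnt, hmcnt, hmcnt,
            if_neg (by omega), if_neg (by omega), if_neg (by omega), if_neg (by omega),
            if_neg (by omega), if_neg (by omega),
            hzc (2*m'-2) (by omega), hzc (2*m'-1) (by omega), hzc (2*m') (by omega)]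
          omega


lemma strip_join (j l ε : ℕ) (c : Multiset ℕ) (hc : ∀ x ∈ c, x ≤ 2*j) :
    (Multiset.replicate (l-1) (2*j+2) + Multiset.replicate ε (2*j+1) + c).filter (· ≤ 2*j)
      = c := by
  classical
  ext x
  rw [Multiset.count_filter]
  rcases em (x ≤ 2*j) with h | h
  · rw [if_pos h, count_join, if_neg (by omega), if_neg (by omega)]; omega
  · rw [if_neg h]
    have : x ∉ c := fun hm => h (hc x hm)
    simp [Multiset.count_eq_zero_of_notMem this]

lemma count_join_odd (j l ε : ℕ) (c : Multiset ℕ) (hc : ∀ x ∈ c, x ≤ 2*j) :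
    (Multiset.replicate (l-1) (2*j+2) + Multiset.replicate ε (2*j+1) + c).count (2*j+1) = ε := by
  rw [count_join, if_neg (by omega), if_pos rfl]
  have : (2*j+1) ∉ c := fun hm => by have := hc _ hm; omega
  simp [Multiset.count_eq_zero_of_notMem this]

lemma sum_join (j l ε : ℕ) (c : Multiset ℕ) :
    (Multiset.replicate (l-1) (2*j+2) + Multiset.replicate ε (2*j+1) + c).sum
      = (2*(j+1)*(l-1) + ε*(2*(j+1)-1)) + c.sum := by
  rw [Multiset.sum_add, Multiset.sum_add, Multiset.sum_replicate, Multiset.sum_replicate,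
    smul_eq_mul, smul_eq_mul]
  have h1 : (l-1) * (2*j+2) = 2*(j+1)*(l-1) := by ring
  have h2 : 2*(j+1)-1 = 2*j+1 := by omega
  rw [h1, h2]

lemma step_sum (k J i j l ε : ℕ) (hk : 2 ≤ k) (hJ : J ≤ j) (hl1 : 1 ≤ l) (hlk : l ≤ k)
    (hε : ε ≤ 1) :
    ∑ b ∈ (S k J i (j+1) l).filter (fun b => b.count (2*j+1) = ε), (X : Polynomial ℤ) ^ b.sum
      = ∑ p ∈ (Finset.Icc 1 (k-l+1-ε)).sigma
            (fun m => (S k J i j m : Finset ((fun _ : ℕ => Multiset ℕ) m))),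
          (X : Polynomial ℤ) ^ ((2*(j+1)*(l-1) + ε*(2*(j+1)-1)) + p.2.sum) := by
  classical
  refine Finset.sum_nbij'
    (fun b => (⟨mcnt J i (b.filter (· ≤ 2*j)) (2*j) + 1, b.filter (· ≤ 2*j)⟩ :
      Σ _ : ℕ, Multiset ℕ))
    (fun p => Multiset.replicate (l-1) (2*j+2) + Multiset.replicate ε (2*j+1) + p.2)
    ?_ ?_ ?_ ?_ ?_
  · intro b hb
    rw [Finset.mem_filter, mem_S k J i (j+1) l (by omega)] at hb
    obtain ⟨hq, hcε⟩ := hb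
    obtain ⟨hq', hbd⟩ := QQ_strip k J i j l (by omega) hJ hl1 b hq
    rw [hcε] at hbd
    rw [Finset.mem_sigma, Finset.mem_Icc, mem_S k J i j _ (by omega)]
    dsimp only
    exact ⟨⟨by omega, by omega⟩, hq'⟩
  · intro p hp
    rw [Finset.mem_sigma, Finset.mem_Icc, mem_S k J i j _ (by omega)] at hp
    obtain ⟨⟨hm1, hm2⟩, hq⟩ := hp
    rw [Finset.mem_filter, mem_S k J i (j+1) l (by omega)]
    constructor
    · exact QQ_join k J i j l p.1 ε (by omega) hJ hl1 hlk hε (by omega) p.2 hq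
    · exact count_join_odd j l ε p.2 (fun x hx => (hq.1 x hx).2)
  · intro b hb
    rw [Finset.mem_filter, mem_S k J i (j+1) l (by omega)] at hb
    obtain ⟨hq, hcε⟩ := hb
    have hbnd : ∀ x ∈ b, x ≤ 2*j+2 := by
      intro x hx
      have := (hq.1 x hx).2
      omega
    have hc22 : b.count (2*j+2) = l - 1 := by
      have h2 := hq.2.1
      unfold mcnt at h2
      rw [if_neg (by omega)] at h2
      have e3 : 2*(j+1) = 2*j+2 := by omega
      rw [e3] at h2
      omega
    have := join_strip j b hbnd
    rw [hc22, hcε] at this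
    exact this
  · intro p hp
    rw [Finset.mem_sigma, Finset.mem_Icc, mem_S k J i j _ (by omega)] at hp
    obtain ⟨⟨hm1, hm2⟩, hq⟩ := hp
    obtain ⟨m, c⟩ := p
    have hstrip := strip_join j l ε c (fun x hx => (hq.1 x hx).2)
    simp only at hstrip ⊢
    rw [hstrip, hq.2.1]
  · intro b hb
    rw [Finset.mem_filter, mem_S k J i (j+1) l (by omega)] at hb
    obtain ⟨hq, hcε⟩ := hb
    have hbnd : ∀ x ∈ b, x ≤ 2*j+2 := by
      intro x hx
      have := (hq.1 x hx).2
      omega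
    have hc22 : b.count (2*j+2) = l - 1 := by
      have h2 := hq.2.1
      unfold mcnt at h2
      rw [if_neg (by omega)] at h2
      have e3 : 2*(j+1) = 2*j+2 := by omega
      rw [e3] at h2
      omega
    have hdecomp := join_strip j b hbnd
    rw [hc22, hcε] at hdecomp
    have hsum : b.sum = (2*(j+1)*(l-1) + ε*(2*(j+1)-1)) + (b.filter (· ≤ 2*j)).sum := by
      conv_lhs => rw [← hdecomp]
      exact sum_join j l ε _
    simp only
    rw [hsum]


lemma h_eq (k J i : ℕ) (hk : 2 ≤ k) (hi1 : 1 ≤ i) (hik : i ≤ k)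
    (h : ℕ → ℕ → ℕ → Polynomial ℤ) (hsys : IsHSystem k J h) :
    ∀ j, J ≤ j → ∀ l, 1 ≤ l → l ≤ k → h j i l = ∑ b ∈ S k J i j l, (X : Polynomial ℤ) ^ b.sum := by
  classical
  intro j hJj
  induction j, hJj using Nat.le_induction with
  | base =>
    intro l hl1 hlk
    rw [hsys.1 i l hi1 hik hl1 hlk]
    have hS : S k J i J l = if i = l then {(0 : Multiset ℕ)} else ∅ := by
      ext b
      rw [mem_S k J i J l (by omega), QQ_base k J i l hi1 hik]
      rcases em (i = l) with hil | hil <;> simp [hil]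
    rw [hS]
    rcases em (i = l) with hil | hil <;> simp [hil]
  | succ j hJ IH =>
    intro l hl1 hlk
    rw [hsys.2 (j+1) i l (by omega) hi1 hik hl1 hlk]
    simp only [Nat.add_sub_cancel]
    have hA : ∑ m ∈ Finset.Icc 1 (k-l+1), h j i m
        = ∑ m ∈ Finset.Icc 1 (k-l+1), ∑ c ∈ S k J i j m, (X : Polynomial ℤ) ^ c.sum := by
      refine Finset.sum_congr rfl (fun m hm => ?_)
      rw [Finset.mem_Icc] at hm
      exact IH m hm.1 (by omega)
    have hB : ∑ m ∈ Finset.Icc 1 (k-l), h j i m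
        = ∑ m ∈ Finset.Icc 1 (k-l), ∑ c ∈ S k J i j m, (X : Polynomial ℤ) ^ c.sum := by
      refine Finset.sum_congr rfl (fun m hm => ?_)
      rw [Finset.mem_Icc] at hm
      exact IH m hm.1 (by omega)
    rw [hA, hB]
    simp only [Finset.mul_sum, ← pow_add]
    -- now handle the two step sums
    have h0 := step_sum k J i j l 0 hk hJ hl1 hlk (by omega)
    have e00 : k - l + 1 - 0 = k - l + 1 := by omega
    rw [e00] at h0
    simp only [zero_mul, add_zero] at h0
    have h1 := step_sum k J i j l 1 hk hJ hl1 hlk (by omega)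
    have e10 : k - l + 1 - 1 = k - l := by omega
    rw [e10] at h1
    simp only [one_mul] at h1
    have hexp : 2*(j+1)*(l-1) + (2*(j+1)-1) = 2*(j+1)*l - 1 := by
      obtain ⟨L, rfl⟩ : ∃ L, l = L + 1 := ⟨l-1, by omega⟩
      have hms : 2*(j+1)*(L+1) = 2*(j+1)*L + 2*(j+1) := Nat.mul_succ _ _
      have hls : L + 1 - 1 = L := by omega
      rw [hls, hms]
      omega
    rw [hexp] at h1
    have hfilters : (S k J i (j+1) l).filter (fun b => ¬ Multiset.count (2*j+1) b = 0)
        = (S k J i (j+1) l).filter (fun b => Multiset.count (2*j+1) b = 1) := by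
      refine Finset.filter_congr (fun b hb => ?_)
      rw [mem_S k J i (j+1) l (by omega)] at hb
      have hodd : Odd (2*j+1) := ⟨j, by ring⟩
      have := hb.2.2.1 (2*j+1) hodd
      constructor <;> omega
    rw [Finset.sum_sigma', Finset.sum_sigma', ← h0, ← h1, ← hfilters]
    exact Finset.sum_filter_add_sum_filter_not (S k J i (j+1) l)
      (fun b => Multiset.count (2*j+1) b = 0) (fun b => (X : Polynomial ℤ) ^ b.sum)


/-- the limiting condition: partitions of `n` of the required type, as multisets. -/
def TypeM (k J i n : ℕ) (c : Multiset ℕ) : Prop :=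
  (∀ x ∈ c, 2*J < x) ∧ (∀ x, Odd x → c.count x ≤ 1) ∧
  (∀ m, 1 ≤ m → mcnt J i c (2*m-2) + mcnt J i c (2*m-1) + mcnt J i c (2*m) + 1 ≤ k) ∧
  c.sum = n

lemma sorted_index_countP (b : List ℕ) (hs : b.Pairwise (· ≥ ·)) (v q : ℕ) (hq : q < b.length) :
    v ≤ b.getD q 0 ↔ q < b.countP (fun x => decide (v ≤ x)) := by
  induction b generalizing q with
  | nil => simp at hq
  | cons a tl ih =>
    rw [List.pairwise_cons] at hs
    rw [List.countP_cons]
    cases q with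
    | zero =>
      rw [List.getD_cons_zero]
      constructor
      · intro hva
        have : (if decide (v ≤ a) = true then 1 else 0) = 1 := by simp [hva]
        omega
      · intro hpos
        rcases em (v ≤ a) with h | h
        · exact h
        · simp only [decide_eq_true_eq, if_neg h, add_zero] at hpos
          obtain ⟨x, hx, hvx⟩ := List.countP_pos_iff.1 (by omega : 0 < tl.countP (fun x => decide (v ≤ x)))
          rw [decide_eq_true_eq] at hvx
          exact le_trans hvx (hs.1 x hx)
    | succ q =>
      rw [List.getD_cons_succ]
      have hq' : q < tl.length := by simpa using hq
      have hih := ih hs.2 q hq'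
      constructor
      · intro hlt
        have h1 : q < List.countP (fun x => decide (v ≤ x)) tl := hih.1 hlt
        have hmem : tl.getD q 0 ∈ tl := by
          rw [List.getD_eq_getElem tl 0 hq']
          exact List.getElem_mem hq'
        have hva : v ≤ a := le_trans hlt (hs.1 _ hmem)
        have : (if decide (v ≤ a) = true then 1 else 0) = 1 := by simp [hva]
        omega
      · intro hlt
        apply hih.2
        have : (if decide (v ≤ a) = true then 1 else 0) ≤ 1 := by split <;> omega
        omega

lemma countP_split (b : List ℕ) (v : ℕ) :
    b.countP (fun x => decide (v ≤ x)) = b.count v + b.countP (fun x => decide (v+1 ≤ x)) := by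
  induction b with
  | nil => simp
  | cons a tl ih =>
    rw [List.countP_cons, List.countP_cons, List.count_cons, ih]
    rcases em (v = a) with h | h
    · subst h
      simp
      omega
    · have hba : ¬ (a == v) = true := by simp [Ne.symm h]
      rw [if_neg hba]
      rcases em (v ≤ a) with h1 | h1
      · rw [if_pos (by simpa using h1), if_pos (by simp; omega)]
        omega
      · rw [if_neg (by simpa using h1), if_neg (by simp; omega)]
        omega


lemma getD_pos (b : List ℕ) (hpos : ∀ x ∈ b, 0 < x) (q : ℕ) (hq : q < b.length) :
    0 < b.getD q 0 := by
  apply hpos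
  rw [List.getD_eq_getElem b 0 hq]
  exact List.getElem_mem hq

lemma gap_iff_window (k : ℕ) (hk : 2 ≤ k) (b : List ℕ) (hs : b.Pairwise (· ≥ ·))
    (hpos : ∀ x ∈ b, 0 < x) :
    (∀ p, p + (k - 1) < b.length →
      (Odd (b.getD p 0) → b.getD (p + (k - 1)) 0 + 2 ≤ b.getD p 0) ∧
      (Even (b.getD p 0) → b.getD (p + (k - 1)) 0 + 3 ≤ b.getD p 0))
    ↔ (∀ m, 1 ≤ m → b.count (2*m-2) + b.count (2*m-1) + b.count (2*m) + 1 ≤ k) := by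
  constructor
  · intro hgap m hm
    by_contra hbig
    set p := b.countP (fun x => decide (2*m+1 ≤ x)) with hp
    have hsplit : b.countP (fun x => decide (2*m-2 ≤ x))
        = b.count (2*m-2) + b.count (2*m-1) + b.count (2*m) + p := by
      rw [countP_split b (2*m-2)]
      have e1 : 2*m-2+1 = 2*m-1 := by omega
      rw [e1, countP_split b (2*m-1)]
      have e2 : 2*m-1+1 = 2*m := by omega
      rw [e2, countP_split b (2*m)]
      omega
    have hcle : b.countP (fun x => decide (2*m-2 ≤ x)) ≤ b.length := List.countP_le_length
    have hlen : p + (k-1) < b.length := by omega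
    have hplen : p < b.length := by omega
    have hqlen : p + (k-1) < b.length := hlen
    have hvle : b.getD p 0 ≤ 2*m := by
      by_contra hgt
      have : p < p := (sorted_index_countP b hs (2*m+1) p hplen).1 (by omega)
      omega
    have hvge : 2*m-2 ≤ b.getD p 0 := by
      rw [sorted_index_countP b hs (2*m-2) p hplen]
      omega
    have hwge : 2*m-2 ≤ b.getD (p + (k-1)) 0 := by
      rw [sorted_index_countP b hs (2*m-2) _ hqlen]
      omega
    have hwpos : 0 < b.getD (p + (k-1)) 0 := getD_pos b hpos _ hqlen
    have hgp := hgap p hlen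
    rcases Nat.even_or_odd (b.getD p 0) with hev | hod
    · have := hgp.2 hev
      omega
    · have := hgp.1 hod
      obtain ⟨r, hr⟩ := hod
      omega
  · intro hwin p hp
    have hkp : 1 ≤ k - 1 := by omega
    have hplen : p < b.length := by omega
    have hqlen : p + (k-1) < b.length := hp
    obtain ⟨v, hv⟩ : ∃ v, b.getD p 0 = v := ⟨_, rfl⟩
    obtain ⟨w, hw⟩ : ∃ w, b.getD (p + (k - 1)) 0 = w := ⟨_, rfl⟩
    rw [hv, hw]
    have hvpos : 0 < v := hv ▸ getD_pos b hpos p hplen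
    have hwpos : 0 < w := hw ▸ getD_pos b hpos _ hqlen
    have hwv : w ≤ v := by
      by_contra hgt
      have h1 : p + (k-1) < b.countP (fun x => decide (v+1 ≤ x)) :=
        (sorted_index_countP b hs (v+1) _ hqlen).1 (by rw [hw]; omega)
      have h2 : ¬ (p < b.countP (fun x => decide (v+1 ≤ x))) := by
        intro hc
        have := (sorted_index_countP b hs (v+1) p hplen).2 hc
        omega
      omega
    have hcp : ¬ (p < b.countP (fun x => decide (v+1 ≤ x))) := by
      intro hc
      have := (sorted_index_countP b hs (v+1) p hplen).2 hc
      omega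
    constructor
    · intro hod
      by_contra hfail
      have h1 : p + (k-1) < b.countP (fun x => decide (v-1 ≤ x)) :=
        (sorted_index_countP b hs (v-1) _ hqlen).1 (by rw [hw]; omega)
      have hsp : b.countP (fun x => decide (v-1 ≤ x))
          = b.count (v-1) + b.count v + b.countP (fun x => decide (v+1 ≤ x)) := by
        rw [countP_split b (v-1)]
        have e1 : v-1+1 = v := by omega
        rw [e1, countP_split b v]
        omega
      obtain ⟨r, hr⟩ := hod
      have hwm := hwin (r+1) (by omega)
      have e1 : 2*(r+1)-2 = v-1 := by omega
      have e2 : 2*(r+1)-1 = v := by omega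
      rw [e1, e2] at hwm
      omega
    · intro hev
      by_contra hfail
      obtain ⟨r, hr⟩ := hev
      have hr2 : v = 2*r := by omega
      have hr1 : 1 ≤ r := by omega
      have h1 : p + (k-1) < b.countP (fun x => decide (v-2 ≤ x)) :=
        (sorted_index_countP b hs (v-2) _ hqlen).1 (by rw [hw]; omega)
      have hsp : b.countP (fun x => decide (v-2 ≤ x))
          = b.count (v-2) + b.count (v-1) + b.count v + b.countP (fun x => decide (v+1 ≤ x)) := by
        rw [countP_split b (v-2)]
        have e1 : v-2+1 = v-1 := by omega
        rw [e1, countP_split b (v-1)]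
        have e2 : v-1+1 = v := by omega
        rw [e2, countP_split b v]
        omega
      have hwm := hwin r hr1
      have e1 : 2*r-2 = v-2 := by omega
      have e2 : 2*r-1 = v-1 := by omega
      have e3 : 2*r = v := by omega
      rw [e1, e2, e3] at hwm
      omega


lemma type_iff (k J i n : ℕ) (hk : 2 ≤ k) (hi1 : 1 ≤ i) (hik : i ≤ k) (b : List ℕ) :
    IsTypePartition k J i n b ↔ (b.Pairwise (· ≥ ·) ∧ TypeM k J i n (↑b : Multiset ℕ)) := by
  unfold IsTypePartition TypeM
  simp only [Multiset.mem_coe, Multiset.coe_count, Multiset.sum_coe]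
  constructor
  · rintro ⟨hs, hpos, hsum, hodd, hgap, h2J, hbd⟩
    have hz : ∀ x, x ≤ 2*J → b.count x = 0 := by
      intro x hx
      rw [List.count_eq_zero]
      intro hm
      have := h2J x hm
      omega
    have hwin := (gap_iff_window k hk b hs hpos).1 hgap
    refine ⟨hs, h2J, hodd, ?_, hsum⟩
    intro m hm
    unfold mcnt
    simp only [Multiset.coe_count]
    rcases em (m = J+1) with h1 | h1
    · rw [h1, if_pos (by omega), if_neg (by omega), if_neg (by omega),
        hz (2*(J+1)-2) (by omega)]
      have e1 : 2*(J+1)-1 = 2*J+1 := by omega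
      rw [e1]
      have e2 : 2*(J+1) = 2*J+2 := by omega
      rw [e2]
      omega
    · rcases em (m = J) with h2 | h2
      · rw [h2, if_neg (by omega), if_neg (by omega), if_pos rfl,
          hz (2*J-2) (by omega), hz (2*J-1) (by omega), hz (2*J) (by omega)]
        omega
      · rw [if_neg (by omega), if_neg (by omega), if_neg (by omega)]
        have := hwin m hm
        omega
  · rintro ⟨hs, ⟨h2J, hodd, hwin, hsum⟩⟩
    have hpos : ∀ x ∈ b, 0 < x := fun x hx => by have := h2J x hx; omega
    have hz : ∀ x, x ≤ 2*J → b.count x = 0 := by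
      intro x hx
      rw [List.count_eq_zero]
      intro hm
      have := h2J x hm
      omega
    have hwin' : ∀ m, 1 ≤ m → b.count (2*m-2) + b.count (2*m-1) + b.count (2*m) + 1 ≤ k := by
      intro m hm
      have hw := hwin m hm
      unfold mcnt at hw
      simp only [Multiset.coe_count] at hw
      rcases em (m = J+1) with h1 | h1
      · rw [h1] at hw ⊢
        rw [if_pos (by omega), if_neg (by omega), if_neg (by omega)] at hw
        omega
      · rcases em (m = J) with h2 | h2
        · rw [h2, hz (2*J-2) (by omega), hz (2*J-1) (by omega), hz (2*J) (by omega)]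
          omega
        · rw [if_neg (by omega), if_neg (by omega), if_neg (by omega)] at hw
          omega
    have hbd : b.count (2*J+1) + b.count (2*J+2) ≤ k - i := by
      have hw := hwin (J+1) (by omega)
      unfold mcnt at hw
      simp only [Multiset.coe_count] at hw
      rw [if_pos (by omega), if_neg (by omega), if_neg (by omega),
        hz (2*(J+1)-2) (by omega)] at hw
      have e1 : 2*(J+1)-1 = 2*J+1 := by omega
      rw [e1] at hw
      have e2 : 2*(J+1) = 2*J+2 := by omega
      rw [e2] at hw
      omega
    exact ⟨hs, hpos, hsum, hodd, (gap_iff_window k hk b hs hpos).2 hwin', h2J, hbd⟩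


lemma filter_mem_iff (k J i j t : ℕ) (hk : 2 ≤ k) (hJ : J + 1 ≤ j) (ht : t + 1 ≤ 2*j)
    (b : Multiset ℕ) :
    (b ∈ S k J i j 1 ∧ b.sum = t) ↔ TypeM k J i t b := by
  rw [mem_S k J i j 1 (by omega)]
  constructor
  · rintro ⟨⟨h1, h2, h3, h4⟩, h5⟩
    exact ⟨fun x hx => (h1 x hx).1, h3, h4, h5⟩
  · rintro ⟨h1, h2, h3, h4⟩
    have hle : ∀ x ∈ b, x ≤ 2*j := by
      intro x hx
      have hxs : x ≤ b.sum := Multiset.single_le_sum (fun y _ => Nat.zero_le y) x hx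
      omega
    have hnm : (2*j) ∉ b := by
      intro hm
      have := hle _ hm
      have hxs : 2*j ≤ b.sum := Multiset.single_le_sum (fun y _ => Nat.zero_le y) _ hm
      omega
    refine ⟨⟨fun x hx => ⟨h1 x hx, hle x hx⟩, ?_, h2, h3⟩, h4⟩
    unfold mcnt
    rw [if_neg (by omega)]
    simp [Multiset.count_eq_zero_of_notMem hnm]

noncomputable def sortDesc (c : Multiset ℕ) : List ℕ := (Multiset.sort c (· ≤ ·)).reverse

lemma sortDesc_sorted (c : Multiset ℕ) : (sortDesc c).Pairwise (· ≥ ·) := by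
  unfold sortDesc
  rw [List.pairwise_reverse]
  exact List.Pairwise.imp (fun hab => hab) (Multiset.pairwise_sort c (· ≤ ·))

lemma sortDesc_coe (c : Multiset ℕ) : (↑(sortDesc c) : Multiset ℕ) = c := by
  unfold sortDesc
  rw [show ((↑(Multiset.sort c (· ≤ ·)).reverse : Multiset ℕ))
      = ↑(Multiset.sort c (· ≤ ·)) from Multiset.coe_eq_coe.2 (List.reverse_perm _),
    Multiset.sort_eq]

lemma eq_sortDesc (b : List ℕ) (hs : b.Pairwise (· ≥ ·)) : sortDesc ↑b = b := by
  haveI : Std.Antisymm (α := ℕ) (· ≥ ·) := ⟨fun a b h1 h2 => le_antisymm h2 h1⟩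
  exact List.Perm.eq_of_pairwise' (sortDesc_sorted _) hs
    (Multiset.coe_eq_coe.1 (sortDesc_coe ↑b))

lemma card_type (k J i t j : ℕ) (hk : 2 ≤ k) (hi1 : 1 ≤ i) (hik : i ≤ k)
    (hJ : J+1 ≤ j) (ht : t+1 ≤ 2*j) :
    Nat.card {b : List ℕ // IsTypePartition k J i t b}
      = ((S k J i j 1).filter (fun b => b.sum = t)).card := by
  classical
  have e : {b : List ℕ // IsTypePartition k J i t b}
      ≃ {c : Multiset ℕ // c ∈ (S k J i j 1).filter (fun b => b.sum = t)} :=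
    { toFun := fun b => ⟨(↑(b.1) : Multiset ℕ), by
        obtain ⟨hs, htm⟩ := (type_iff k J i t hk hi1 hik b.1).1 b.2
        rw [Finset.mem_filter]
        exact (filter_mem_iff k J i j t hk hJ ht _).2 htm⟩,
      invFun := fun c => ⟨sortDesc c.1, by
        have hc := c.2
        rw [Finset.mem_filter] at hc
        have htm := (filter_mem_iff k J i j t hk hJ ht c.1).1 hc
        refine (type_iff k J i t hk hi1 hik _).2 ⟨sortDesc_sorted c.1, ?_⟩
        rw [sortDesc_coe]
        exact htm⟩,
      left_inv := fun b => Subtype.ext (eq_sortDesc b.1 b.2.1),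
      right_inv := fun c => Subtype.ext (sortDesc_coe c.1) }
  rw [Nat.card_congr e, Nat.card_eq_fintype_card, Fintype.card_coe]

lemma coeff_one (k J i : ℕ) (hk : 2 ≤ k) (hi1 : 1 ≤ i) (hik : i ≤ k)
    (h : ℕ → ℕ → ℕ → Polynomial ℤ) (hsys : IsHSystem k J h) (t j : ℕ)
    (hJ : J+1 ≤ j) (ht : t+1 ≤ 2*j) :
    (h j i 1).coeff t = (Nat.card {b : List ℕ // IsTypePartition k J i t b} : ℤ) := by
  classical
  rw [h_eq k J i hk hi1 hik h hsys j (by omega) 1 le_rfl (by omega),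
    Polynomial.finset_sum_coeff]
  rw [Finset.sum_congr rfl (fun b _ => Polynomial.coeff_X_pow b.sum t)]
  rw [Finset.sum_boole]
  have hfc : (Finset.filter (fun x => t = x.sum) (S k J i j 1))
      = Finset.filter (fun b => b.sum = t) (S k J i j 1) :=
    Finset.filter_congr (fun b _ => by constructor <;> (intro hh; omega))
  rw [hfc, card_type k J i t j hk hi1 hik hJ ht]

lemma coeff_vanish (k J i : ℕ) (hk : 2 ≤ k) (hi1 : 1 ≤ i) (hik : i ≤ k)
    (h : ℕ → ℕ → ℕ → Polynomial ℤ) (hsys : IsHSystem k J h)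
    (l : ℕ) (hl2 : 2 ≤ l) (hlk : l ≤ k) (t j : ℕ) (hJ : J+1 ≤ j) (ht : t+1 ≤ j) :
    (h j i l).coeff t = 0 := by
  rw [hsys.2 j i l (by omega) hi1 hik (by omega) hlk, Polynomial.coeff_add]
  have key : ∀ (n : ℕ) (p : Polynomial ℤ), t < n → (X ^ n * p).coeff t = 0 := by
    intro n p hn
    rw [mul_comm, Polynomial.coeff_mul_X_pow', if_neg (by omega)]
  have h1 : 2*j ≤ 2*j*(l-1) := Nat.le_mul_of_pos_right _ (by omega)
  have h2 : 2*j*2 ≤ 2*j*l := Nat.mul_le_mul_left _ (by omega)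
  rw [key _ _ (by omega), key _ _ (by omega)]
  simp

end HAux

/-- For `l ≥ 2` every fixed coefficient of `h^{(j)}_{i,l}(q)` is eventually `0`
as `j → ∞`, and for `l = 1` the coefficients stabilize, the limit
`h^{(∞)}_{i,1}(q) ∈ ℤ⟦q⟧` being the generating function for partitions of type
`(k-1, 2J, k-i)`. -/
theorem h_limit (k J : ℕ) (hk : 2 ≤ k) (i : ℕ) (hi1 : 1 ≤ i) (hik : i ≤ k)
    (h : ℕ → ℕ → ℕ → Polynomial ℤ) (hsys : IsHSystem k J h) :
    (∀ l, 2 ≤ l → l ≤ k → ∀ t : ℕ, ∃ Jt, ∀ j, Jt ≤ j → (h j i l).coeff t = 0) ∧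
    ∃ hinf : PowerSeries ℤ,
      (∀ t : ℕ, ∃ Jt, ∀ j, Jt ≤ j →
        (h j i 1).coeff t = PowerSeries.coeff t hinf) ∧
      (∀ n : ℕ, PowerSeries.coeff n hinf =
        (Nat.card {b : List ℕ // IsTypePartition k J i n b} : ℤ)) := by
  constructor
  · intro l hl2 hlk t
    refine ⟨max (J+1) (t+1), fun j hj => ?_⟩
    exact HAux.coeff_vanish k J i hk hi1 hik h hsys l hl2 hlk t j
      (le_trans (le_max_left _ _) hj) (le_trans (le_max_right _ _) hj)
  · refine ⟨PowerSeries.mk (fun n => (Nat.card {b : List ℕ // IsTypePartition k J i n b} : ℤ)),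
      ?_, ?_⟩
    · intro t
      refine ⟨max (J+1) (t+1), fun j hj => ?_⟩
      rw [PowerSeries.coeff_mk]
      exact HAux.coeff_one k J i hk hi1 hik h hsys t j
        (le_trans (le_max_left _ _) hj) (by
          have := le_trans (le_max_right _ _) hj
          omega)
    · intro n
      rw [PowerSeries.coeff_mk]
end

section
/- Suppose (J_l(q))_{l≥1} and (S_l(q))_{l≥1} are two sequences of formal power series in q with constant term 1, both satisfying the recursions G_{(k-1)j+i}(q) = [G_{(k-1)(j-1)+k-i+1}(q) − G_{(k-1)(j-1)+k-i+2}(q)] / q^{2j(i-1)} − q^{-1} G_{(k-1)j+i-1}(q) for all j ≥ 1, 2 ≤ i ≤ k (with the edge-matching convention G_{(k-1)j+1} = G_{(k-1)(j-1)+k}), and both satisfying the Empirical Hypothesis: G_{(k-1)j+i}(q) ∈ 1 + q^{2j+1} ℤ[[q]] for all j ≥ 0, 1 ≤ i ≤ k. Then J_l(q) = S_l(q) for all l ≥ 1. -/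
/-- The property that a sequence of formal power series (indexed by `l ≥ 1`)
satisfies the Göllnitz–Gordon–Andrews recursions
`G_{(k-1)j+i} = (G_{(k-1)(j-1)+k-i+1} - G_{(k-1)(j-1)+k-i+2})/q^{2j(i-1)}
  - q⁻¹ G_{(k-1)j+i-1}` (`j ≥ 1`, `2 ≤ i ≤ k`), in the field of formal Laurent
series (the edge-matching convention `G_{(k-1)j+1} = G_{(k-1)(j-1)+k}` holds
automatically since `(k-1)j + 1 = (k-1)(j-1) + k`). -/
def SatisfiesGGARecursion (k : ℕ) (G : ℕ → PowerSeries ℚ) : Prop :=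
  ∀ j i, 1 ≤ j → 2 ≤ i → i ≤ k →
    ((G ((k - 1) * j + i) : PowerSeries ℚ) : LaurentSeries ℚ) =
      ((G ((k - 1) * (j - 1) + (k - i + 1)) : PowerSeries ℚ)
          - (G ((k - 1) * (j - 1) + (k - i + 2)) : PowerSeries ℚ)) /
        ((PowerSeries.X : PowerSeries ℚ) : LaurentSeries ℚ) ^ (2 * j * (i - 1)) -
      ((PowerSeries.X : PowerSeries ℚ) : LaurentSeries ℚ)⁻¹ *
        ((G ((k - 1) * j + (i - 1)) : PowerSeries ℚ) : LaurentSeries ℚ)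

/-- The Empirical Hypothesis for a sequence:
`G_{(k-1)j+i} ∈ 1 + q^{2j+1} ℤ⟦q⟧` for all `j ≥ 0`, `1 ≤ i ≤ k`. -/
def SatisfiesEH (k : ℕ) (G : ℕ → PowerSeries ℚ) : Prop :=
  ∀ j i, 1 ≤ i → i ≤ k → ∃ γ : PowerSeries ℤ,
    G ((k - 1) * j + i) = 1 + PowerSeries.X ^ (2 * j + 1) *
      PowerSeries.map (Int.castRingHom ℚ) γ

theorem rec_flip (k : ℕ) (G : ℕ → PowerSeries ℚ) (j i : ℕ) (hj : 1 ≤ j) (hi2 : 2 ≤ i)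
  (h : ((G ((k - 1) * j + i) : PowerSeries ℚ) : LaurentSeries ℚ) =
      ((G ((k - 1) * (j - 1) + (k - i + 1)) : PowerSeries ℚ)
          - (G ((k - 1) * (j - 1) + (k - i + 2)) : PowerSeries ℚ)) /
        ((PowerSeries.X : PowerSeries ℚ) : LaurentSeries ℚ) ^ (2 * j * (i - 1)) -
      ((PowerSeries.X : PowerSeries ℚ) : LaurentSeries ℚ)⁻¹ *
        ((G ((k - 1) * j + (i - 1)) : PowerSeries ℚ) : LaurentSeries ℚ)) :
    G ((k - 1) * (j - 1) + (k - i + 1)) - G ((k - 1) * (j - 1) + (k - i + 2)) =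
      PowerSeries.X ^ (2 * j * (i - 1)) * G ((k - 1) * j + i) +
      PowerSeries.X ^ (2 * j * (i - 1) - 1) * G ((k - 1) * j + (i - 1)) := by
  set x : LaurentSeries ℚ := ((PowerSeries.X : PowerSeries ℚ) : LaurentSeries ℚ) with hxdef
  set e := 2 * j * (i - 1) with hedef
  have hXne : x ≠ 0 := by
    intro hc
    apply PowerSeries.X_ne_zero (R := ℚ)
    apply HahnSeries.ofPowerSeries_injective (Γ := ℤ)
    rw [map_zero]; exact hc
  have he : 2 ≤ e := by
    have h1 : 1 ≤ i - 1 := by omega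
    calc 2 = 2 * 1 * 1 := by ring
    _ ≤ 2 * j * (i - 1) := Nat.mul_le_mul (Nat.mul_le_mul le_rfl hj) h1
  set A : LaurentSeries ℚ := ((G ((k - 1) * j + i) : PowerSeries ℚ) : LaurentSeries ℚ)
  set B : LaurentSeries ℚ := ((G ((k - 1) * (j - 1) + (k - i + 1)) : PowerSeries ℚ) : LaurentSeries ℚ)
  set C : LaurentSeries ℚ := ((G ((k - 1) * (j - 1) + (k - i + 2)) : PowerSeries ℚ) : LaurentSeries ℚ)
  set D : LaurentSeries ℚ := ((G ((k - 1) * j + (i - 1)) : PowerSeries ℚ) : LaurentSeries ℚ)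
  have hdiv : (B - C) / x ^ e = A + x⁻¹ * D := by rw [h]; ring
  have hBC : B - C = (A + x⁻¹ * D) * x ^ e := (div_eq_iff (pow_ne_zero e hXne)).mp hdiv
  have hxx : x⁻¹ * x ^ e = x ^ (e - 1) := by
    rw [show e = (e - 1) + 1 by omega, pow_succ']
    exact inv_mul_cancel_left₀ hXne _
  have key : B - C = x ^ e * A + x ^ (e - 1) * D := by
    rw [hBC, add_mul, mul_assoc, mul_comm D (x ^ e), ← mul_assoc, hxx]; ring
  apply HahnSeries.ofPowerSeries_injective (Γ := ℤ)
  rw [PowerSeries.coe_sub, PowerSeries.coe_add, PowerSeries.coe_mul, PowerSeries.coe_mul,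
    PowerSeries.coe_pow, PowerSeries.coe_pow]
  exact key

/-- Uniqueness: two sequences of formal power series with constant term `1`
satisfying the Göllnitz–Gordon–Andrews recursions and the Empirical Hypothesis
coincide. -/
theorem uniqueness_from_EH (k : ℕ) (hk : 2 ≤ k) (Jser Sser : ℕ → PowerSeries ℚ)
    (hJ0 : ∀ l, 1 ≤ l → PowerSeries.constantCoeff (Jser l) = 1)
    (hS0 : ∀ l, 1 ≤ l → PowerSeries.constantCoeff (Sser l) = 1)
    (hJrec : SatisfiesGGARecursion k Jser) (hSrec : SatisfiesGGARecursion k Sser)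
    (hJEH : SatisfiesEH k Jser) (hSEH : SatisfiesEH k Sser) :
    ∀ l, 1 ≤ l → Jser l = Sser l := by
  classical
  set D : ℕ → PowerSeries ℚ := fun l => Jser l - Sser l with hD
  have hrec : ∀ j i, 1 ≤ j → 2 ≤ i → i ≤ k →
      D ((k - 1) * (j - 1) + (k - i + 1)) - D ((k - 1) * (j - 1) + (k - i + 2)) =
        PowerSeries.X ^ (2 * j * (i - 1)) * D ((k - 1) * j + i) +
        PowerSeries.X ^ (2 * j * (i - 1) - 1) * D ((k - 1) * j + (i - 1)) := by
    intro j i hj hi2 hik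
    have hJ := rec_flip k Jser j i hj hi2 (hJrec j i hj hi2 hik)
    have hS := rec_flip k Sser j i hj hi2 (hSrec j i hj hi2 hik)
    simp only [hD]
    linear_combination hJ - hS
  have hEHdiff : ∀ j i, 1 ≤ i → i ≤ k → ∀ n, n < 2 * j + 1 →
      PowerSeries.coeff n (D ((k - 1) * j + i)) = 0 := by
    intro j i h1 h2 n hn
    obtain ⟨γJ, hγJ⟩ := hJEH j i h1 h2
    obtain ⟨γS, hγS⟩ := hSEH j i h1 h2
    simp only [hD]
    rw [hγJ, hγS, show (1 + PowerSeries.X ^ (2 * j + 1) * PowerSeries.map (Int.castRingHom ℚ) γJ)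
        - (1 + PowerSeries.X ^ (2 * j + 1) * PowerSeries.map (Int.castRingHom ℚ) γS)
        = PowerSeries.X ^ (2 * j + 1) *
          (PowerSeries.map (Int.castRingHom ℚ) γJ - PowerSeries.map (Int.castRingHom ℚ) γS)
        by ring]
    rw [PowerSeries.coeff_X_pow_mul']
    rw [if_neg (by omega)]
  have main : ∀ n : ℕ, ∀ j i, 1 ≤ i → i ≤ k →
      PowerSeries.coeff n (D ((k - 1) * j + i)) = 0 := by
    intro n
    induction n using Nat.strong_induction_on with
    | _ n IH =>
      have coeffX : ∀ (a : ℕ) (j' i' : ℕ), 1 ≤ a → 1 ≤ i' → i' ≤ k →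
          PowerSeries.coeff n (PowerSeries.X ^ a * D ((k - 1) * j' + i')) = 0 := by
        intro a j' i' ha h1 h2
        rw [PowerSeries.coeff_X_pow_mul']
        split
        · exact IH (n - a) (by omega) j' i' h1 h2
        · rfl
      have shelf : ∀ j i, 1 ≤ i → i ≤ k →
          PowerSeries.coeff n (D ((k - 1) * j + i)) =
          PowerSeries.coeff n (D ((k - 1) * j + k)) := by
        intro j
        have aux : ∀ m, ∀ i, 1 ≤ i → i ≤ k → k - i = m →
            PowerSeries.coeff n (D ((k - 1) * j + i)) =
            PowerSeries.coeff n (D ((k - 1) * j + k)) := by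
          intro m
          induction m with
          | zero =>
            intro i h1 h2 h3
            have : i = k := by omega
            rw [this]
          | succ m ihm =>
            intro i h1 h2 h3
            have H := hrec (j + 1) (k - i + 1) (by omega) (by omega) (by omega)
            rw [show (j + 1) - 1 = j by omega, show k - (k - i + 1) + 1 = i by omega,
              show k - (k - i + 1) + 2 = i + 1 by omega] at H
            have hki : 1 ≤ k - i := by omega
            have he2 : 2 ≤ 2 * (j + 1) * (k - i) := by nlinarith
            have hcoeff := congrArg (PowerSeries.coeff n) H
            rw [map_sub, map_add] at hcoeff
            rw [show k - i + 1 - 1 = k - i by omega] at hcoeff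
            rw [coeffX _ (j + 1) (k - i + 1) (by omega) (by omega) (by omega),
              coeffX _ (j + 1) (k - i) (by omega) (by omega) (by omega)] at hcoeff
            rw [add_zero] at hcoeff
            rw [sub_eq_zero.mp hcoeff, ihm (i + 1) (by omega) (by omega) (by omega)]
        intro i h1 h2; exact aux (k - i) i h1 h2 rfl
      have climb : ∀ t j, PowerSeries.coeff n (D ((k - 1) * j + 1)) =
          PowerSeries.coeff n (D ((k - 1) * (j + t) + 1)) := by
        intro t
        induction t with
        | zero => intro j; rfl
        | succ t iht =>
          intro j
          have hidx : (k - 1) * j + k = (k - 1) * (j + 1) + 1 := by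
            rw [Nat.mul_succ]; omega
          rw [shelf j 1 le_rfl (by omega), hidx, iht (j + 1),
            show j + 1 + t = j + (t + 1) by omega]
      intro j i h1 h2
      rw [shelf j i h1 h2, show (k - 1) * j + k = (k - 1) * (j + 1) + 1 by rw [Nat.mul_succ]; omega,
        climb n (j + 1)]
      exact hEHdiff (j + 1 + n) 1 le_rfl (by omega) n (by omega)
  intro l hl
  have hdecomp : (k - 1) * ((l - 1) / (k - 1)) + ((l - 1) % (k - 1) + 1) = l := by
    have := Nat.div_add_mod (l - 1) (k - 1)
    omega
  have hmod : (l - 1) % (k - 1) < k - 1 := Nat.mod_lt _ (by omega)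
  have hzero : D l = 0 := by
    ext n
    rw [← hdecomp]
    rw [main n ((l - 1) / (k - 1)) ((l - 1) % (k - 1) + 1) (by omega) (by omega)]
    simp
  have := sub_eq_zero.mp (show Jser l - Sser l = 0 from hzero)
  exact this
end

section
/- For k ≥ 2, J ≥ 0, and 1 ≤ i ≤ k, the product ∏_{m≥1, m≢0,±i (mod 2k+1)} (1−q^m)^{-1} evaluated through the Lepowsky–Zhu recursion at shelf J, namely the series G_{(k-1)J+i}(q) = [∑_{λ≥0} (-1)^λ q^{(2k+1)·C(λ,2)+(k(J+1)+i)λ}(1−q^{λ+1})⋯(1−q^{λ+J})(1−q^{(k-i+1)(2λ+J+1)})] / ∏_{n≥1}(1−q^n), is the generating function for partitions with difference at least 2 at distance k−1 (b_p − b_{p+k-1} ≥ 2), smallest part greater than J, and part J+1 appearing at most k−i times. -/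
open PowerSeries Finset

/-- The Lepowsky–Zhu closed form for Gordon's identities:
`[∑_{λ ≥ 0} (-1)^λ q^{(2k+1)·C(λ,2)+(k(j+1)+i)λ} (1-q^{λ+1})⋯(1-q^{λ+j})
  (1-q^{(k-i+1)(2λ+j+1)})] / ∏_{n ≥ 1}(1-q^n)`. -/
noncomputable def GordonCf (k j i : ℕ) : PowerSeries ℚ :=
  (sProd (fun m => 1 ≤ m))⁻¹ * sSum (fun l =>
    (-1 : PowerSeries ℚ) ^ l *
    PowerSeries.X ^ ((2 * k + 1) * l.choose 2 + (k * (j + 1) + i) * l) *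
    (∏ t ∈ Finset.Icc 1 j, (1 - PowerSeries.X ^ (l + t))) *
    (1 - PowerSeries.X ^ ((k - i + 1) * (2 * l + j + 1))))


-- Abbreviations
/-- exponent -/
def Ee (k j i l : ℕ) : ℕ := (2 * k + 1) * l.choose 2 + (k * (j + 1) + i) * l

noncomputable def PJ (j l : ℕ) : PowerSeries ℚ := ∏ t ∈ Finset.Icc 1 j, (1 - PowerSeries.X ^ (l + t))

noncomputable def Tm (k j i l : ℕ) : PowerSeries ℚ :=
  (-1 : PowerSeries ℚ) ^ l * PowerSeries.X ^ (Ee k j i l) * PJ j l *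
    (1 - PowerSeries.X ^ ((k - i + 1) * (2 * l + j + 1)))

lemma gordonCf_eq (k j i : ℕ) : GordonCf k j i = (sProd (fun m => 1 ≤ m))⁻¹ * sSum (Tm k j i) := rfl

lemma coeff_sSum (f : ℕ → PowerSeries ℚ) (d : ℕ) :
    PowerSeries.coeff d (sSum f) = ∑ l ∈ Finset.range (d + 1), PowerSeries.coeff d (f l) := by
  simp [sSum, PowerSeries.coeff_mk]

lemma coeff_X_pow_mul'' (φ : PowerSeries ℚ) (g d : ℕ) :
    PowerSeries.coeff d (PowerSeries.X ^ g * φ) =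
      if g ≤ d then PowerSeries.coeff (d - g) φ else 0 := by
  rw [mul_comm, PowerSeries.coeff_mul_X_pow']

lemma coeff_X_pow_mul_zero (φ : PowerSeries ℚ) {g d : ℕ} (h : d < g) :
    PowerSeries.coeff d (PowerSeries.X ^ g * φ) = 0 := by
  rw [coeff_X_pow_mul'', if_neg (by omega)]

lemma coeff_Tm_zero {k j i l d : ℕ} (hi : 1 ≤ i) (h : d < l) :
    PowerSeries.coeff d (Tm k j i l) = 0 := by
  have : Tm k j i l = PowerSeries.X ^ (Ee k j i l) *
      ((-1 : PowerSeries ℚ) ^ l * PJ j l * (1 - PowerSeries.X ^ ((k - i + 1) * (2 * l + j + 1)))) := by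
    unfold Tm; ring
  rw [this]
  apply coeff_X_pow_mul_zero
  have : l ≤ Ee k j i l := by
    have : l ≤ (k * (j + 1) + i) * l := Nat.le_mul_of_pos_left l (by positivity)
    unfold Ee; omega
  omega

lemma PJ_succ (j l : ℕ) : PJ (j + 1) l = PJ j l * (1 - PowerSeries.X ^ (l + (j + 1))) := by
  unfold PJ
  rw [Finset.prod_Icc_succ_top (by omega : 1 ≤ j + 1)]

lemma PJ_shift (j l : ℕ) : (1 - PowerSeries.X ^ (l + 1)) * PJ j (l + 1) = PJ (j + 1) l := by
  induction j with
  | zero => simp [PJ]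
  | succ j ih =>
      rw [PJ_succ, PJ_succ, ← mul_assoc, ih]
      have : l + 1 + (j + 1) = l + (j + 1 + 1) := by omega
      rw [this]

lemma step_term (i c j l : ℕ) (hi : 1 ≤ i) (hc : 1 ≤ c) :
    Tm (i + c) j i l - Tm (i + c) j (i + 1) l
      - PowerSeries.X ^ (c * (j + 1)) * Tm (i + c) (j + 1) (i + c - i + 1) l
    = (-1 : PowerSeries ℚ) ^ l * PowerSeries.X ^ (Ee (i + c) j i (l + 1)) * PJ (j + 1) l
      + (-1 : PowerSeries ℚ) ^ l * PowerSeries.X ^ (Ee (i + c) j i l) *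
          (1 - PowerSeries.X ^ l) * PJ j l := by
  have h1 : i + c - i + 1 = c + 1 := by omega
  have h2 : i + c - (i + 1) + 1 = c := by omega
  have h3 : i + c - (c + 1) + 1 = i := by omega
  unfold Tm
  rw [h1, h2, h3, PJ_succ]
  unfold Ee
  rw [Nat.choose_succ_succ l 1, Nat.choose_one_right]
  ring

noncomputable def V2 (k j l : ℕ) : PowerSeries ℚ :=
  (-1 : PowerSeries ℚ) ^ l * PowerSeries.X ^ (Ee k j k l) * (1 - PowerSeries.X ^ l) * PJ j l

lemma shelf_term (k j l : ℕ) (hk : 1 ≤ k) :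
    Tm k j k l - Tm k (j + 1) 1 l = V2 k j l - V2 k j (l + 1) := by
  have h1 : k - k + 1 = 1 := by omega
  have h2 : k - 1 + 1 = k := by omega
  unfold Tm V2
  rw [h1, h2]
  have hsh : (1 - PowerSeries.X ^ (l + 1)) * PJ j (l + 1) = PJ j l *
      (1 - PowerSeries.X ^ (l + (j + 1))) := by rw [PJ_shift, PJ_succ]
  have expand : (-1 : PowerSeries ℚ) ^ (l + 1) * PowerSeries.X ^ (Ee k j k (l + 1)) *
      (1 - PowerSeries.X ^ (l + 1)) * PJ j (l + 1)
      = -((-1 : PowerSeries ℚ) ^ l * PowerSeries.X ^ (Ee k j k (l + 1)) * (PJ j l *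
      (1 - PowerSeries.X ^ (l + (j + 1))))) := by
    rw [← hsh]; ring
  rw [expand, PJ_succ]
  unfold Ee
  rw [Nat.choose_succ_succ l 1, Nat.choose_one_right]
  ring

noncomputable def Vt (k j i l : ℕ) : PowerSeries ℚ :=
  (-1 : PowerSeries ℚ) ^ l * PowerSeries.X ^ (Ee k j i (l + 1)) * PJ (j + 1) l

noncomputable def Wt (k j i l : ℕ) : PowerSeries ℚ :=
  (-1 : PowerSeries ℚ) ^ l * PowerSeries.X ^ (Ee k j i l) * (1 - PowerSeries.X ^ l) * PJ j l

lemma Wt_zero (k j i : ℕ) : Wt k j i 0 = 0 := by simp [Wt]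

lemma Wt_succ (k j i l : ℕ) : Wt k j i (l + 1) = - Vt k j i l := by
  unfold Wt Vt
  rw [← PJ_shift]
  ring

lemma sum_VW (k j i d : ℕ) :
    ∑ l ∈ Finset.range (d + 1), (Vt k j i l + Wt k j i l) = Vt k j i d := by
  induction d with
  | zero => simp [Wt_zero]
  | succ d ih => rw [Finset.sum_range_succ, ih, Wt_succ]; ring

lemma sum_V2 (k j d : ℕ) :
    ∑ l ∈ Finset.range (d + 1), (V2 k j l - V2 k j (l + 1)) = - V2 k j (d + 1) := by
  rw [Finset.sum_range_sub' (fun l => V2 k j l)]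
  have : V2 k j 0 = 0 := by simp [V2]
  rw [this]; ring

lemma Ee_ge (k j i l : ℕ) (hi : 1 ≤ i) : l ≤ Ee k j i l := by
  have : l ≤ (k * (j + 1) + i) * l := Nat.le_mul_of_pos_left l (by positivity)
  unfold Ee; omega

lemma coeff_Vt_zero {k j i l d : ℕ} (hi : 1 ≤ i) (h : d ≤ l) :
    PowerSeries.coeff d (Vt k j i l) = 0 := by
  have : Vt k j i l = PowerSeries.X ^ (Ee k j i (l + 1)) *
      ((-1 : PowerSeries ℚ) ^ l * PJ (j + 1) l) := by unfold Vt; ring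
  rw [this]
  exact coeff_X_pow_mul_zero _ (by have := Ee_ge k j i (l + 1) hi; omega)

lemma coeff_V2_zero {k j l d : ℕ} (hk : 1 ≤ k) (h : d < l) :
    PowerSeries.coeff d (V2 k j l) = 0 := by
  have : V2 k j l = PowerSeries.X ^ (Ee k j k l) *
      ((-1 : PowerSeries ℚ) ^ l * (1 - PowerSeries.X ^ l) * PJ j l) := by unfold V2; ring
  rw [this]
  exact coeff_X_pow_mul_zero _ (lt_of_lt_of_le h (Ee_ge k j k l hk))

lemma coeff_X_pow_mul_sSum (g d : ℕ) (f : ℕ → PowerSeries ℚ)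
    (hf : ∀ l d', d' < l → PowerSeries.coeff d' (f l) = 0) :
    PowerSeries.coeff d (PowerSeries.X ^ g * sSum f) =
      ∑ l ∈ Finset.range (d + 1), PowerSeries.coeff d (PowerSeries.X ^ g * f l) := by
  rw [coeff_X_pow_mul'']
  by_cases hg : g ≤ d
  · rw [if_pos hg, coeff_sSum]
    have : ∀ l ∈ Finset.range (d + 1), PowerSeries.coeff d (PowerSeries.X ^ g * f l)
        = if l ∈ Finset.range (d - g + 1) then PowerSeries.coeff (d - g) (f l) else 0 := by
      intro l _
      rw [coeff_X_pow_mul'', if_pos hg]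
      by_cases hl : l ∈ Finset.range (d - g + 1)
      · rw [if_pos hl]
      · rw [if_neg hl]
        exact hf l (d - g) (by simp at hl; omega)
    rw [Finset.sum_congr rfl this, Finset.sum_ite_mem]
    congr 1
    rw [Finset.inter_eq_right.mpr]
    intro x hx
    simp at hx ⊢
    omega
  · rw [if_neg hg]
    symm
    apply Finset.sum_eq_zero
    intro l _
    rw [coeff_X_pow_mul'', if_neg hg]

lemma step_series (k j i : ℕ) (hi : 1 ≤ i) (hik : i < k) :
    sSum (Tm k j i) = sSum (Tm k j (i + 1)) +
      PowerSeries.X ^ ((k - i) * (j + 1)) * sSum (Tm k (j + 1) (k - i + 1)) := by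
  ext d
  rw [map_add, coeff_sSum, coeff_sSum,
      coeff_X_pow_mul_sSum _ _ _ (fun l d' h => coeff_Tm_zero (by omega) h)]
  have key : ∀ l, Tm k j i l = Tm k j (i + 1) l +
      PowerSeries.X ^ ((k - i) * (j + 1)) * Tm k (j + 1) (k - i + 1) l +
      (Vt k j i l + Wt k j i l) := by
    intro l
    have hc : k = i + (k - i) := by omega
    have h := step_term i (k - i) j l hi (by omega)
    rw [← hc] at h
    unfold Vt Wt
    linear_combination h
  have : ∑ l ∈ Finset.range (d + 1), PowerSeries.coeff d (Tm k j i l)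
      = ∑ l ∈ Finset.range (d + 1), (PowerSeries.coeff d (Tm k j (i + 1) l)
        + PowerSeries.coeff d (PowerSeries.X ^ ((k - i) * (j + 1)) * Tm k (j + 1) (k - i + 1) l)
        + PowerSeries.coeff d (Vt k j i l + Wt k j i l)) := by
    refine Finset.sum_congr rfl fun l _ => ?_
    rw [key l, map_add, map_add]
  rw [this, Finset.sum_add_distrib, Finset.sum_add_distrib]
  have hz : ∑ l ∈ Finset.range (d + 1), PowerSeries.coeff d (Vt k j i l + Wt k j i l) = 0 := by
    rw [← map_sum, sum_VW]
    exact coeff_Vt_zero hi le_rfl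
  rw [hz, add_zero]

lemma shelf_series (k j : ℕ) (hk : 1 ≤ k) : sSum (Tm k j k) = sSum (Tm k (j + 1) 1) := by
  ext d
  rw [coeff_sSum, coeff_sSum]
  have : ∑ l ∈ Finset.range (d + 1), PowerSeries.coeff d (Tm k j k l)
      = ∑ l ∈ Finset.range (d + 1), (PowerSeries.coeff d (Tm k (j + 1) 1 l)
        + PowerSeries.coeff d (V2 k j l - V2 k j (l + 1))) := by
    refine Finset.sum_congr rfl fun l _ => ?_
    rw [← map_add]
    congr 1
    have h := shelf_term k j l hk
    linear_combination h
  rw [this, Finset.sum_add_distrib]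
  have hz : ∑ l ∈ Finset.range (d + 1), PowerSeries.coeff d (V2 k j l - V2 k j (l + 1)) = 0 := by
    rw [← map_sum, sum_V2, map_neg, coeff_V2_zero hk (Nat.lt_succ_self d), neg_zero]
  rw [hz, add_zero]

lemma gordon_shelf (k j : ℕ) (hk : 1 ≤ k) : GordonCf k j k = GordonCf k (j + 1) 1 := by
  rw [gordonCf_eq, gordonCf_eq, shelf_series k j hk]

lemma gordon_step (k j i : ℕ) (hi : 1 ≤ i) (hik : i < k) :
    GordonCf k j i = GordonCf k j (i + 1) +
      PowerSeries.X ^ ((k - i) * (j + 1)) * GordonCf k (j + 1) (k - i + 1) := by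
  rw [gordonCf_eq, gordonCf_eq, gordonCf_eq, step_series k j i hi hik]
  ring

lemma gordon_step_coeff (k j i n : ℕ) (hi : 1 ≤ i) (hik : i < k) :
    PowerSeries.coeff n (GordonCf k j i) = PowerSeries.coeff n (GordonCf k j (i + 1)) +
      (if (k - i) * (j + 1) ≤ n then
        PowerSeries.coeff (n - (k - i) * (j + 1)) (GordonCf k (j + 1) (k - i + 1)) else 0) := by
  rw [gordon_step k j i hi hik, map_add, coeff_X_pow_mul'']

lemma coeff_mul_zero_of_right (A B : PowerSeries ℚ) (n : ℕ)
    (h : ∀ v ≤ n, PowerSeries.coeff v B = 0) : PowerSeries.coeff n (A * B) = 0 := by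
  rw [PowerSeries.coeff_mul]
  apply Finset.sum_eq_zero
  intro p hp
  rw [Finset.HasAntidiagonal.mem_antidiagonal] at hp
  rw [h p.2 (by omega), mul_zero]

lemma prod_one_add (v : ℕ) (S : Finset ℕ) (h : ∀ m ∈ S, v < m) :
    ∃ hs : PowerSeries ℚ, ∏ m ∈ S, (1 - PowerSeries.X ^ m) = 1 + PowerSeries.X ^ (v + 1) * hs := by
  induction S using Finset.induction_on with
  | empty => exact ⟨0, by simp⟩
  | insert a S' hnot ih =>
      obtain ⟨hs, hhs⟩ := ih (fun m hm => h m (Finset.mem_insert_of_mem hm))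
      have ha : v < a := h a (Finset.mem_insert_self a S')
      refine ⟨hs - PowerSeries.X ^ (a - (v + 1)) * (1 + PowerSeries.X ^ (v + 1) * hs), ?_⟩
      rw [Finset.prod_insert hnot, hhs]
      have : (PowerSeries.X : PowerSeries ℚ) ^ a = PowerSeries.X ^ (v + 1) * PowerSeries.X ^ (a - (v + 1)) := by
        rw [← pow_add]
        congr 1
        omega
      rw [this]
      ring

lemma coeff_mul_prod_high (A : PowerSeries ℚ) (v : ℕ) (S : Finset ℕ) (h : ∀ m ∈ S, v < m) :
    PowerSeries.coeff v (A * ∏ m ∈ S, (1 - PowerSeries.X ^ m)) = PowerSeries.coeff v A := by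
  obtain ⟨hs, hhs⟩ := prod_one_add v S h
  rw [hhs, mul_add, mul_one, map_add]
  have : PowerSeries.coeff v (A * (PowerSeries.X ^ (v + 1) * hs)) = 0 := by
    apply coeff_mul_zero_of_right
    intro w hw
    exact coeff_X_pow_mul_zero _ (by omega)
  rw [this, add_zero]

lemma coeff_sProd_eq (j v : ℕ) (hv : v ≤ j) :
    PowerSeries.coeff v (sProd (fun m => 1 ≤ m)) = PowerSeries.coeff v (PJ j 0) := by
  have h1 : (Finset.range (v + 1)).filter (fun m => 1 ≤ m) = Finset.Icc 1 v := by
    ext m; simp; omega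
  have h2 : PJ j 0 = (∏ m ∈ Finset.Icc 1 v, (1 - PowerSeries.X ^ m)) *
      ∏ m ∈ Finset.Icc 1 j \ Finset.Icc 1 v, (1 - PowerSeries.X ^ m) := by
    unfold PJ
    rw [mul_comm, Finset.prod_sdiff (Finset.Icc_subset_Icc_right hv)]
    exact Finset.prod_congr rfl (fun t _ => by rw [Nat.zero_add])
  rw [h2, coeff_mul_prod_high _ v _ (fun m hm => by
    simp [Finset.mem_sdiff, Finset.mem_Icc] at hm; omega)]
  unfold sProd
  rw [PowerSeries.coeff_mk, h1]

lemma coeff_Tm_zero' {k j i l d : ℕ} (h : d < Ee k j i l) :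
    PowerSeries.coeff d (Tm k j i l) = 0 := by
  have hrw : Tm k j i l = PowerSeries.X ^ (Ee k j i l) *
      ((-1 : PowerSeries ℚ) ^ l * PJ j l * (1 - PowerSeries.X ^ ((k - i + 1) * (2 * l + j + 1)))) := by
    unfold Tm; ring
  rw [hrw]
  exact coeff_X_pow_mul_zero _ h

lemma coeff_sSum_Tm_eq (k j i v : ℕ) (hk : 1 ≤ k) (hv : v ≤ j) :
    PowerSeries.coeff v (sSum (Tm k j i)) = PowerSeries.coeff v (PJ j 0) := by
  rw [coeff_sSum]
  have hz : ∀ l ∈ Finset.range (v + 1), l ≠ 0 → PowerSeries.coeff v (Tm k j i l) = 0 := by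
    intro l _ hl
    apply coeff_Tm_zero'
    have h1 : k * (j + 1) + i ≤ (k * (j + 1) + i) * l := Nat.le_mul_of_pos_right _ (by omega)
    have h2 : j + 1 ≤ k * (j + 1) := Nat.le_mul_of_pos_left _ (by omega)
    unfold Ee
    omega
  rw [Finset.sum_eq_single 0 (fun l hl hne => hz l hl hne) (by intro h; simp at h)]
  have hT0 : Tm k j i 0 = PJ j 0 - PowerSeries.X ^ ((k - i + 1) * (2 * 0 + j + 1)) * PJ j 0 := by
    unfold Tm Ee
    simp
    ring
  rw [hT0, map_sub]
  have : PowerSeries.coeff v (PowerSeries.X ^ ((k - i + 1) * (2 * 0 + j + 1)) * PJ j 0) = 0 := by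
    apply coeff_X_pow_mul_zero
    have h := Nat.le_mul_of_pos_left (2 * 0 + j + 1) (show 0 < k - i + 1 by omega)
    omega
  rw [this, sub_zero]

lemma constantCoeff_sProd : PowerSeries.constantCoeff (sProd (fun m => 1 ≤ m)) = 1 := by
  rw [← PowerSeries.coeff_zero_eq_constantCoeff_apply]
  unfold sProd
  rw [PowerSeries.coeff_mk]
  have : (Finset.range 1).filter (fun m => 1 ≤ m) = ∅ := by ext m; simp
  rw [this]
  simp

lemma gordon_tail (k j i n : ℕ) (hk : 1 ≤ k) (hn : n ≤ j) :
    PowerSeries.coeff n (GordonCf k j i) = if n = 0 then 1 else 0 := by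
  rw [gordonCf_eq]
  set P := sProd (fun m => 1 ≤ m) with hP
  have hinv : P⁻¹ * P = 1 :=
    PowerSeries.inv_mul_cancel P (by rw [constantCoeff_sProd]; norm_num)
  have hsplit : P⁻¹ * sSum (Tm k j i) = 1 + P⁻¹ * (sSum (Tm k j i) - P) := by
    rw [mul_sub, hinv]; ring
  rw [hsplit, map_add]
  have hz : PowerSeries.coeff n (P⁻¹ * (sSum (Tm k j i) - P)) = 0 := by
    apply coeff_mul_zero_of_right
    intro v hv
    rw [map_sub, coeff_sSum_Tm_eq k j i v hk (by omega), coeff_sProd_eq j v (by omega), sub_self]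
  rw [hz, add_zero, PowerSeries.coeff_one]

/-! ### Combinatorial part -/

def GPred (k J n m : ℕ) (b : List ℕ) : Prop :=
  b.Pairwise (· ≥ ·) ∧ (∀ x ∈ b, 0 < x) ∧ b.sum = n ∧
  (∀ p, p + (k - 1) < b.length → b.getD (p + (k - 1)) 0 + 2 ≤ b.getD p 0) ∧
  (∀ x ∈ b, J < x) ∧ b.count (J + 1) ≤ m

noncomputable def Ncard (k J n m : ℕ) : ℕ := Nat.card {b : List ℕ // GPred k J n m b}

lemma length_le_sum : ∀ (l : List ℕ), (∀ x ∈ l, 0 < x) → l.length ≤ l.sum := by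
  intro l
  induction l with
  | nil => simp
  | cons x xs ih =>
      intro h
      have h1 := h x (List.mem_cons_self)
      have h2 := ih (fun y hy => h y (List.mem_cons_of_mem x hy))
      simp only [List.length_cons, List.sum_cons]
      omega

lemma mem_le_sum {l : List ℕ} {x : ℕ} (h : x ∈ l) : x ≤ l.sum :=
  List.single_le_sum (fun y _ => Nat.zero_le y) x h

lemma finite_of (Q : List ℕ → Prop) (n : ℕ)
    (h : ∀ b, Q b → b.sum = n ∧ ∀ x ∈ b, 0 < x) : Finite {b : List ℕ // Q b} := by
  have key : ∀ b, Q b → b.length ≤ n := by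
    intro b hb
    have e1 := (h b hb).1
    have e2 := length_le_sum b (h b hb).2
    omega
  have bound : ∀ b, Q b → ∀ p : ℕ, b.getD p 0 < n + 1 := by
    intro b hb p
    by_cases hp : p < b.length
    · rw [List.getD_eq_getElem b 0 hp]
      have := mem_le_sum (List.getElem_mem hp)
      have := (h b hb).1
      omega
    · rw [List.getD_eq_default b 0 (by omega)]
      omega
  apply Finite.of_injective (fun b : {b : List ℕ // Q b} =>
    (fun p : Fin n => (⟨b.1.getD p 0, bound b.1 b.2 p⟩ : Fin (n + 1)) : Fin n → Fin (n + 1)))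
  rintro ⟨b1, hb1⟩ ⟨b2, hb2⟩ heq
  simp only [Subtype.mk.injEq] at heq ⊢
  have hgd : ∀ p : Fin n, b1.getD p 0 = b2.getD p 0 := by
    intro p
    have := congrFun heq p
    simpa using this
  have hlen1 : b1.length ≤ n := key b1 hb1
  have hlen2 : b2.length ≤ n := key b2 hb2
  have hpos : ∀ (l : List ℕ), (∀ x ∈ l, 0 < x) → ∀ p, p < l.length → 0 < l.getD p 0 := by
    intro l hl p hp
    rw [List.getD_eq_getElem l 0 hp]
    exact hl _ (List.getElem_mem hp)
  have hll : ∀ (c1 c2 : List ℕ), c1.length ≤ n → c2.length ≤ n →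
      (∀ x ∈ c1, 0 < x) → (∀ p : Fin n, c1.getD p 0 = c2.getD p 0) →
      c1.length ≤ c2.length := by
    intro c1 c2 h1 h2 hp hf
    by_contra hcon
    push_neg at hcon
    have hplt : c2.length < n := by omega
    have hfc := hf ⟨c2.length, hplt⟩
    simp only [Fin.val_mk] at hfc
    have hval := hpos c1 hp c2.length (by omega)
    have hz : c2.getD c2.length 0 = 0 := List.getD_eq_default _ _ (le_refl _)
    omega
  have hlen : b1.length = b2.length :=
    le_antisymm (hll b1 b2 hlen1 hlen2 (h b1 hb1).2 hgd)
      (hll b2 b1 hlen2 hlen1 (h b2 hb2).2 (fun p => (hgd p).symm))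
  apply List.ext_getElem hlen
  intro p hp1 hp2
  have := hgd ⟨p, by omega⟩
  rwa [List.getD_eq_getElem b1 0 hp1, List.getD_eq_getElem b2 0 hp2] at this

instance gpred_finite (k J n m : ℕ) : Finite {b : List ℕ // GPred k J n m b} :=
  finite_of _ n (fun b hb => ⟨hb.2.2.1, hb.2.1⟩)

lemma sorted_decomp (a : ℕ) : ∀ (l : List ℕ), l.Pairwise (· ≥ ·) → (∀ x ∈ l, a ≤ x) →
    ∃ t : List ℕ, l = t ++ List.replicate (l.count a) a ∧ (∀ x ∈ t, a < x) := by
  intro l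
  induction l with
  | nil => exact fun _ _ => ⟨[], by simp⟩
  | cons x xs ih =>
      intro hs hax
      rw [List.pairwise_cons] at hs
      by_cases hx : x = a
      · subst hx
        have hall : ∀ y ∈ xs, y = x := by
          intro y hy
          have := hs.1 y hy
          have := hax y (List.mem_cons_of_mem x hy)
          omega
        have hcnt : xs.count x = xs.length := List.count_eq_length.mpr (fun y hy => (hall y hy).symm)
        refine ⟨[], ?_, by simp⟩
        rw [List.count_cons_self, hcnt]
        simp only [List.nil_append, List.replicate_succ]
        congr 1
        exact List.eq_replicate_of_mem hall
      · have hlt : a < x := lt_of_le_of_ne (hax x (List.mem_cons_self)) (Ne.symm hx)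
        obtain ⟨t, ht, hta⟩ := ih hs.2 (fun y hy => hax y (List.mem_cons_of_mem x hy))
        refine ⟨x :: t, ?_, ?_⟩
        · rw [List.count_cons_of_ne (show x ≠ a from hx), List.cons_append, ← ht]
        · intro y hy
          rcases List.mem_cons.mp hy with h | h
          · omega
          · exact hta y h

lemma getD_append_repl {t : List ℕ} {m a p : ℕ} (h1 : t.length ≤ p) (h2 : p < t.length + m) :
    (t ++ List.replicate m a).getD p 0 = a := by
  rw [List.getD_append_right _ _ _ _ h1]
  have hlt : p - t.length < m := by omega
  rw [List.getD_eq_getElem _ 0 (by simpa using hlt)]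
  simp

lemma getD_prefix {t r : List ℕ} {p : ℕ} (h : p < t.length) :
    (t ++ r).getD p 0 = t.getD p 0 := List.getD_append _ _ _ _ h

lemma sorted_getD_eq {l : List ℕ} {a p : ℕ} (hs : l.Pairwise (· ≥ ·)) (ha : ∀ x ∈ l, a ≤ x)
    (h1 : l.length ≤ p + l.count a) (h2 : p < l.length) : l.getD p 0 = a := by
  obtain ⟨t, ht, hta⟩ := sorted_decomp a l hs ha
  have hct : t.count a = 0 := List.count_eq_zero.mpr (fun hmem => lt_irrefl a (hta a hmem))
  have hlen : l.length = t.length + l.count a := by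
    rw [ht]; simp [hct]
  rw [ht]
  exact getD_append_repl (by omega) (by omega)

lemma sorted_count_ge {l : List ℕ} {a p : ℕ} (hs : l.Pairwise (· ≥ ·)) (ha : ∀ x ∈ l, a ≤ x)
    (h2 : p < l.length) (h3 : l.getD p 0 = a) : l.length ≤ p + l.count a := by
  obtain ⟨t, ht, hta⟩ := sorted_decomp a l hs ha
  have hct : t.count a = 0 := List.count_eq_zero.mpr (fun hmem => lt_irrefl a (hta a hmem))
  have hlen : l.length = t.length + l.count a := by
    rw [ht]; simp [hct]
  by_contra hcon
  push_neg at hcon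
  have hp : p < t.length := by omega
  have : l.getD p 0 = t.getD p 0 := by rw [ht]; exact getD_prefix hp
  rw [List.getD_eq_getElem t 0 hp] at this
  have hmem := List.getElem_mem hp
  have := hta _ hmem
  omega

lemma Ncard_tail (k J n m : ℕ) (hn : n ≤ J) : Ncard k J n m = if n = 0 then 1 else 0 := by
  unfold Ncard
  split_ifs with h
  · subst h
    have hiff : ∀ b : List ℕ, GPred k J 0 m b ↔ b = [] := by
      intro b
      constructor
      · rintro ⟨_, hpos, hsum, _, _, _⟩
        cases b with
        | nil => rfl
        | cons x xs =>
            have := hpos x (List.mem_cons_self)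
            simp [List.sum_cons] at hsum
            omega
      · rintro rfl
        refine ⟨by simp, by simp, by simp, by simp, by simp, by simp⟩
    haveI : Unique {b : List ℕ // GPred k J 0 m b} :=
      { default := ⟨[], (hiff []).mpr rfl⟩
        uniq := fun b => Subtype.ext (by simpa using (hiff b.1).mp b.2) }
    exact Nat.card_unique
  · haveI : IsEmpty {b : List ℕ // GPred k J n m b} := by
      constructor
      rintro ⟨b, hs, hpos, hsum, hd, hJ, hc⟩
      cases b with
      | nil => simp at hsum; omega
      | cons x xs =>
          have h1 := hJ x (List.mem_cons_self)
          have h2 : x ≤ (x :: xs).sum := mem_le_sum (List.mem_cons_self)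
          omega
    exact Nat.card_of_isEmpty

lemma Ncard_shelf (k J n : ℕ) (hk : 2 ≤ k) : Ncard k J n 0 = Ncard k (J + 1) n (k - 1) := by
  unfold Ncard
  apply Nat.card_congr
  apply Equiv.subtypeEquivRight
  intro b
  constructor
  · rintro ⟨hs, hpos, hsum, hd, hJ, hc⟩
    have hnm : (J + 1) ∉ b := List.count_eq_zero.mp (by omega)
    have hgt : ∀ x ∈ b, J + 1 < x := by
      intro x hx
      have := hJ x hx
      rcases Nat.lt_or_ge (J + 1) x with h | h
      · exact h
      · exfalso; have : x = J + 1 := by omega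
        exact hnm (this ▸ hx)
    refine ⟨hs, hpos, hsum, hd, hgt, ?_⟩
    by_contra hcon
    push_neg at hcon
    rw [show J + 1 + 1 = J + 2 by omega] at hcon
    have hcnt : k ≤ b.count (J + 2) := by omega
    have hclen := List.count_le_length (a := J + 2) (l := b)
    set p := b.length - b.count (J + 2) with hp
    have hge : ∀ x ∈ b, J + 2 ≤ x := fun x hx => hgt x hx
    have h1 : b.getD p 0 = J + 2 :=
      sorted_getD_eq hs hge (by omega) (by omega)
    have h2 : b.getD (p + (k - 1)) 0 = J + 2 :=
      sorted_getD_eq hs hge (by omega) (by omega)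
    have := hd p (by omega)
    omega
  · rintro ⟨hs, hpos, hsum, hd, hJ, hc⟩
    refine ⟨hs, hpos, hsum, hd, fun x hx => by have := hJ x hx; omega, ?_⟩
    have : (J + 1) ∉ b := by
      intro hmem
      have := hJ _ hmem
      omega
    simp [List.count_eq_zero.mpr this]

lemma gpred_struct {k J n c : ℕ} {b : List ℕ} (hb : GPred k J n c b)
    (hcnt : b.count (J + 1) = c) :
    ∃ t : List ℕ, b = t ++ List.replicate c (J + 1) ∧ (∀ x ∈ t, J + 1 < x) ∧
      b.take (b.length - c) = t := by
  obtain ⟨hs, hpos, hsum, hd, hJ, hcle⟩ := hb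
  obtain ⟨t, ht, hta⟩ := sorted_decomp (J + 1) b hs (fun x hx => hJ x hx)
  rw [hcnt] at ht
  refine ⟨t, ht, hta, ?_⟩
  have hlen : b.length = t.length + c := by rw [ht]; simp
  rw [ht, List.take_left' (by simp)]

lemma sum_decomp {t : List ℕ} {c a : ℕ} :
    (t ++ List.replicate c a).sum = t.sum + c * a := by
  rw [List.sum_append, List.sum_replicate, smul_eq_mul]

lemma gpred_fwd {k J n c : ℕ} {b t : List ℕ} (hc1 : 1 ≤ c) (hck : c + 1 ≤ k)
    (hb : GPred k J n c b) (hbt : b = t ++ List.replicate c (J + 1))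
    (htgt : ∀ x ∈ t, J + 1 < x) :
    GPred k (J + 1) (n - c * (J + 1)) (k - c - 1) t := by
  obtain ⟨hs, hpos, hsum, hd, hJ, hcle⟩ := hb
  have hlen : b.length = t.length + c := by rw [hbt]; simp
  have hsum' : t.sum + c * (J + 1) = n := by rw [hbt, sum_decomp] at hsum; omega
  refine ⟨?_, ?_, by omega, ?_, htgt, ?_⟩
  · exact (hbt ▸ hs).sublist (List.sublist_append_left t _)
  · intro x hx
    exact hpos x (by rw [hbt]; exact List.mem_append_left _ hx)
  · intro p hp
    have e1 : b.getD p 0 = t.getD p 0 := by rw [hbt]; exact getD_prefix (by omega)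
    have e2 : b.getD (p + (k - 1)) 0 = t.getD (p + (k - 1)) 0 := by
      rw [hbt]; exact getD_prefix hp
    have := hd p (by omega)
    omega
  · rw [show J + 1 + 1 = J + 2 by omega]
    by_contra hcon
    push_neg at hcon
    have hcnt2 : k - c ≤ t.count (J + 2) := by omega
    have hclen := List.count_le_length (a := J + 2) (l := t)
    have htsort : t.Pairwise (· ≥ ·) := (hbt ▸ hs).sublist (List.sublist_append_left t _)
    have hge : ∀ x ∈ t, J + 2 ≤ x := fun x hx => htgt x hx
    set p := t.length - (k - c) with hp
    have h1 : t.getD p 0 = J + 2 := sorted_getD_eq htsort hge (by omega) (by omega)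
    have e1 : b.getD p 0 = t.getD p 0 := by rw [hbt]; exact getD_prefix (by omega)
    have e2 : b.getD (p + (k - 1)) 0 = J + 1 := by
      rw [hbt]; exact getD_append_repl (by omega) (by omega)
    have := hd p (by omega)
    omega

lemma gpred_bwd {k J n' c : ℕ} {d : List ℕ} (hc1 : 1 ≤ c) (hck : c + 1 ≤ k)
    (hd : GPred k (J + 1) n' (k - c - 1) d) :
    GPred k J (n' + c * (J + 1)) c (d ++ List.replicate c (J + 1)) ∧
      (d ++ List.replicate c (J + 1)).count (J + 1) = c := by
  obtain ⟨hs, hpos, hsum, hdf, hJ, hcle⟩ := hd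
  rw [show J + 1 + 1 = J + 2 by omega] at hcle
  have hnotmem : (J + 1) ∉ d := fun hmem => by have := hJ _ hmem; omega
  have hcount : (d ++ List.replicate c (J + 1)).count (J + 1) = c := by
    rw [List.count_append, List.count_eq_zero.mpr hnotmem, List.count_replicate_self]
    omega
  have hlen : (d ++ List.replicate c (J + 1)).length = d.length + c := by simp
  refine ⟨⟨?_, ?_, by rw [sum_decomp]; omega, ?_, ?_, by omega⟩, hcount⟩
  · rw [List.pairwise_append]
    refine ⟨hs, ?_, ?_⟩
    · rw [List.pairwise_replicate]; right; exact le_refl _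
    · intro x hx y hy
      have := hJ x hx
      have := List.eq_of_mem_replicate hy
      omega
  · intro x hx
    rcases List.mem_append.mp hx with h | h
    · exact hpos x h
    · have := List.eq_of_mem_replicate h; omega
  · intro p hp
    rw [hlen] at hp
    by_cases hpd : p + (k - 1) < d.length
    · have e1 : (d ++ List.replicate c (J + 1)).getD p 0 = d.getD p 0 :=
        getD_prefix (by omega)
      have e2 : (d ++ List.replicate c (J + 1)).getD (p + (k - 1)) 0 = d.getD (p + (k - 1)) 0 :=
        getD_prefix hpd
      have := hdf p hpd
      omega
    · have hpd2 : p < d.length := by omega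
      have e1 : (d ++ List.replicate c (J + 1)).getD p 0 = d.getD p 0 := getD_prefix hpd2
      have e2 : (d ++ List.replicate c (J + 1)).getD (p + (k - 1)) 0 = J + 1 :=
        getD_append_repl (by omega) (by omega)
      have hmem : d.getD p 0 ∈ d := by
        rw [List.getD_eq_getElem d 0 hpd2]; exact List.getElem_mem hpd2
      have hgt := hJ _ hmem
      have hge : ∀ x ∈ d, J + 2 ≤ x := fun x hx => hJ x hx
      have hne : d.getD p 0 ≠ J + 2 := by
        intro heq
        have := sorted_count_ge hs hge hpd2 heq
        omega
      omega
  · intro x hx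
    rcases List.mem_append.mp hx with h | h
    · have := hJ x h; omega
    · have := List.eq_of_mem_replicate h; omega

lemma gpred_mono {k J n m m' : ℕ} {b : List ℕ} (hb : GPred k J n m b)
    (h : b.count (J + 1) ≤ m') : GPred k J n m' b :=
  ⟨hb.1, hb.2.1, hb.2.2.1, hb.2.2.2.1, hb.2.2.2.2.1, h⟩

lemma gpred_count {k J n m : ℕ} {b : List ℕ} (hb : GPred k J n m b) :
    b.count (J + 1) ≤ m := hb.2.2.2.2.2

instance gpred_exact_finite (k J n c : ℕ) :
    Finite {b : List ℕ // GPred k J n c b ∧ b.count (J + 1) = c} :=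
  finite_of _ n (fun b hb => ⟨hb.1.2.2.1, hb.1.2.1⟩)

lemma Ncard_split (k J n c : ℕ) (hc : 1 ≤ c) :
    Ncard k J n c = Ncard k J n (c - 1) +
      Nat.card {b : List ℕ // GPred k J n c b ∧ b.count (J + 1) = c} := by
  unfold Ncard
  rw [← Nat.card_sum]
  apply Nat.card_congr
  refine
    { toFun := fun b => if h : b.1.count (J + 1) ≤ c - 1 then
        Sum.inl ⟨b.1, gpred_mono b.2 h⟩
      else Sum.inr ⟨b.1, b.2, by have := gpred_count b.2; omega⟩
      invFun := Sum.elim (fun b => ⟨b.1, gpred_mono b.2 (by have := gpred_count b.2; omega)⟩)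
        (fun b => ⟨b.1, b.2.1⟩)
      left_inv := ?_
      right_inv := ?_ }
  · intro b
    dsimp only
    split_ifs with h <;> rfl
  · rintro (b | b)
    · dsimp only [Sum.elim_inl]
      rw [dif_pos (gpred_count b.2)]
    · dsimp only [Sum.elim_inr]
      rw [dif_neg (by obtain ⟨-, hbc⟩ := b.2; omega)]

lemma Ncard_exact_empty (k J n c : ℕ) (hc : 1 ≤ c) (hn : ¬ c * (J + 1) ≤ n) :
    Nat.card {b : List ℕ // GPred k J n c b ∧ b.count (J + 1) = c} = 0 := by
  haveI : IsEmpty {b : List ℕ // GPred k J n c b ∧ b.count (J + 1) = c} := by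
    constructor
    rintro ⟨b, hb, hcnt⟩
    obtain ⟨t, hbt, _, _⟩ := gpred_struct hb hcnt
    have := hb.2.2.1
    rw [hbt, sum_decomp] at this
    omega
  exact Nat.card_of_isEmpty

lemma Ncard_exact (k J n c : ℕ) (hc1 : 1 ≤ c) (hck : c + 1 ≤ k) (hcn : c * (J + 1) ≤ n) :
    Nat.card {b : List ℕ // GPred k J n c b ∧ b.count (J + 1) = c} =
      Ncard k (J + 1) (n - c * (J + 1)) (k - c - 1) := by
  unfold Ncard
  apply Nat.card_congr
  refine
    { toFun := fun b => ⟨b.1.take (b.1.length - c), ?_⟩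
      invFun := fun d => ⟨d.1 ++ List.replicate c (J + 1), ?_⟩
      left_inv := ?_
      right_inv := ?_ }
  · obtain ⟨t, hbt, htgt, htake⟩ := gpred_struct b.2.1 b.2.2
    rw [htake]
    exact gpred_fwd hc1 hck b.2.1 hbt htgt
  · have h := gpred_bwd hc1 hck d.2
    rwa [Nat.sub_add_cancel hcn] at h
  · rintro ⟨b, hb⟩
    obtain ⟨t, hbt, htgt, htake⟩ := gpred_struct hb.1 hb.2
    apply Subtype.ext
    simp only
    rw [htake, ← hbt]
  · rintro ⟨d, hd⟩
    apply Subtype.ext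
    simp only
    rw [List.take_left' (by simp)]

lemma Ncard_step (k J n c : ℕ) (hc1 : 1 ≤ c) (hck : c + 1 ≤ k) :
    Ncard k J n c = Ncard k J n (c - 1) +
      (if c * (J + 1) ≤ n then Ncard k (J + 1) (n - c * (J + 1)) (k - c - 1) else 0) := by
  rw [Ncard_split k J n c hc1]
  congr 1
  split_ifs with h
  · exact Ncard_exact k J n c hc1 hck h
  · exact Ncard_exact_empty k J n c hc1 h

lemma gordon_key (k : ℕ) (hk : 2 ≤ k) :
    ∀ n t J i, n ≤ J + t → 1 ≤ i → i ≤ k →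
      PowerSeries.coeff n (GordonCf k J i) = (Ncard k J n (k - i) : ℚ) := by
  intro n
  induction n using Nat.strong_induction_on with
  | _ n ihn =>
  intro t
  induction t with
  | zero =>
      intro J i hJ hi1 hik
      rw [gordon_tail k J i n (by omega) (by omega), Ncard_tail k J n (k - i) (by omega)]
      split_ifs <;> simp
  | succ t iht =>
      intro J i hJ hi1 hik
      have inner : ∀ s i', 1 ≤ i' → i' + s = k →
          PowerSeries.coeff n (GordonCf k J i') = (Ncard k J n (k - i') : ℚ) := by
        intro s
        induction s with
        | zero =>
            intro i' hi' his
            have hik' : i' = k := by omega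
            rw [hik', show k - k = 0 by omega, Ncard_shelf k J n hk, gordon_shelf k J (by omega)]
            exact iht (J + 1) 1 (by omega) (by omega) (by omega)
        | succ s ihs =>
            intro i' hi' his
            have hik' : i' < k := by omega
            rw [gordon_step_coeff k J i' n hi' hik']
            rw [ihs (i' + 1) (by omega) (by omega)]
            by_cases hcn : (k - i') * (J + 1) ≤ n
            · have hpos : 1 ≤ (k - i') * (J + 1) :=
                Nat.one_le_iff_ne_zero.mpr (Nat.mul_ne_zero (by omega) (by omega))
              have hlt : n - (k - i') * (J + 1) < n := by omega
              rw [if_pos hcn]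
              rw [ihn (n - (k - i') * (J + 1)) hlt (n - (k - i') * (J + 1)) (J + 1)
                (k - i' + 1) (by omega) (by omega) (by omega)]
              rw [Ncard_step k J n (k - i') (by omega) (by omega), if_pos hcn]
              rw [show k - (i' + 1) = k - i' - 1 by omega,
                show k - (k - i' + 1) = k - (k - i') - 1 by omega]
              push_cast
              ring
            · rw [if_neg hcn, Ncard_step k J n (k - i') (by omega) (by omega), if_neg hcn]
              rw [show k - (i' + 1) = k - i' - 1 by omega]
              push_cast
              ring
      exact inner (k - i) i hi1 (by omega)

/-- The shelf-`J` series `G_{(k-1)J+i}(q)` for Gordon's identities is the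
generating function for partitions with difference at least `2` at distance
`k-1`, smallest part greater than `J`, and part `J+1` appearing at most `k-i`
times. -/
theorem gordon_shelf_combinatorics (k J i : ℕ) (hk : 2 ≤ k) (hi1 : 1 ≤ i) (hik : i ≤ k) :
    ∀ n : ℕ, PowerSeries.coeff n (GordonCf k J i) =
      (Nat.card {b : List ℕ // b.Pairwise (· ≥ ·) ∧ (∀ x ∈ b, 0 < x) ∧ b.sum = n ∧
        (∀ p, p + (k - 1) < b.length →
          b.getD (p + (k - 1)) 0 + 2 ≤ b.getD p 0) ∧
        (∀ x ∈ b, J < x) ∧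
        b.count (J + 1) ≤ k - i} : ℚ) := by
  intro n
  exact gordon_key k hk n n J i (by omega) hi1 hik
end
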